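/- arXiv:2112.06625 — 9 statements merged into one kernel-verified Lean document; each statement's English description precedes it below -/
import Mathlib

section
/- Bias bound for the multiple-importance-sampling estimator (tighter general form, 0 < ω < 1): under the smoothly-changing assumptions, the absolute difference between J = Σ_{s=T+1}^{T+β} γ^{s-T-1} ∫_Θ ν_s(θ) f(θ,s) dμ(θ) and Ĵ = Σ_{s=T+1}^{T+β} γ^{s-T-1} ∫_Θ ν_s(θ) · [ Σ_{t=T-α+1}^{T} ω^{T-t} ν_t(θ) f(θ,t) ] / [ Σ_{k=T-α+1}^{T} ω^{T-k} ν_k(θ) ] dμ(θ) satisfies |J − Ĵ| ≤ (L_M + 2 R_max L_ν) · ((1−γ^β)/(1−γ)) · ( ω (1 − α ω^{α−1} + (α−1) ω^{α}) / ((1−ω)(1−ω^{α})) + 1/(1−γ) ). -/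
open MeasureTheory Finset

lemma aux_sum_jpow (x : ℝ) (m : ℕ) :
    (1 - x)^2 * ∑ j ∈ Finset.range (m+1), (j:ℝ) * x^j
      = x * (1 - ((m:ℝ)+1) * x^m + (m:ℝ) * x^(m+1)) := by
  induction m with
  | zero => simp
  | succ n ih =>
    rw [Finset.sum_range_succ, mul_add, ih]
    push_cast
    ring

lemma aux_geom_weighted (γ : ℝ) (β : ℕ) :
    (1 - γ) * ∑ i ∈ Finset.range β, ((i:ℝ)+1) * γ^i
      = (∑ i ∈ Finset.range β, γ^i) - (β:ℝ) * γ^β := by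
  induction β with
  | zero => simp
  | succ n ih =>
    rw [Finset.sum_range_succ, mul_add, ih, Finset.sum_range_succ]
    push_cast
    ring

lemma aux_abs_int {Θ : Type*} [MeasurableSpace Θ] (μ : Measure Θ) (g : Θ → ℝ) :
    |∫ x, g x ∂μ| ≤ ∫ x, |g x| ∂μ := by
  simpa [Real.norm_eq_abs] using norm_integral_le_integral_norm (μ := μ) g

set_option maxHeartbeats 2000000 in
/-- Bias bound for the multiple-importance-sampling estimator
(tighter general form, 0 < ω < 1). -/
theorem bias_bound_general
    {Θ : Type*} [MeasurableSpace Θ] (μ : Measure Θ)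
    (T : ℤ) (α β : ℕ) (hα : 0 < α) (hβ : 0 < β) (hT : (α : ℤ) ≤ T)
    (ν : ℤ → Θ → ℝ)
    (hνmeas : ∀ t, Measurable (ν t))
    (hνpos : ∀ t θ, 0 < ν t θ)
    (hνint : ∀ t, ∫ θ, ν t θ ∂μ = 1)
    (f : Θ → ℤ → ℝ)
    (hfmeas : Measurable (Function.uncurry f))
    (Rmax : ℝ) (hfbound : ∀ θ t, |f θ t| ≤ Rmax)
    (LM : ℝ) (hLM : 0 ≤ LM)
    (hEnv : ∀ θ t t', |f θ t - f θ t'| ≤ LM * |(t : ℝ) - (t' : ℝ)|)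
    (Lν : ℝ) (hLν : 0 ≤ Lν)
    (hPol : ∀ t t', ∫ θ, |ν t θ - ν t' θ| ∂μ ≤ Lν * |(t : ℝ) - (t' : ℝ)|)
    (γ ω : ℝ) (hγ : γ ∈ Set.Ico (0 : ℝ) 1) (hω : ω ∈ Set.Ioo (0 : ℝ) 1) :
    |(∑ i ∈ Finset.range β, γ ^ i * ∫ θ, ν (T + 1 + i) θ * f θ (T + 1 + i) ∂μ)
      - ∑ i ∈ Finset.range β, γ ^ i * ∫ θ, ν (T + 1 + i) θ *
          ((∑ j ∈ Finset.range α, ω ^ j * ν (T - j) θ * f θ (T - j)) /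
            ∑ k ∈ Finset.range α, ω ^ k * ν (T - k) θ) ∂μ|
      ≤ (LM + 2 * Rmax * Lν) * ((1 - γ ^ β) / (1 - γ))
          * (ω * (1 - (α : ℝ) * ω ^ (α - 1) + ((α : ℝ) - 1) * ω ^ α)
              / ((1 - ω) * (1 - ω ^ α)) + 1 / (1 - γ)) := by
  obtain ⟨hγ0, hγ1⟩ := hγ
  obtain ⟨hω0, hω1⟩ := hω
  have h1γ : 0 < 1 - γ := by linarith
  have h1ω : 0 < 1 - ω := by linarith
  have hωα : ω ^ α < 1 := pow_lt_one₀ hω0.le hω1 hα.ne'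
  have h1ωα : 0 < 1 - ω ^ α := by linarith
  have hne : Nonempty Θ := by
    by_contra hne
    rw [not_nonempty_iff] at hne
    have h0 := hνint 0
    rw [integral_of_isEmpty] at h0
    norm_num at h0
  have hR : 0 ≤ Rmax := le_trans (abs_nonneg _) (hfbound (Classical.arbitrary Θ) 0)
  set D : ℝ := LM + 2 * Rmax * Lν with hD
  have hD0 : 0 ≤ D := by positivity
  set c : ℝ := (1 - ω) / (1 - ω ^ α) with hc
  have hc0 : 0 < c := div_pos h1ω h1ωα
  have hgeom : (∑ j ∈ Finset.range α, ω ^ j) = (1 - ω ^ α) / (1 - ω) := by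
    rw [geom_sum_eq hω1.ne, div_eq_div_iff (by linarith) h1ω.ne']
    ring
  have hcsum : (∑ j ∈ Finset.range α, ω ^ j) * c = 1 := by
    rw [hgeom, hc, div_mul_div_comm, div_eq_one_iff_eq (by positivity)]
    ring
  set A : ℝ := ω * (1 - (α : ℝ) * ω ^ (α - 1) + ((α : ℝ) - 1) * ω ^ α)
      / ((1 - ω) * (1 - ω ^ α)) with hA
  have hAval : (∑ j ∈ Finset.range α, (j : ℝ) * ω ^ j) * c = A := by
    obtain ⟨m, rfl⟩ : ∃ m, α = m + 1 := ⟨α - 1, (Nat.succ_pred_eq_of_pos hα).symm⟩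
    have h := aux_sum_jpow ω m
    have h5 : (∑ j ∈ Finset.range (m+1), (j:ℝ) * ω ^ j)
        = ω * (1 - ((m:ℝ)+1) * ω ^ m + (m:ℝ) * ω ^ (m+1)) / (1 - ω)^2 := by
      field_simp
      linarith [h]
    rw [h5, hA, hc]
    have hms : (m + 1) - 1 = m := rfl
    rw [hms]
    push_cast
    field_simp
    ring
  have hA0 : 0 ≤ A := by
    rw [← hAval]
    apply mul_nonneg _ hc0.le
    exact Finset.sum_nonneg fun j _ => by positivity
  have mf : ∀ t : ℤ, Measurable fun θ => f θ t := fun t =>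
    hfmeas.comp (measurable_id.prodMk measurable_const)
  have Iν : ∀ t, Integrable (ν t) μ := by
    intro t
    by_contra h
    have h0 := hνint t
    rw [integral_undef h] at h0
    norm_num at h0
  have Iνf : ∀ t t', Integrable (fun θ => ν t θ * f θ t') μ := by
    intro t t'
    refine ((Iν t).mul_const Rmax).mono'
      (((hνmeas t).mul (mf t')).aestronglyMeasurable)
      (Filter.Eventually.of_forall fun θ => ?_)
    rw [Real.norm_eq_abs, abs_mul, abs_of_nonneg (hνpos t θ).le]
    exact mul_le_mul_of_nonneg_left (hfbound θ t') (hνpos t θ).le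
  have Idiff : ∀ t t', Integrable (fun θ => |ν t θ - ν t' θ|) μ :=
    fun t t' => ((Iν t).sub (Iν t')).abs
  set S : Θ → ℝ := fun θ => ∑ k ∈ Finset.range α, ω ^ k * ν (T - k) θ with hSdef
  set Num : Θ → ℝ := fun θ => ∑ j ∈ Finset.range α, ω ^ j * ν (T - j) θ * f θ (T - j)
    with hNumdef
  have hSpos : ∀ θ, 0 < S θ := by
    intro θ
    apply Finset.sum_pos (fun k _ => mul_pos (pow_pos hω0 k) (hνpos _ θ))
    exact nonempty_range_iff.mpr hα.ne'
  set Φ : Θ → ℝ := fun θ => Num θ / S θ with hΦdef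
  have hΦabs : ∀ θ, |Φ θ| ≤ Rmax := by
    intro θ
    rw [hΦdef]
    simp only
    rw [abs_div, abs_of_pos (hSpos θ), div_le_iff₀ (hSpos θ)]
    calc |Num θ| ≤ ∑ j ∈ Finset.range α, |ω ^ j * ν (T - j) θ * f θ (T - j)| :=
          Finset.abs_sum_le_sum_abs _ _
      _ ≤ ∑ j ∈ Finset.range α, Rmax * (ω ^ j * ν (T - j) θ) := by
          apply Finset.sum_le_sum
          intro j _
          have hpos : (0:ℝ) ≤ ω ^ j * ν (T - j) θ :=
            (mul_pos (pow_pos hω0 j) (hνpos _ θ)).le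
          rw [abs_mul, abs_of_nonneg hpos]
          calc ω ^ j * ν (T - j) θ * |f θ (T - j)| ≤ ω ^ j * ν (T - j) θ * Rmax :=
                mul_le_mul_of_nonneg_left (hfbound _ _) hpos
            _ = Rmax * (ω ^ j * ν (T - j) θ) := by ring
      _ = Rmax * S θ := by rw [hSdef, ← Finset.mul_sum]
  have mΦ : Measurable Φ := by
    apply Measurable.div
    · exact Finset.measurable_sum _ fun j _ =>
        ((measurable_const.mul (hνmeas _)).mul (mf _))
    · exact Finset.measurable_sum _ fun k _ => measurable_const.mul (hνmeas _)
  have IνΦ : ∀ t, Integrable (fun θ => ν t θ * Φ θ) μ := by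
    intro t
    refine ((Iν t).mul_const Rmax).mono'
      (((hνmeas t).mul mΦ).aestronglyMeasurable)
      (Filter.Eventually.of_forall fun θ => ?_)
    rw [Real.norm_eq_abs, abs_mul, abs_of_nonneg (hνpos t θ).le]
    exact mul_le_mul_of_nonneg_left (hΦabs θ) (hνpos t θ).le
  have INum : Integrable Num μ := by
    rw [hNumdef]
    apply integrable_finset_sum
    intro j _
    simpa [mul_assoc] using ((Iνf (T - j) (T - j)).const_mul (ω ^ j))
  have hNum_int : ∫ θ, Num θ ∂μ
      = ∑ j ∈ Finset.range α, ω ^ j * ∫ θ, ν (T - j) θ * f θ (T - j) ∂μ := by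
    rw [hNumdef]
    rw [integral_finset_sum _ (fun j _ =>
      by simpa [mul_assoc] using ((Iνf (T - j) (T - j)).const_mul (ω ^ j)))]
    exact Finset.sum_congr rfl fun j _ => by
      simp_rw [mul_assoc]
      exact integral_const_mul _ _
  -- key per-index bound
  have key : ∀ i : ℕ,
      |(∫ θ, ν (T + 1 + i) θ * f θ (T + 1 + i) ∂μ) - ∫ θ, ν (T + 1 + i) θ * Φ θ ∂μ|
        ≤ D * (((i:ℝ) + 1) + A) := by
    intro i
    set s : ℤ := T + 1 + i with hs
    have hd : ∀ j : ℕ, |((s:ℤ):ℝ) - ((T - (j:ℤ) : ℤ):ℝ)| = (i:ℝ) + 1 + (j:ℝ) := by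
      intro j
      rw [hs]
      push_cast
      rw [show ((T:ℝ) + 1 + i) - ((T:ℝ) - j) = (i:ℝ) + 1 + j by ring]
      exact abs_of_nonneg (by positivity)
    have hPol' : ∀ j : ℕ, ∫ θ, |ν (T - j) θ - ν s θ| ∂μ ≤ Lν * ((i:ℝ) + 1 + j) := by
      intro j
      have h := hPol (T - j) s
      rw [abs_sub_comm, hd j] at h
      exact h
    set X : ℝ := ∫ θ, ν s θ * f θ s ∂μ with hX
    set Z : ℕ → ℝ := fun j => ∫ θ, ν (T - j) θ * f θ (T - j) ∂μ with hZ
    set Y : ℝ := ∫ θ, ν s θ * Φ θ ∂μ with hY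
    have hXZ : ∀ j : ℕ, |X - Z j| ≤ (LM + Rmax * Lν) * ((i:ℝ) + 1 + j) := by
      intro j
      rw [hX, hZ]
      simp only
      rw [← integral_sub (Iνf s s) (Iνf (T - j) (T - j))]
      refine le_trans (aux_abs_int μ _) ?_
      have hint : Integrable
          (fun θ => LM * ((i:ℝ) + 1 + j) * ν s θ + Rmax * |ν (T - j) θ - ν s θ|) μ :=
        ((Iν s).const_mul _).add ((Idiff (T - j) s).const_mul Rmax)
      refine le_trans (integral_mono_of_nonneg
        (Filter.Eventually.of_forall fun θ => abs_nonneg _) hint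
        (Filter.Eventually.of_forall fun θ => ?_)) ?_
      · show |ν s θ * f θ s - ν (T - j) θ * f θ (T - j)|
            ≤ LM * ((i:ℝ) + 1 + j) * ν s θ + Rmax * |ν (T - j) θ - ν s θ|
        have h1 : ν s θ * f θ s - ν (T - j) θ * f θ (T - j)
            = ν s θ * (f θ s - f θ (T - j)) + (ν s θ - ν (T - j) θ) * f θ (T - j) := by
          ring
        rw [h1]
        refine le_trans (abs_add_le _ _) (add_le_add ?_ ?_)
        · rw [abs_mul, abs_of_nonneg (hνpos s θ).le]
          calc ν s θ * |f θ s - f θ (T - j)|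
              ≤ ν s θ * (LM * ((i:ℝ) + 1 + j)) := by
                have h2 := hEnv θ s (T - j)
                rw [hd j] at h2
                exact mul_le_mul_of_nonneg_left h2 (hνpos s θ).le
            _ = LM * ((i:ℝ) + 1 + j) * ν s θ := by ring
        · rw [abs_mul, abs_sub_comm]
          calc |ν (T - j) θ - ν s θ| * |f θ (T - j)|
              ≤ |ν (T - j) θ - ν s θ| * Rmax :=
                mul_le_mul_of_nonneg_left (hfbound θ _) (abs_nonneg _)
            _ = Rmax * |ν (T - j) θ - ν s θ| := by ring
      · rw [integral_add ((Iν s).const_mul _) ((Idiff (T - j) s).const_mul Rmax),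
          integral_const_mul, integral_const_mul, hνint s, mul_one]
        nlinarith [hPol' j]
    have hNumSΦ : ∀ θ, Num θ = S θ * Φ θ := fun θ => by
      rw [hΦdef]
      simp only
      rw [← mul_div_assoc, mul_div_cancel_left₀ _ (hSpos θ).ne']
    -- decomposition
    have e1 : ∑ j ∈ Finset.range α, ω ^ j * c * (X - Z j)
        = X - c * ∑ j ∈ Finset.range α, ω ^ j * Z j := by
      simp_rw [mul_sub]
      rw [Finset.sum_sub_distrib, ← Finset.sum_mul, ← Finset.sum_mul, hcsum, one_mul,
        Finset.mul_sum]
      congr 1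
      exact Finset.sum_congr rfl fun j _ => by ring
    have h2 : ∫ θ, (c * S θ - ν s θ) * Φ θ ∂μ = c * (∫ θ, Num θ ∂μ) - Y := by
      have hIcSΦ : Integrable (fun θ => c * (S θ * Φ θ)) μ := by
        simp_rw [← hNumSΦ]
        exact INum.const_mul c
      have h3 : (fun θ => (c * S θ - ν s θ) * Φ θ)
          = fun θ => c * (S θ * Φ θ) - ν s θ * Φ θ := by
        funext θ; ring
      rw [h3, integral_sub hIcSΦ (IνΦ s), hY]
      congr 1
      simp_rw [← hNumSΦ]
      exact integral_const_mul c Num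
    have hdecomp : X - Y
        = (∑ j ∈ Finset.range α, ω ^ j * c * (X - Z j))
          + ∫ θ, (c * S θ - ν s θ) * Φ θ ∂μ := by
      rw [e1, h2, hNum_int, hZ]
      ring
    -- bound the second part
    have hT2 : |∫ θ, (c * S θ - ν s θ) * Φ θ ∂μ|
        ≤ ∑ j ∈ Finset.range α, ω ^ j * c * (Rmax * (Lν * ((i:ℝ) + 1 + j))) := by
      refine le_trans (aux_abs_int μ _) ?_
      have hint : Integrable
          (fun θ => ∑ j ∈ Finset.range α, ω ^ j * c * (Rmax * |ν (T - j) θ - ν s θ|)) μ :=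
        integrable_finset_sum _ fun j _ => ((Idiff (T - j) s).const_mul Rmax).const_mul _
      refine le_trans (integral_mono_of_nonneg
        (Filter.Eventually.of_forall fun θ => abs_nonneg _) hint
        (Filter.Eventually.of_forall fun θ => ?_)) ?_
      · show |(c * S θ - ν s θ) * Φ θ|
            ≤ ∑ j ∈ Finset.range α, ω ^ j * c * (Rmax * |ν (T - j) θ - ν s θ|)
        have h3 : c * S θ = ∑ j ∈ Finset.range α, ω ^ j * c * ν (T - j) θ := by
          rw [hSdef]
          simp only
          rw [Finset.mul_sum]
          exact Finset.sum_congr rfl fun j _ => by ring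
        have h4 : (∑ j ∈ Finset.range α, ω ^ j * c * ν s θ) = ν s θ := by
          rw [← Finset.sum_mul, ← Finset.sum_mul, hcsum, one_mul]
        have h5 : c * S θ - ν s θ
            = ∑ j ∈ Finset.range α, ω ^ j * c * (ν (T - j) θ - ν s θ) :=
          calc c * S θ - ν s θ
              = (∑ j ∈ Finset.range α, ω ^ j * c * ν (T - j) θ)
                - ∑ j ∈ Finset.range α, ω ^ j * c * ν s θ := by rw [h3, h4]
            _ = ∑ j ∈ Finset.range α,
                  (ω ^ j * c * ν (T - j) θ - ω ^ j * c * ν s θ) :=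
                (Finset.sum_sub_distrib ..).symm
            _ = ∑ j ∈ Finset.range α, ω ^ j * c * (ν (T - j) θ - ν s θ) :=
                Finset.sum_congr rfl fun j _ => by ring
        have h6 : |c * S θ - ν s θ|
            ≤ ∑ j ∈ Finset.range α, ω ^ j * c * |ν (T - j) θ - ν s θ| := by
          rw [h5]
          refine le_trans (Finset.abs_sum_le_sum_abs _ _)
            (Finset.sum_le_sum fun j _ => ?_)
          rw [abs_mul, abs_of_nonneg (by positivity : (0:ℝ) ≤ ω ^ j * c)]
        calc |(c * S θ - ν s θ) * Φ θ| = |c * S θ - ν s θ| * |Φ θ| := abs_mul _ _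
          _ ≤ (∑ j ∈ Finset.range α, ω ^ j * c * |ν (T - j) θ - ν s θ|) * Rmax :=
              mul_le_mul h6 (hΦabs θ) (abs_nonneg _)
                (Finset.sum_nonneg fun j _ => by positivity)
          _ = ∑ j ∈ Finset.range α, ω ^ j * c * (Rmax * |ν (T - j) θ - ν s θ|) := by
              rw [Finset.sum_mul]
              exact Finset.sum_congr rfl fun j _ => by ring
      · rw [integral_finset_sum (Finset.range α)
          (fun j _ => ((Idiff (T - j) s).const_mul Rmax).const_mul (ω ^ j * c))]
        refine Finset.sum_le_sum fun j _ => ?_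
        rw [integral_const_mul, integral_const_mul]
        have hnn : (0:ℝ) ≤ ω ^ j * c := by positivity
        have := hPol' j
        nlinarith [hPol' j, mul_le_mul_of_nonneg_left (hPol' j) hR]
    -- bound the first part
    have hT1 : |∑ j ∈ Finset.range α, ω ^ j * c * (X - Z j)|
        ≤ ∑ j ∈ Finset.range α, ω ^ j * c * ((LM + Rmax * Lν) * ((i:ℝ) + 1 + j)) := by
      refine le_trans (Finset.abs_sum_le_sum_abs _ _)
        (Finset.sum_le_sum fun j _ => ?_)
      rw [abs_mul, abs_of_nonneg (by positivity : (0:ℝ) ≤ ω ^ j * c)]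
      exact mul_le_mul_of_nonneg_left (hXZ j) (by positivity)
    have hfin : ∑ j ∈ Finset.range α, ω ^ j * c * (D * (((i:ℝ) + 1) + (j:ℝ)))
        = D * (((i:ℝ) + 1) + A) := by
      have h7 : ∑ j ∈ Finset.range α, ω ^ j * c * (D * (((i:ℝ) + 1) + (j:ℝ)))
          = D * ((i:ℝ) + 1) * ((∑ j ∈ Finset.range α, ω ^ j) * c)
            + D * ((∑ j ∈ Finset.range α, (j:ℝ) * ω ^ j) * c) := by
        rw [Finset.sum_mul, Finset.mul_sum, Finset.sum_mul, Finset.mul_sum,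
          ← Finset.sum_add_distrib]
        exact Finset.sum_congr rfl fun j _ => by ring
      rw [h7, hcsum, hAval]
      ring
    calc |X - Y|
        ≤ |∑ j ∈ Finset.range α, ω ^ j * c * (X - Z j)|
            + |∫ θ, (c * S θ - ν s θ) * Φ θ ∂μ| := by
          rw [hdecomp]; exact abs_add_le _ _
      _ ≤ (∑ j ∈ Finset.range α, ω ^ j * c * ((LM + Rmax * Lν) * ((i:ℝ) + 1 + j)))
            + ∑ j ∈ Finset.range α, ω ^ j * c * (Rmax * (Lν * ((i:ℝ) + 1 + j))) :=
          add_le_add hT1 hT2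
      _ = ∑ j ∈ Finset.range α, ω ^ j * c * (D * (((i:ℝ) + 1) + (j:ℝ))) := by
          rw [← Finset.sum_add_distrib]
          exact Finset.sum_congr rfl fun j _ => by rw [hD]; ring
      _ = D * (((i:ℝ) + 1) + A) := hfin
  -- assemble
  simp only [hΦdef, hNumdef, hSdef] at key
  have hGval : ∑ i ∈ Finset.range β, γ ^ i = (1 - γ ^ β) / (1 - γ) := by
    rw [geom_sum_eq hγ1.ne, div_eq_div_iff (by linarith) h1γ.ne']
    ring
  have hF : ∑ i ∈ Finset.range β, ((i:ℝ) + 1) * γ ^ i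
      ≤ (∑ i ∈ Finset.range β, γ ^ i) / (1 - γ) := by
    rw [le_div_iff₀ h1γ, mul_comm]
    have h8 : (0:ℝ) ≤ (β:ℝ) * γ ^ β := by positivity
    linarith [aux_geom_weighted γ β]
  calc |(∑ i ∈ Finset.range β, γ ^ i * ∫ θ, ν (T + 1 + i) θ * f θ (T + 1 + i) ∂μ)
      - ∑ i ∈ Finset.range β, γ ^ i * ∫ θ, ν (T + 1 + i) θ *
          ((∑ j ∈ Finset.range α, ω ^ j * ν (T - j) θ * f θ (T - j)) /
            ∑ k ∈ Finset.range α, ω ^ k * ν (T - k) θ) ∂μ|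
      = |∑ i ∈ Finset.range β, γ ^ i * ((∫ θ, ν (T + 1 + i) θ * f θ (T + 1 + i) ∂μ)
          - ∫ θ, ν (T + 1 + i) θ *
            ((∑ j ∈ Finset.range α, ω ^ j * ν (T - j) θ * f θ (T - j)) /
              ∑ k ∈ Finset.range α, ω ^ k * ν (T - k) θ) ∂μ)| := by
        rw [← Finset.sum_sub_distrib]
        congr 1
        exact Finset.sum_congr rfl fun i _ => (mul_sub _ _ _).symm
    _ ≤ ∑ i ∈ Finset.range β, γ ^ i * |(∫ θ, ν (T + 1 + i) θ * f θ (T + 1 + i) ∂μ)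
          - ∫ θ, ν (T + 1 + i) θ *
            ((∑ j ∈ Finset.range α, ω ^ j * ν (T - j) θ * f θ (T - j)) /
              ∑ k ∈ Finset.range α, ω ^ k * ν (T - k) θ) ∂μ| := by
        refine le_trans (Finset.abs_sum_le_sum_abs _ _) (le_of_eq ?_)
        exact Finset.sum_congr rfl fun i _ => by
          rw [abs_mul, abs_of_nonneg (pow_nonneg hγ0 i)]
    _ ≤ ∑ i ∈ Finset.range β, γ ^ i * (D * (((i:ℝ) + 1) + A)) :=
        Finset.sum_le_sum fun i _ =>
          mul_le_mul_of_nonneg_left (key i) (pow_nonneg hγ0 i)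
    _ = D * ((∑ i ∈ Finset.range β, ((i:ℝ) + 1) * γ ^ i)
          + A * ∑ i ∈ Finset.range β, γ ^ i) :=
        calc ∑ i ∈ Finset.range β, γ ^ i * (D * (((i:ℝ) + 1) + A))
            = ∑ i ∈ Finset.range β,
                (D * (((i:ℝ) + 1) * γ ^ i) + D * (A * γ ^ i)) :=
              Finset.sum_congr rfl fun i _ => by ring
          _ = (∑ i ∈ Finset.range β, D * (((i:ℝ) + 1) * γ ^ i))
                + ∑ i ∈ Finset.range β, D * (A * γ ^ i) := Finset.sum_add_distrib
          _ = D * ((∑ i ∈ Finset.range β, ((i:ℝ) + 1) * γ ^ i)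
                + A * ∑ i ∈ Finset.range β, γ ^ i) := by
              rw [← Finset.mul_sum, ← Finset.mul_sum, ← Finset.mul_sum, ← mul_add]
    _ ≤ D * ((∑ i ∈ Finset.range β, γ ^ i) / (1 - γ)
          + A * ∑ i ∈ Finset.range β, γ ^ i) := by
        apply mul_le_mul_of_nonneg_left _ hD0
        linarith [hF]
    _ = D * ((1 - γ ^ β) / (1 - γ)) * (A + 1 / (1 - γ)) := by
        rw [hGval]
        ring
end

section
/- Bias bound for the multiple-importance-sampling estimator with uniform weighting (ω = 1): under the smoothly-changing assumptions, the absolute difference between J = Σ_{s=T+1}^{T+β} γ^{s-T-1} ∫_Θ ν_s(θ) f(θ,s) dμ(θ) and Ĵ = Σ_{s=T+1}^{T+β} γ^{s-T-1} ∫_Θ ν_s(θ) · [ Σ_{t=T-α+1}^{T} ν_t(θ) f(θ,t) ] / [ Σ_{k=T-α+1}^{T} ν_k(θ) ] dμ(θ) satisfies |J − Ĵ| ≤ (L_M + 2 R_max L_ν) · ((1−γ^β)/(1−γ)) · ( (α−1)/2 + 1/(1−γ) ). -/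
open MeasureTheory Finset

lemma sum_range_cast_real (n : ℕ) :
    ∑ j ∈ Finset.range n, (j : ℝ) = n * (n - 1) / 2 := by
  induction n with
  | zero => simp
  | succ n ih => rw [Finset.sum_range_succ, ih]; push_cast; ring

lemma deriv_geom_sum_eq (γ : ℝ) (hγ : γ ≠ 1) (β : ℕ) :
    ∑ i ∈ Finset.range β, ((i : ℝ) + 1) * γ ^ i
      = (1 - γ ^ β) / (1 - γ) ^ 2 - β * γ ^ β / (1 - γ) := by
  have h : (1 : ℝ) - γ ≠ 0 := sub_ne_zero.mpr (Ne.symm hγ)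
  induction β with
  | zero => simp
  | succ n ih =>
      rw [Finset.sum_range_succ, ih]
      field_simp
      push_cast
      ring

/-- Bias bound for the multiple-importance-sampling estimator with
uniform weighting (ω = 1). -/
theorem bias_bound_uniform
    {Θ : Type*} [MeasurableSpace Θ] (μ : Measure Θ)
    (T : ℤ) (α β : ℕ) (hα : 0 < α) (hβ : 0 < β) (hT : (α : ℤ) ≤ T)
    (ν : ℤ → Θ → ℝ)
    (hνmeas : ∀ t, Measurable (ν t))
    (hνpos : ∀ t θ, 0 < ν t θ)
    (hνint : ∀ t, ∫ θ, ν t θ ∂μ = 1)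
    (f : Θ → ℤ → ℝ)
    (hfmeas : Measurable (Function.uncurry f))
    (Rmax : ℝ) (hfbound : ∀ θ t, |f θ t| ≤ Rmax)
    (LM : ℝ) (hLM : 0 ≤ LM)
    (hEnv : ∀ θ t t', |f θ t - f θ t'| ≤ LM * |(t : ℝ) - (t' : ℝ)|)
    (Lν : ℝ) (hLν : 0 ≤ Lν)
    (hPol : ∀ t t', ∫ θ, |ν t θ - ν t' θ| ∂μ ≤ Lν * |(t : ℝ) - (t' : ℝ)|)
    (γ : ℝ) (hγ : γ ∈ Set.Ico (0 : ℝ) 1) :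
    |(∑ i ∈ Finset.range β, γ ^ i * ∫ θ, ν (T + 1 + i) θ * f θ (T + 1 + i) ∂μ)
      - ∑ i ∈ Finset.range β, γ ^ i * ∫ θ, ν (T + 1 + i) θ *
          ((∑ j ∈ Finset.range α, ν (T - j) θ * f θ (T - j)) /
            ∑ k ∈ Finset.range α, ν (T - k) θ) ∂μ|
      ≤ (LM + 2 * Rmax * Lν) * ((1 - γ ^ β) / (1 - γ))
          * (((α : ℝ) - 1) / 2 + 1 / (1 - γ)) := by
  obtain ⟨hγ0, hγ1⟩ := hγ
  have h1γ : 0 < 1 - γ := by linarith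
  have hγne : γ ≠ 1 := ne_of_lt hγ1
  have hne2 : (1 : ℝ) - γ ≠ 0 := ne_of_gt h1γ
  -- Θ is nonempty (otherwise the densities could not integrate to 1)
  have hne : Nonempty Θ := by
    by_contra h
    rw [not_nonempty_iff] at h
    have h0 := hνint 0
    rw [integral_of_isEmpty] at h0
    exact one_ne_zero h0.symm
  have hR : 0 ≤ Rmax := le_trans (abs_nonneg _) (hfbound (Classical.arbitrary Θ) 0)
  have hfm : ∀ t : ℤ, Measurable fun θ => f θ t := fun t =>
    hfmeas.comp (measurable_id.prodMk measurable_const)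
  have hνInt : ∀ t, Integrable (ν t) μ := fun t => integrable_of_integral_eq_one (hνint t)
  -- generic integrability of ν t * g for bounded measurable g
  have hIntb : ∀ (t : ℤ) (g : Θ → ℝ) (C : ℝ), Measurable g → (∀ θ, |g θ| ≤ C) →
      Integrable (fun θ => ν t θ * g θ) μ := by
    intro t g C hg hb
    have h := (hνInt t).bdd_mul hg.aestronglyMeasurable (c := C) (ae_of_all _ fun x => by simpa using hb x)
    exact h.congr (ae_of_all _ fun x => mul_comm _ _)
  set S : Θ → ℝ := fun θ => ∑ k ∈ Finset.range α, ν (T - k) θ with hSdef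
  have hSpos : ∀ θ, 0 < S θ := fun θ =>
    Finset.sum_pos (fun k _ => hνpos _ θ) (by simp [Finset.nonempty_range_iff, hα.ne'])
  set Φ : Θ → ℝ := fun θ =>
    (∑ j ∈ Finset.range α, ν (T - j) θ * f θ (T - j)) / S θ with hΦdef
  have hΦm : Measurable Φ :=
    (Finset.measurable_sum _ fun j _ => (hνmeas _).mul (hfm _)).div
      (Finset.measurable_sum _ fun k _ => hνmeas _)
  have hΦb : ∀ θ, |Φ θ| ≤ Rmax := by
    intro θ
    rw [hΦdef]
    simp only
    rw [abs_div, abs_of_pos (hSpos θ), div_le_iff₀ (hSpos θ)]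
    calc |∑ j ∈ Finset.range α, ν (T - j) θ * f θ (T - j)|
        ≤ ∑ j ∈ Finset.range α, |ν (T - j) θ * f θ (T - j)| :=
          Finset.abs_sum_le_sum_abs _ _
      _ ≤ ∑ j ∈ Finset.range α, ν (T - j) θ * Rmax := by
          refine Finset.sum_le_sum fun j _ => ?_
          rw [abs_mul, abs_of_pos (hνpos _ θ)]
          exact mul_le_mul_of_nonneg_left (hfbound θ _) (hνpos _ θ).le
      _ = Rmax * S θ := by rw [hSdef]; simp only; rw [← Finset.sum_mul]; ring
  -- difference-of-densities bound
  have key : ∀ (g : Θ → ℝ), Measurable g → (∀ θ, |g θ| ≤ Rmax) → ∀ t t' : ℤ,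
      |∫ θ, (ν t θ - ν t' θ) * g θ ∂μ| ≤ Rmax * Lν * |(t : ℝ) - (t' : ℝ)| := by
    intro g hg hb t t'
    have hi : Integrable (fun θ => (ν t θ - ν t' θ) * g θ) μ := by
      have h := ((hνInt t).sub (hνInt t')).bdd_mul hg.aestronglyMeasurable
        (c := Rmax) (ae_of_all _ fun x => by simpa using hb x)
      exact h.congr (ae_of_all _ fun x => mul_comm _ _)
    calc |∫ θ, (ν t θ - ν t' θ) * g θ ∂μ|
        ≤ ∫ θ, |(ν t θ - ν t' θ) * g θ| ∂μ := by
          simpa only [Real.norm_eq_abs] using norm_integral_le_integral_norm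
            (fun θ => (ν t θ - ν t' θ) * g θ) (μ := μ)
      _ ≤ ∫ θ, |ν t θ - ν t' θ| * Rmax ∂μ := by
          refine integral_mono hi.abs (((hνInt t).sub (hνInt t')).abs.mul_const Rmax)
            fun θ => ?_
          rw [abs_mul]
          exact mul_le_mul_of_nonneg_left (hb θ) (abs_nonneg _)
      _ = (∫ θ, |ν t θ - ν t' θ| ∂μ) * Rmax := integral_mul_const _ _
      _ ≤ (Lν * |(t : ℝ) - (t' : ℝ)|) * Rmax :=
          mul_le_mul_of_nonneg_right (hPol t t') hR
      _ = Rmax * Lν * |(t : ℝ) - (t' : ℝ)| := by ring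
  -- Lipschitz property of t ↦ ∫ ν t f t
  have hL1 : ∀ t t' : ℤ, |(∫ θ, ν t θ * f θ t ∂μ) - ∫ θ, ν t' θ * f θ t' ∂μ|
      ≤ (LM + Rmax * Lν) * |(t : ℝ) - (t' : ℝ)| := by
    intro t t'
    have i1 : Integrable (fun θ => ν t θ * (f θ t - f θ t')) μ :=
      hIntb t _ (2 * Rmax) ((hfm t).sub (hfm t'))
        (fun θ => (abs_sub _ _).trans (by linarith [hfbound θ t, hfbound θ t']))
    have i2 : Integrable (fun θ => (ν t θ - ν t' θ) * f θ t') μ := by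
      have h := ((hνInt t).sub (hνInt t')).bdd_mul (hfm t').aestronglyMeasurable
        (c := Rmax) (ae_of_all _ fun x => by simpa using hfbound x t')
      exact h.congr (ae_of_all _ fun x => mul_comm _ _)
    have hsplit : (∫ θ, ν t θ * f θ t ∂μ) - ∫ θ, ν t' θ * f θ t' ∂μ
        = (∫ θ, ν t θ * (f θ t - f θ t') ∂μ) + ∫ θ, (ν t θ - ν t' θ) * f θ t' ∂μ := by
      rw [← integral_add i1 i2,
        ← integral_sub (hIntb t _ Rmax (hfm t) fun θ => hfbound θ t)
          (hIntb t' _ Rmax (hfm t') fun θ => hfbound θ t')]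
      congr 1
      funext θ
      ring
    have b1 : |∫ θ, ν t θ * (f θ t - f θ t') ∂μ| ≤ LM * |(t : ℝ) - (t' : ℝ)| := by
      calc |∫ θ, ν t θ * (f θ t - f θ t') ∂μ|
          ≤ ∫ θ, |ν t θ * (f θ t - f θ t')| ∂μ := by
            simpa only [Real.norm_eq_abs] using norm_integral_le_integral_norm
              (fun θ => ν t θ * (f θ t - f θ t')) (μ := μ)
        _ ≤ ∫ θ, ν t θ * (LM * |(t : ℝ) - (t' : ℝ)|) ∂μ := by
            refine integral_mono i1.abs ((hνInt t).mul_const _) fun θ => ?_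
            rw [abs_mul, abs_of_pos (hνpos t θ)]
            exact mul_le_mul_of_nonneg_left (hEnv θ t t') (hνpos t θ).le
        _ = LM * |(t : ℝ) - (t' : ℝ)| := by
            rw [integral_mul_const, hνint t, one_mul]
    have b2 : |∫ θ, (ν t θ - ν t' θ) * f θ t' ∂μ| ≤ Rmax * Lν * |(t : ℝ) - (t' : ℝ)| :=
      key (fun θ => f θ t') (hfm t') (fun θ => hfbound θ t') t t'
    calc |(∫ θ, ν t θ * f θ t ∂μ) - ∫ θ, ν t' θ * f θ t' ∂μ|
        = |(∫ θ, ν t θ * (f θ t - f θ t') ∂μ) + ∫ θ, (ν t θ - ν t' θ) * f θ t' ∂μ| := by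
          rw [hsplit]
      _ ≤ |∫ θ, ν t θ * (f θ t - f θ t') ∂μ| + |∫ θ, (ν t θ - ν t' θ) * f θ t' ∂μ| :=
          abs_add_le _ _
      _ ≤ LM * |(t : ℝ) - (t' : ℝ)| + Rmax * Lν * |(t : ℝ) - (t' : ℝ)| := add_le_add b1 b2
      _ = (LM + Rmax * Lν) * |(t : ℝ) - (t' : ℝ)| := by ring
  -- Lipschitz property of t ↦ ∫ ν t Φ
  have hL2 : ∀ t t' : ℤ, |(∫ θ, ν t θ * Φ θ ∂μ) - ∫ θ, ν t' θ * Φ θ ∂μ|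
      ≤ Rmax * Lν * |(t : ℝ) - (t' : ℝ)| := by
    intro t t'
    have hsplit : (∫ θ, ν t θ * Φ θ ∂μ) - ∫ θ, ν t' θ * Φ θ ∂μ
        = ∫ θ, (ν t θ - ν t' θ) * Φ θ ∂μ := by
      rw [← integral_sub (hIntb t Φ Rmax hΦm hΦb) (hIntb t' Φ Rmax hΦm hΦb)]
      congr 1
      funext θ
      ring
    rw [hsplit]
    exact key Φ hΦm hΦb t t'
  -- the key self-normalization identity
  have hEq : ∑ j ∈ Finset.range α, ∫ θ, ν (T - j) θ * Φ θ ∂μ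
      = ∑ j ∈ Finset.range α, ∫ θ, ν (T - j) θ * f θ (T - j) ∂μ := by
    rw [← integral_finset_sum _ (fun j _ => hIntb _ Φ Rmax hΦm hΦb),
      ← integral_finset_sum _ (fun j _ => hIntb _ _ Rmax (hfm _) fun θ => hfbound θ _)]
    congr 1
    funext θ
    rw [← Finset.sum_mul, hΦdef]
    simp only
    rw [hSdef]
    simp only
    rw [mul_comm]
    exact div_mul_cancel₀ _ (hSpos θ).ne'
  -- per-time-step bound
  have hcore : ∀ i : ℕ,
      |(∫ θ, ν (T + 1 + i) θ * f θ (T + 1 + i) ∂μ) - ∫ θ, ν (T + 1 + i) θ * Φ θ ∂μ|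
        ≤ (LM + 2 * Rmax * Lν) * (((i : ℝ) + 1) + ((α : ℝ) - 1) / 2) := by
    intro i
    have hαR : (0 : ℝ) < α := by exact_mod_cast hα
    have hd : ∀ j : ℕ, |((T + 1 + i : ℤ) : ℝ) - ((T - j : ℤ) : ℝ)| = (i : ℝ) + 1 + j := by
      intro j
      have h : ((T + 1 + i : ℤ) : ℝ) - ((T - j : ℤ) : ℝ) = (i : ℝ) + 1 + j := by
        push_cast; ring
      rw [h, abs_of_nonneg (by positivity)]
    have h1 : ∀ j ∈ Finset.range α,
        |(∫ θ, ν (T + 1 + i) θ * f θ (T + 1 + i) ∂μ)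
          - ∫ θ, ν (T - j) θ * f θ (T - j) ∂μ|
          ≤ (LM + Rmax * Lν) * ((i : ℝ) + 1 + j) := by
      intro j _
      have h := hL1 (T + 1 + i) (T - j)
      rwa [hd j] at h
    have h2 : ∀ j ∈ Finset.range α,
        |(∫ θ, ν (T - j) θ * Φ θ ∂μ) - ∫ θ, ν (T + 1 + i) θ * Φ θ ∂μ|
          ≤ Rmax * Lν * ((i : ℝ) + 1 + j) := by
      intro j _
      have h := hL2 (T - j) (T + 1 + i)
      rwa [abs_sub_comm ((T - j : ℤ) : ℝ) _, hd j] at h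
    have hsum : (α : ℝ) * ((∫ θ, ν (T + 1 + i) θ * f θ (T + 1 + i) ∂μ)
          - ∫ θ, ν (T + 1 + i) θ * Φ θ ∂μ)
        = (∑ j ∈ Finset.range α, ((∫ θ, ν (T + 1 + i) θ * f θ (T + 1 + i) ∂μ)
            - ∫ θ, ν (T - j) θ * f θ (T - j) ∂μ))
          + ∑ j ∈ Finset.range α, ((∫ θ, ν (T - j) θ * Φ θ ∂μ)
            - ∫ θ, ν (T + 1 + i) θ * Φ θ ∂μ) := by
      rw [Finset.sum_sub_distrib, Finset.sum_sub_distrib, hEq]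
      simp only [Finset.sum_const, Finset.card_range, nsmul_eq_mul]
      ring
    have hd2 : ∑ j ∈ Finset.range α, ((i : ℝ) + 1 + j)
        = (α : ℝ) * (((i : ℝ) + 1) + ((α : ℝ) - 1) / 2) := by
      rw [Finset.sum_add_distrib, sum_range_cast_real]
      simp only [Finset.sum_const, Finset.card_range, nsmul_eq_mul]
      ring
    have habs : |(α : ℝ) * ((∫ θ, ν (T + 1 + i) θ * f θ (T + 1 + i) ∂μ)
          - ∫ θ, ν (T + 1 + i) θ * Φ θ ∂μ)|
        ≤ (α : ℝ) * ((LM + 2 * Rmax * Lν) * (((i : ℝ) + 1) + ((α : ℝ) - 1) / 2)) := by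
      rw [hsum]
      calc |(∑ j ∈ Finset.range α, ((∫ θ, ν (T + 1 + i) θ * f θ (T + 1 + i) ∂μ)
            - ∫ θ, ν (T - j) θ * f θ (T - j) ∂μ))
          + ∑ j ∈ Finset.range α, ((∫ θ, ν (T - j) θ * Φ θ ∂μ)
            - ∫ θ, ν (T + 1 + i) θ * Φ θ ∂μ)|
          ≤ |∑ j ∈ Finset.range α, ((∫ θ, ν (T + 1 + i) θ * f θ (T + 1 + i) ∂μ)
              - ∫ θ, ν (T - j) θ * f θ (T - j) ∂μ)|
            + |∑ j ∈ Finset.range α, ((∫ θ, ν (T - j) θ * Φ θ ∂μ)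
              - ∫ θ, ν (T + 1 + i) θ * Φ θ ∂μ)| := abs_add_le _ _
        _ ≤ (∑ j ∈ Finset.range α, (LM + Rmax * Lν) * ((i : ℝ) + 1 + j))
            + ∑ j ∈ Finset.range α, Rmax * Lν * ((i : ℝ) + 1 + j) := by
            refine add_le_add ?_ ?_
            · exact (Finset.abs_sum_le_sum_abs _ _).trans (Finset.sum_le_sum h1)
            · exact (Finset.abs_sum_le_sum_abs _ _).trans (Finset.sum_le_sum h2)
        _ = (LM + 2 * Rmax * Lν) * ∑ j ∈ Finset.range α, ((i : ℝ) + 1 + j) := by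
            rw [← Finset.sum_add_distrib, Finset.mul_sum]
            exact Finset.sum_congr rfl fun j _ => by ring
        _ = (α : ℝ) * ((LM + 2 * Rmax * Lν) * (((i : ℝ) + 1) + ((α : ℝ) - 1) / 2)) := by
            rw [hd2]; ring
    rw [abs_mul, abs_of_pos hαR] at habs
    exact le_of_mul_le_mul_left habs hαR
  -- geometric sums
  have hne1 : γ - 1 ≠ 0 := sub_ne_zero.mpr hγne
  have hgeom : ∑ i ∈ Finset.range β, γ ^ i = (1 - γ ^ β) / (1 - γ) := by
    rw [geom_sum_eq hγne, div_eq_div_iff hne1 hne2]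
    ring
  -- assemble
  have hC : 0 ≤ LM + 2 * Rmax * Lν := by positivity
  calc |(∑ i ∈ Finset.range β, γ ^ i * ∫ θ, ν (T + 1 + i) θ * f θ (T + 1 + i) ∂μ)
      - ∑ i ∈ Finset.range β, γ ^ i * ∫ θ, ν (T + 1 + i) θ *
          ((∑ j ∈ Finset.range α, ν (T - j) θ * f θ (T - j)) /
            ∑ k ∈ Finset.range α, ν (T - k) θ) ∂μ|
      = |∑ i ∈ Finset.range β, γ ^ i * ((∫ θ, ν (T + 1 + i) θ * f θ (T + 1 + i) ∂μ)
          - ∫ θ, ν (T + 1 + i) θ * Φ θ ∂μ)| := by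
        rw [← Finset.sum_sub_distrib]
        congr 1
        refine Finset.sum_congr rfl fun i _ => ?_
        rw [mul_sub]
    _ ≤ ∑ i ∈ Finset.range β, γ ^ i * |(∫ θ, ν (T + 1 + i) θ * f θ (T + 1 + i) ∂μ)
          - ∫ θ, ν (T + 1 + i) θ * Φ θ ∂μ| := by
        refine (Finset.abs_sum_le_sum_abs _ _).trans (le_of_eq ?_)
        refine Finset.sum_congr rfl fun i _ => ?_
        rw [abs_mul, abs_of_nonneg (pow_nonneg hγ0 i)]
    _ ≤ ∑ i ∈ Finset.range β, γ ^ i * ((LM + 2 * Rmax * Lν)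
          * (((i : ℝ) + 1) + ((α : ℝ) - 1) / 2)) := by
        refine Finset.sum_le_sum fun i _ => ?_
        exact mul_le_mul_of_nonneg_left (hcore i) (pow_nonneg hγ0 i)
    _ = (LM + 2 * Rmax * Lν) * ((((α : ℝ) - 1) / 2) * (∑ i ∈ Finset.range β, γ ^ i)
          + ∑ i ∈ Finset.range β, ((i : ℝ) + 1) * γ ^ i) := by
        simp only [Finset.mul_sum, mul_add]
        rw [← Finset.sum_add_distrib]
        exact Finset.sum_congr rfl fun i _ => by ring
    _ ≤ (LM + 2 * Rmax * Lν) * ((((α : ℝ) - 1) / 2) * ((1 - γ ^ β) / (1 - γ))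
          + (1 - γ ^ β) / (1 - γ) ^ 2) := by
        refine mul_le_mul_of_nonneg_left ?_ hC
        rw [hgeom, deriv_geom_sum_eq γ hγne β]
        have hp : 0 ≤ (β : ℝ) * γ ^ β / (1 - γ) := by positivity
        linarith
    _ = (LM + 2 * Rmax * Lν) * ((1 - γ ^ β) / (1 - γ))
          * (((α : ℝ) - 1) / 2 + 1 / (1 - γ)) := by
        field_simp
end

section
/- Variance bound for the combined objective: define the past-return term J̌ = (1/C_ω) Σ_{t=T-α+1}^{T} ω^{T-t} γ^{t-T+α-1} r_t and the importance-sampling term Ĵ = Σ_{t=T-α+1}^{T} ω^{T-t} r_t · [ Σ_{s=T+1}^{T+β} γ^{s-T-1} ν_s(θ_t) ] / [ Σ_{k=T-α+1}^{T} ω^{T-k} ν_k(θ_t) ]. Then the variance of J̌ + Ĵ satisfies Var[J̌ + Ĵ] ≤ 2 R_max² ( C_γ(α)² + C_γ(β)² · d₂( Σ_{s=T+1}^{T+β} (γ^{s-T-1}/C_γ(β)) ν_s ‖ Σ_{t=T-α+1}^{T} (ω^{T-t}/C_ω) ν_t ) ). -/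
open MeasureTheory Finset ProbabilityTheory
open scoped ENNReal NNReal

lemma geomC {x : ℝ} (hx0 : 0 < x) (hx1 : x ≤ 1) (n : ℕ) :
    (if x < 1 then (1 - x ^ n) / (1 - x) else (n : ℝ)) = ∑ i ∈ Finset.range n, x ^ i := by
  rcases lt_or_eq_of_le hx1 with h | h
  · rw [if_pos h, geom_sum_eq h.ne]
    have h1 : (1 : ℝ) - x ≠ 0 := by linarith
    have h2 : x - 1 ≠ 0 := by linarith
    field_simp
    ring
  · subst h
    simp

lemma var_add_le {Ω : Type*} [MeasurableSpace Ω] (P : Measure Ω) [IsProbabilityMeasure P]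
    (A B : Ω → ℝ) (hA : Measurable A) (hB : Measurable B)
    (a b : ℝ) (hAa : ∀ᵐ ωe ∂P, A ωe ^ 2 ≤ a)
    (hBint : Integrable (fun ωe => B ωe ^ 2) P) (hBb : ∫ ωe, B ωe ^ 2 ∂P ≤ b) :
    variance (fun ωe => A ωe + B ωe) P ≤ 2 * a + 2 * b := by
  have hAint : Integrable (fun ωe => A ωe ^ 2) P :=
    Integrable.mono' (integrable_const a) ((hA.pow_const 2).aestronglyMeasurable)
      (hAa.mono fun ωe h => by rw [Real.norm_eq_abs, abs_of_nonneg (sq_nonneg _)]; exact h)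
  have h1 : variance (fun ωe => A ωe + B ωe) P ≤ ∫ ωe, (A ωe + B ωe) ^ 2 ∂P := by
    have := variance_le_expectation_sq (μ := P) (X := fun ωe => A ωe + B ωe)
      ((hA.add hB).aestronglyMeasurable)
    simpa using this
  have h2 : ∫ ωe, (A ωe + B ωe) ^ 2 ∂P ≤ ∫ ωe, (2 * A ωe ^ 2 + 2 * B ωe ^ 2) ∂P :=
    integral_mono_of_nonneg (ae_of_all _ fun ωe => sq_nonneg _)
      ((hAint.const_mul 2).add (hBint.const_mul 2))
      (ae_of_all _ fun ωe => show (A ωe + B ωe)^2 ≤ 2 * A ωe ^ 2 + 2 * B ωe ^ 2 by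
        nlinarith [sq_nonneg (A ωe - B ωe)])
  have h3 : ∫ ωe, (2 * A ωe ^ 2 + 2 * B ωe ^ 2) ∂P
      = 2 * ∫ ωe, A ωe ^ 2 ∂P + 2 * ∫ ωe, B ωe ^ 2 ∂P := by
    rw [integral_add (hAint.const_mul 2) (hBint.const_mul 2), integral_const_mul, integral_const_mul]
  have h4 : ∫ ωe, A ωe ^ 2 ∂P ≤ a := by
    calc ∫ ωe, A ωe ^ 2 ∂P ≤ ∫ _, a ∂P :=
          integral_mono_of_nonneg (ae_of_all _ fun _ => sq_nonneg _) (integrable_const _) hAa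
      _ = a := by simp
  linarith

set_option maxHeartbeats 1000000 in
/-- Variance bound for the combined objective (past-return term plus
importance-sampling term). -/
theorem variance_bound
    {Θ : Type*} [MeasurableSpace Θ] (μ : Measure Θ)
    {Ω : Type*} [MeasurableSpace Ω] (P : Measure Ω) [IsProbabilityMeasure P]
    (T : ℤ) (α β : ℕ) (hα : 0 < α) (hβ : 0 < β) (hT : (α : ℤ) ≤ T)
    (ν : ℤ → Θ → ℝ)
    (hνmeas : ∀ t, Measurable (ν t))
    (hνpos : ∀ t θ, 0 < ν t θ)
    (hνint : ∀ t, ∫ θ, ν t θ ∂μ = 1)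
    (θt : ℕ → Ω → Θ) (hθmeas : ∀ j, Measurable (θt j))
    (hθlaw : ∀ j ∈ Finset.range α,
      P.map (θt j) = μ.withDensity (fun x => ENNReal.ofReal (ν (T - j) x)))
    (rt : ℕ → Ω → ℝ) (hrmeas : ∀ j, Measurable (rt j))
    (Rmax : ℝ) (hr : ∀ j ∈ Finset.range α, ∀ᵐ ωe ∂P, |rt j ωe| ≤ Rmax)
    (γ ω : ℝ) (hγ : γ ∈ Set.Ioc (0 : ℝ) 1) (hω : ω ∈ Set.Ioc (0 : ℝ) 1)
    (Cγα Cγβ Cω : ℝ)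
    (hCγα : Cγα = if γ < 1 then (1 - γ ^ α) / (1 - γ) else (α : ℝ))
    (hCγβ : Cγβ = if γ < 1 then (1 - γ ^ β) / (1 - γ) else (β : ℝ))
    (hCω : Cω = if ω < 1 then (1 - ω ^ α) / (1 - ω) else (α : ℝ))
    (hd2fin : Integrable (fun x =>
      (∑ i ∈ Finset.range β, γ ^ i / Cγβ * ν (T + 1 + i) x) ^ 2 /
        ∑ j ∈ Finset.range α, ω ^ j / Cω * ν (T - j) x) μ) :
    variance (fun ωe =>
        ((1 / Cω) * ∑ j ∈ Finset.range α, ω ^ j * γ ^ (α - 1 - j) * rt j ωe)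
        + ∑ j ∈ Finset.range α, ω ^ j * rt j ωe *
            ((∑ i ∈ Finset.range β, γ ^ i * ν (T + 1 + i) (θt j ωe)) /
              ∑ k ∈ Finset.range α, ω ^ k * ν (T - k) (θt j ωe))) P
      ≤ 2 * Rmax ^ 2 * (Cγα ^ 2 + Cγβ ^ 2 *
          ∫ x, (∑ i ∈ Finset.range β, γ ^ i / Cγβ * ν (T + 1 + i) x) ^ 2 /
            ∑ j ∈ Finset.range α, ω ^ j / Cω * ν (T - j) x ∂μ) := by
  obtain ⟨hγ0, hγ1⟩ := hγ
  obtain ⟨hω0, hω1⟩ := hω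
  have hCγα' : Cγα = ∑ i ∈ Finset.range α, γ ^ i := by rw [hCγα, geomC hγ0 hγ1]
  have hCγβ' : Cγβ = ∑ i ∈ Finset.range β, γ ^ i := by rw [hCγβ, geomC hγ0 hγ1]
  have hCω' : Cω = ∑ i ∈ Finset.range α, ω ^ i := by rw [hCω, geomC hω0 hω1]
  have hCωpos : 0 < Cω := by
    rw [hCω']; exact Finset.sum_pos (fun i _ => pow_pos hω0 i) ⟨0, Finset.mem_range.2 hα⟩
  have hCγβpos : 0 < Cγβ := by
    rw [hCγβ']; exact Finset.sum_pos (fun i _ => pow_pos hγ0 i) ⟨0, Finset.mem_range.2 hβ⟩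
  have hCγα1 : 1 ≤ Cγα := by
    rw [hCγα']
    calc (1:ℝ) = γ ^ 0 := by simp
      _ ≤ ∑ i ∈ Finset.range α, γ ^ i :=
        Finset.single_le_sum (f := fun i => γ ^ i) (fun i _ => (pow_pos hγ0 i).le)
          (Finset.mem_range.2 hα)
  haveI : (ae P).NeBot := ae_neBot.2 (IsProbabilityMeasure.ne_zero P)
  have hRmax : 0 ≤ Rmax := by
    obtain ⟨ωe, h⟩ := (hr 0 (Finset.mem_range.2 hα)).exists
    exact le_trans (abs_nonneg _) h
  -- abbreviations
  set F : Θ → ℝ := fun x =>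
    (∑ i ∈ Finset.range β, γ ^ i * ν (T + 1 + i) x) /
      ∑ k ∈ Finset.range α, ω ^ k * ν (T - k) x with hF
  set G : Θ → ℝ := fun x =>
    (∑ i ∈ Finset.range β, γ ^ i / Cγβ * ν (T + 1 + i) x) ^ 2 /
      ∑ j ∈ Finset.range α, ω ^ j / Cω * ν (T - j) x with hG
  have hNmeas : Measurable fun x => ∑ i ∈ Finset.range β, γ ^ i * ν (T + 1 + i) x :=
    Finset.measurable_sum _ (fun i _ => (hνmeas _).const_mul _)
  have hDmeas : Measurable fun x => ∑ k ∈ Finset.range α, ω ^ k * ν (T - k) x :=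
    Finset.measurable_sum _ (fun k _ => (hνmeas _).const_mul _)
  have hFmeas : Measurable F := hNmeas.div hDmeas
  have hDpos : ∀ x, 0 < ∑ k ∈ Finset.range α, ω ^ k * ν (T - k) x := fun x =>
    Finset.sum_pos (fun k _ => mul_pos (pow_pos hω0 k) (hνpos _ x)) ⟨0, Finset.mem_range.2 hα⟩
  have hNpos : ∀ x, 0 ≤ ∑ i ∈ Finset.range β, γ ^ i * ν (T + 1 + i) x := fun x =>
    Finset.sum_nonneg fun i _ => (mul_pos (pow_pos hγ0 i) (hνpos _ x)).le
  have hFnonneg : ∀ x, 0 ≤ F x := fun x => div_nonneg (hNpos x) (hDpos x).le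
  -- key pointwise identity
  have hGid : ∀ x, (∑ k ∈ Finset.range α, ω ^ k * ν (T - k) x) * F x ^ 2
      = (Cγβ ^ 2 / Cω) * G x := by
    intro x
    have hnum : (∑ i ∈ Finset.range β, γ ^ i / Cγβ * ν (T + 1 + i) x)
        = (∑ i ∈ Finset.range β, γ ^ i * ν (T + 1 + i) x) / Cγβ := by
      rw [Finset.sum_div]; exact Finset.sum_congr rfl fun i _ => by ring
    have hden : (∑ j ∈ Finset.range α, ω ^ j / Cω * ν (T - j) x)
        = (∑ k ∈ Finset.range α, ω ^ k * ν (T - k) x) / Cω := by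
      rw [Finset.sum_div]; exact Finset.sum_congr rfl fun k _ => by ring
    rw [hG, hF]
    simp only [hnum, hden]
    have hD := (hDpos x).ne'
    field_simp
  have hGint' : Integrable (fun x => (∑ k ∈ Finset.range α, ω ^ k * ν (T - k) x) * F x ^ 2) μ := by
    have := hd2fin.const_mul (Cγβ ^ 2 / Cω)
    exact this.congr (ae_of_all _ fun x => (hGid x).symm)
  -- integrability of each ν (T-j) * F^2
  have hintj : ∀ j ∈ Finset.range α, Integrable (fun x => ν (T - j) x * F x ^ 2) μ := by
    intro j hj
    refine Integrable.mono' (hGint'.const_mul ((ω ^ j)⁻¹))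
      ((hνmeas _).mul (hFmeas.pow_const 2)).aestronglyMeasurable (ae_of_all _ fun x => ?_)
    rw [Real.norm_eq_abs, abs_of_nonneg (mul_nonneg (hνpos _ x).le (sq_nonneg _))]
    have h1 : ω ^ j * ν (T - j) x ≤ ∑ k ∈ Finset.range α, ω ^ k * ν (T - k) x :=
      Finset.single_le_sum (f := fun k : ℕ => ω ^ k * ν (T - (k : ℤ)) x)
        (fun k _ => (mul_pos (pow_pos hω0 k) (hνpos _ x)).le) hj
    have h2 := mul_le_mul_of_nonneg_right h1 (sq_nonneg (F x))
    have h3 : (0:ℝ) < ω ^ j := pow_pos hω0 j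
    calc ν (T - j) x * F x ^ 2
        = (ω ^ j)⁻¹ * (ω ^ j * ν (T - j) x * F x ^ 2) := by field_simp
      _ ≤ (ω ^ j)⁻¹ * ((∑ k ∈ Finset.range α, ω ^ k * ν (T - k) x) * F x ^ 2) := by
          apply mul_le_mul_of_nonneg_left h2 (inv_nonneg.2 h3.le)
  -- pushforward computations
  have hwdeq : ∀ j ∈ Finset.range α,
      Integrable (fun ωe => F (θt j ωe) ^ 2) P ∧
      ∫ ωe, F (θt j ωe) ^ 2 ∂P = ∫ x, ν (T - j) x * F x ^ 2 ∂μ := by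
    intro j hj
    have hwd : Integrable (fun x => F x ^ 2)
        (μ.withDensity fun x => ENNReal.ofReal (ν (T - j) x)) := by
      rw [integrable_withDensity_iff ((hνmeas _).ennreal_ofReal)
        (ae_of_all _ fun x => ENNReal.ofReal_lt_top)]
      refine (hintj j hj).congr (ae_of_all _ fun x => ?_)
      simp only [ENNReal.toReal_ofReal (hνpos _ x).le]; ring
    constructor
    · have := (integrable_map_measure (hFmeas.pow_const 2).aestronglyMeasurable
        (hθmeas j).aemeasurable).1 (by rw [hθlaw j hj]; exact hwd)
      exact this
    · have h1 : ∫ ωe, F (θt j ωe) ^ 2 ∂P = ∫ x, F x ^ 2 ∂(P.map (θt j)) :=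
        (integral_map (hθmeas j).aemeasurable (hFmeas.pow_const 2).aestronglyMeasurable).symm
      rw [h1, hθlaw j hj]
      have h2 : (fun x => ENNReal.ofReal (ν (T - j) x))
          = fun x => ((ν (T - j) x).toNNReal : ℝ≥0∞) := rfl
      rw [h2, integral_withDensity_eq_integral_smul (hνmeas _).real_toNNReal]
      refine integral_congr_ae (ae_of_all _ fun x => ?_)
      show (ν (T - j) x).toNNReal • F x ^ 2 = ν (T - j) x * F x ^ 2
      rw [NNReal.smul_def, smul_eq_mul, Real.coe_toNNReal _ (hνpos _ x).le]
  -- sum identity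
  have hsum : ∑ j ∈ Finset.range α, ω ^ j * ∫ x, ν (T - j) x * F x ^ 2 ∂μ
      = Cγβ ^ 2 / Cω * ∫ x, G x ∂μ := by
    have e1 : ∀ j ∈ Finset.range α, ω ^ j * ∫ x, ν (T - j) x * F x ^ 2 ∂μ
        = ∫ x, ω ^ j * (ν (T - j) x * F x ^ 2) ∂μ := fun j hj => (integral_const_mul _ _).symm
    rw [Finset.sum_congr rfl e1,
      ← integral_finset_sum _ (fun j hj => ((hintj j hj).const_mul _)), ← integral_const_mul]
    refine integral_congr_ae (ae_of_all _ fun x => ?_)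
    show (∑ i ∈ Finset.range α, ω ^ i * (ν (T - i) x * F x ^ 2)) = Cγβ ^ 2 / Cω * G x
    rw [← hGid x, Finset.sum_mul]
    exact Finset.sum_congr rfl fun i _ => by ring
  -- the B-side pointwise bound
  have hr' : ∀ᵐ ωe ∂P, ∀ j ∈ Finset.range α, |rt j ωe| ≤ Rmax :=
    (ae_ball_iff (Finset.range α : Finset ℕ).countable_toSet).2 hr
  have hBpt : ∀ᵐ ωe ∂P,
      (∑ j ∈ Finset.range α, ω ^ j * rt j ωe * F (θt j ωe)) ^ 2
        ≤ Rmax ^ 2 * Cω * ∑ j ∈ Finset.range α, ω ^ j * F (θt j ωe) ^ 2 := by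
    refine hr'.mono fun ωe hb => ?_
    have cs := Finset.sum_mul_sq_le_sq_mul_sq (Finset.range α)
      (fun j => Real.sqrt (ω ^ j)) (fun j => Real.sqrt (ω ^ j) * (rt j ωe * F (θt j ωe)))
    have e1 : ∀ j ∈ Finset.range α, Real.sqrt (ω ^ j) *
        (Real.sqrt (ω ^ j) * (rt j ωe * F (θt j ωe))) = ω ^ j * rt j ωe * F (θt j ωe) :=
      fun j _ => by rw [← mul_assoc, Real.mul_self_sqrt (pow_nonneg hω0.le j)]; ring
    have e2 : ∀ j ∈ Finset.range α, (Real.sqrt (ω ^ j)) ^ 2 = ω ^ j :=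
      fun j _ => Real.sq_sqrt (pow_nonneg hω0.le j)
    have e3 : ∀ j ∈ Finset.range α, (Real.sqrt (ω ^ j) * (rt j ωe * F (θt j ωe))) ^ 2
        = ω ^ j * (rt j ωe * F (θt j ωe)) ^ 2 :=
      fun j _ => by rw [mul_pow, Real.sq_sqrt (pow_nonneg hω0.le j)]
    rw [Finset.sum_congr rfl e1, Finset.sum_congr rfl e2, Finset.sum_congr rfl e3] at cs
    have hb2 : ∑ j ∈ Finset.range α, ω ^ j * (rt j ωe * F (θt j ωe)) ^ 2
        ≤ ∑ j ∈ Finset.range α, ω ^ j * (Rmax ^ 2 * F (θt j ωe) ^ 2) := by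
      refine Finset.sum_le_sum fun j hj => ?_
      have h1 : rt j ωe ^ 2 ≤ Rmax ^ 2 := by
        nlinarith [abs_nonneg (rt j ωe), sq_abs (rt j ωe), hb j hj]
      have h2 : (0:ℝ) ≤ ω ^ j := pow_nonneg hω0.le j
      calc ω ^ j * (rt j ωe * F (θt j ωe)) ^ 2
          = ω ^ j * (rt j ωe ^ 2 * F (θt j ωe) ^ 2) := by ring
        _ ≤ ω ^ j * (Rmax ^ 2 * F (θt j ωe) ^ 2) :=
            mul_le_mul_of_nonneg_left
              (mul_le_mul_of_nonneg_right h1 (sq_nonneg _)) h2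
    have hcc : ∑ j ∈ Finset.range α, ω ^ j * (Rmax ^ 2 * F (θt j ωe) ^ 2)
        = Rmax ^ 2 * ∑ j ∈ Finset.range α, ω ^ j * F (θt j ωe) ^ 2 := by
      rw [Finset.mul_sum]; exact Finset.sum_congr rfl fun j _ => by ring
    have hCωsum : ∑ j ∈ Finset.range α, ω ^ j = Cω := hCω'.symm
    calc (∑ j ∈ Finset.range α, ω ^ j * rt j ωe * F (θt j ωe)) ^ 2
        ≤ (∑ j ∈ Finset.range α, ω ^ j) *
            ∑ j ∈ Finset.range α, ω ^ j * (rt j ωe * F (θt j ωe)) ^ 2 := cs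
      _ ≤ Cω * (Rmax ^ 2 * ∑ j ∈ Finset.range α, ω ^ j * F (θt j ωe) ^ 2) := by
          rw [hCωsum, ← hcc]
          exact mul_le_mul_of_nonneg_left hb2 hCωpos.le
      _ = Rmax ^ 2 * Cω * ∑ j ∈ Finset.range α, ω ^ j * F (θt j ωe) ^ 2 := by ring
  -- integrability of the bound and of B^2
  have hbndint : Integrable (fun ωe =>
      Rmax ^ 2 * Cω * ∑ j ∈ Finset.range α, ω ^ j * F (θt j ωe) ^ 2) P := by
    refine Integrable.const_mul ?_ _
    exact integrable_finset_sum _ fun j hj => ((hwdeq j hj).1.const_mul _)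
  have hBmeas : Measurable fun ωe => ∑ j ∈ Finset.range α, ω ^ j * rt j ωe * F (θt j ωe) :=
    Finset.measurable_sum _ fun j _ =>
      ((hrmeas j).const_mul _).mul (hFmeas.comp (hθmeas j))
  have hBint : Integrable (fun ωe =>
      (∑ j ∈ Finset.range α, ω ^ j * rt j ωe * F (θt j ωe)) ^ 2) P := by
    refine Integrable.mono' hbndint (hBmeas.pow_const 2).aestronglyMeasurable
      (hBpt.mono fun ωe h => ?_)
    rw [Real.norm_eq_abs, abs_of_nonneg (sq_nonneg _)]; exact h
  -- the value of the B-side integral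
  have hBb : ∫ ωe, (∑ j ∈ Finset.range α, ω ^ j * rt j ωe * F (θt j ωe)) ^ 2 ∂P
      ≤ Rmax ^ 2 * Cγβ ^ 2 * ∫ x, G x ∂μ := by
    have step1 : ∫ ωe, (∑ j ∈ Finset.range α, ω ^ j * rt j ωe * F (θt j ωe)) ^ 2 ∂P
        ≤ ∫ ωe, Rmax ^ 2 * Cω * ∑ j ∈ Finset.range α, ω ^ j * F (θt j ωe) ^ 2 ∂P :=
      integral_mono_of_nonneg (ae_of_all _ fun ωe => sq_nonneg _) hbndint hBpt
    have step2 : ∫ ωe, Rmax ^ 2 * Cω * ∑ j ∈ Finset.range α, ω ^ j * F (θt j ωe) ^ 2 ∂P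
        = Rmax ^ 2 * Cω * ∑ j ∈ Finset.range α, ω ^ j * ∫ ωe, F (θt j ωe) ^ 2 ∂P := by
      rw [integral_const_mul, integral_finset_sum _ (fun j hj => ((hwdeq j hj).1.const_mul _))]
      congr 1
      exact Finset.sum_congr rfl fun j hj => integral_const_mul _ _
    have step3 : ∑ j ∈ Finset.range α, ω ^ j * ∫ ωe, F (θt j ωe) ^ 2 ∂P
        = Cγβ ^ 2 / Cω * ∫ x, G x ∂μ := by
      rw [← hsum]
      exact Finset.sum_congr rfl fun j hj => by rw [(hwdeq j hj).2]
    calc ∫ ωe, (∑ j ∈ Finset.range α, ω ^ j * rt j ωe * F (θt j ωe)) ^ 2 ∂P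
        ≤ Rmax ^ 2 * Cω * (Cγβ ^ 2 / Cω * ∫ x, G x ∂μ) := by rw [← step3, ← step2]; exact step1
      _ = Rmax ^ 2 * Cγβ ^ 2 * ∫ x, G x ∂μ := by field_simp
  -- the A-side pointwise bound
  have hApt : ∀ᵐ ωe ∂P,
      ((1 / Cω) * ∑ j ∈ Finset.range α, ω ^ j * γ ^ (α - 1 - j) * rt j ωe) ^ 2 ≤ Rmax ^ 2 := by
    refine hr'.mono fun ωe hb => ?_
    have habs : |∑ j ∈ Finset.range α, ω ^ j * γ ^ (α - 1 - j) * rt j ωe| ≤ Cω * Rmax := by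
      calc |∑ j ∈ Finset.range α, ω ^ j * γ ^ (α - 1 - j) * rt j ωe|
          ≤ ∑ j ∈ Finset.range α, |ω ^ j * γ ^ (α - 1 - j) * rt j ωe| :=
            Finset.abs_sum_le_sum_abs _ _
        _ ≤ ∑ j ∈ Finset.range α, ω ^ j * Rmax := by
            refine Finset.sum_le_sum fun j hj => ?_
            rw [abs_mul, abs_mul, abs_of_nonneg (pow_nonneg hω0.le j),
              abs_of_nonneg (pow_nonneg hγ0.le _)]
            have h1 : γ ^ (α - 1 - j) ≤ 1 := pow_le_one₀ hγ0.le hγ1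
            have h2 := hb j hj
            have h3 : (0:ℝ) ≤ ω ^ j := pow_nonneg hω0.le j
            have h5 : γ ^ (α - 1 - j) * |rt j ωe| ≤ 1 * Rmax :=
              mul_le_mul h1 h2 (abs_nonneg _) zero_le_one
            calc ω ^ j * γ ^ (α - 1 - j) * |rt j ωe|
                = ω ^ j * (γ ^ (α - 1 - j) * |rt j ωe|) := by ring
              _ ≤ ω ^ j * (1 * Rmax) := mul_le_mul_of_nonneg_left h5 h3
              _ = ω ^ j * Rmax := by ring
        _ = Cω * Rmax := by rw [← Finset.sum_mul, ← hCω']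
    have h5 : |(1 / Cω) * ∑ j ∈ Finset.range α, ω ^ j * γ ^ (α - 1 - j) * rt j ωe| ≤ Rmax := by
      rw [abs_mul, abs_of_nonneg (by positivity : (0:ℝ) ≤ 1 / Cω)]
      calc (1 / Cω) * |∑ j ∈ Finset.range α, ω ^ j * γ ^ (α - 1 - j) * rt j ωe|
          ≤ (1 / Cω) * (Cω * Rmax) :=
            mul_le_mul_of_nonneg_left habs (by positivity)
        _ = Rmax := by field_simp
    nlinarith [abs_nonneg ((1 / Cω) * ∑ j ∈ Finset.range α, ω ^ j * γ ^ (α - 1 - j) * rt j ωe),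
      sq_abs ((1 / Cω) * ∑ j ∈ Finset.range α, ω ^ j * γ ^ (α - 1 - j) * rt j ωe)]
  have hAmeas : Measurable fun ωe =>
      (1 / Cω) * ∑ j ∈ Finset.range α, ω ^ j * γ ^ (α - 1 - j) * rt j ωe :=
    (Finset.measurable_sum _ fun j _ => (hrmeas j).const_mul _).const_mul _
  -- combine
  have main := var_add_le P
    (fun ωe => (1 / Cω) * ∑ j ∈ Finset.range α, ω ^ j * γ ^ (α - 1 - j) * rt j ωe)
    (fun ωe => ∑ j ∈ Finset.range α, ω ^ j * rt j ωe * F (θt j ωe))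
    hAmeas hBmeas (Rmax ^ 2) (Rmax ^ 2 * Cγβ ^ 2 * ∫ x, G x ∂μ) hApt hBint hBb
  have hD0 : 0 ≤ ∫ x, G x ∂μ :=
    integral_nonneg fun x => div_nonneg (sq_nonneg _) (by
      exact Finset.sum_nonneg fun k _ => mul_nonneg (by positivity) (hνpos _ x).le)
  refine le_trans main ?_
  have hCγα2 : 1 ≤ Cγα ^ 2 := by nlinarith
  nlinarith [mul_nonneg (sq_nonneg Rmax) (sub_nonneg.2 hCγα2),
    mul_nonneg (mul_nonneg (sq_nonneg Rmax) (sq_nonneg Cγβ)) hD0]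
end

section
/- Divergence bound between the discounted future mixture and the exponentially-weighted past mixture: d₂( Σ_{s=T+1}^{T+β} (γ^{s-T-1}/C_γ(β)) ν_s ‖ Σ_{t=T-α+1}^{T} (ω^{T-t}/C_ω) ν_t ) ≤ (C_ω / C_γ(β)²) · ( Σ_{s=T+1}^{T+β} γ^{s-T-1} · ( Σ_{t=T-α+1}^{T} ω^{T-t} / d₂(ν_s ‖ ν_t) )^{-1/2} )². -/
open MeasureTheory Finset

/-- Cauchy–Schwarz for integrals of nonnegative functions. -/
lemma cs_integral {Θ : Type*} [MeasurableSpace Θ] {μ : Measure Θ}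
    {f g : Θ → ℝ} (hf0 : ∀ x, 0 ≤ f x) (hg0 : ∀ x, 0 ≤ g x)
    (hf2 : Integrable (fun x => f x ^ 2) μ) (hg2 : Integrable (fun x => g x ^ 2) μ)
    (hfg : Integrable (fun x => f x * g x) μ) :
    ∫ x, f x * g x ∂μ ≤ Real.sqrt (∫ x, f x ^ 2 ∂μ) * Real.sqrt (∫ x, g x ^ 2 ∂μ) := by
  set A := ∫ x, f x ^ 2 ∂μ with hA
  set B := ∫ x, g x ^ 2 ∂μ with hB
  set C := ∫ x, f x * g x ∂μ with hC
  have hA0 : 0 ≤ A := integral_nonneg fun x => sq_nonneg _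
  have hB0 : 0 ≤ B := integral_nonneg fun x => sq_nonneg _
  have hC0 : 0 ≤ C := integral_nonneg fun x => mul_nonneg (hf0 x) (hg0 x)
  have key : C ^ 2 ≤ A * B := by
    rcases eq_or_lt_of_le hB0 with hBz | hBpos
    · -- B = 0 : g = 0 a.e.
      have hg0ae : (fun x => g x ^ 2) =ᵐ[μ] 0 := by
        rw [← integral_eq_zero_iff_of_nonneg (fun x => sq_nonneg (g x)) hg2]
        exact hBz.symm
      have hCz : C = 0 := by
        rw [hC]
        rw [integral_eq_zero_iff_of_nonneg (fun x => mul_nonneg (hf0 x) (hg0 x)) hfg]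
        filter_upwards [hg0ae] with x hx
        have : g x = 0 := by
          have : g x ^ 2 = 0 := hx
          exact pow_eq_zero_iff (n := 2) (by norm_num) |>.mp this
        simp [this]
      rw [hCz, ← hBz]
      simp
    · set c := C / B with hc
      have hexp : ∫ x, (f x - c * g x) ^ 2 ∂μ = A - 2 * c * C + c ^ 2 * B := by
        have e : ∀ x, (f x - c * g x) ^ 2
            = f x ^ 2 - 2 * c * (f x * g x) + c ^ 2 * g x ^ 2 := fun x => by ring
        simp_rw [e]
        have i0 : Integrable (fun x => 2 * c * (f x * g x)) μ := hfg.const_mul _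
        have i1 : Integrable (fun x => f x ^ 2 - 2 * c * (f x * g x)) μ := hf2.sub i0
        have i2 : Integrable (fun x => c ^ 2 * g x ^ 2) μ := hg2.const_mul _
        rw [integral_add i1 i2, integral_sub hf2 i0, integral_const_mul, integral_const_mul]
      have h0 : 0 ≤ ∫ x, (f x - c * g x) ^ 2 ∂μ := integral_nonneg fun x => sq_nonneg _
      rw [hexp] at h0
      have e2 : A - 2 * c * C + c ^ 2 * B = A - C ^ 2 / B := by
        rw [hc]; field_simp; ring
      rw [e2] at h0
      have : C ^ 2 / B ≤ A := by linarith
      calc C ^ 2 = C ^ 2 / B * B := by field_simp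
        _ ≤ A * B := by exact mul_le_mul_of_nonneg_right this hB0
  calc C ≤ Real.sqrt (A * B) := Real.le_sqrt_of_sq_le key
    _ = Real.sqrt A * Real.sqrt B := Real.sqrt_mul hA0 _

/-- Bound for the 2-Rényi divergence against a mixture in the denominator. -/
lemma denom_bound {Θ : Type*} [MeasurableSpace Θ] (μ : Measure Θ) (α : ℕ) (hα : 0 < α)
    (f : Θ → ℝ) (r : ℕ → Θ → ℝ) (hfm : Measurable f) (hrm : ∀ j, Measurable (r j))
    (hfpos : ∀ x, 0 < f x) (hrpos : ∀ j x, 0 < r j x)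
    (w : ℕ → ℝ) (hw : ∀ j, 0 < w j)
    (hDint : ∀ j ∈ range α, Integrable (fun x => f x ^ 2 / r j x) μ)
    (hDpos : ∀ j ∈ range α, 0 < ∫ x, f x ^ 2 / r j x ∂μ) :
    ∫ x, f x ^ 2 / ∑ j ∈ range α, w j * r j x ∂μ
      ≤ 1 / ∑ j ∈ range α, w j / ∫ x, f x ^ 2 / r j x ∂μ := by
  have hne : (range α).Nonempty := nonempty_range_iff.mpr hα.ne'
  have hqpos : ∀ x, 0 < ∑ j ∈ range α, w j * r j x := fun x =>
    sum_pos (fun j _ => mul_pos (hw j) (hrpos j x)) hne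
  have hqm : Measurable fun x => ∑ j ∈ range α, w j * r j x :=
    Finset.measurable_sum _ fun j _ => (hrm j).const_mul _
  set S : ℝ := ∑ j ∈ range α, w j / ∫ x, f x ^ 2 / r j x ∂μ with hS
  have hSpos : 0 < S := sum_pos (fun j hj => div_pos (hw j) (hDpos j hj)) hne
  set l : ℕ → ℝ := fun j => w j / (∫ x, f x ^ 2 / r j x ∂μ) / S with hl
  have hlsum : ∑ j ∈ range α, l j = 1 := by
    simp only [hl]
    rw [← Finset.sum_div, ← hS]
    exact div_self hSpos.ne'
  have key : ∀ x, f x ^ 2 / (∑ j ∈ range α, w j * r j x)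
      ≤ ∑ j ∈ range α, (l j ^ 2 / w j) * (f x ^ 2 / r j x) := by
    intro x
    have sed := sq_sum_div_le_sum_sq_div (range α) l
        (g := fun j => w j * r j x) (fun j _ => mul_pos (hw j) (hrpos j x))
    rw [hlsum, one_pow] at sed
    calc f x ^ 2 / (∑ j ∈ range α, w j * r j x)
        = f x ^ 2 * (1 / ∑ j ∈ range α, w j * r j x) := by ring
      _ ≤ f x ^ 2 * ∑ j ∈ range α, l j ^ 2 / (w j * r j x) :=
          mul_le_mul_of_nonneg_left sed (sq_nonneg _)
      _ = ∑ j ∈ range α, (l j ^ 2 / w j) * (f x ^ 2 / r j x) := by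
          rw [Finset.mul_sum]
          refine Finset.sum_congr rfl fun j hj => ?_
          rw [div_mul_div_comm, mul_div_assoc']
          ring
  have hIntL : Integrable (fun x => f x ^ 2 / ∑ j ∈ range α, w j * r j x) μ := by
    have h0 : (0 : ℕ) ∈ range α := mem_range.mpr hα
    refine ((hDint 0 h0).const_mul (1 / w 0)).mono'
      ((hfm.pow_const 2).div hqm).aestronglyMeasurable
      (Filter.Eventually.of_forall fun x => ?_)
    have hpos : 0 < f x ^ 2 / ∑ j ∈ range α, w j * r j x :=
      div_pos (pow_pos (hfpos x) 2) (hqpos x)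
    rw [Real.norm_of_nonneg hpos.le]
    have hle : w 0 * r 0 x ≤ ∑ j ∈ range α, w j * r j x :=
      Finset.single_le_sum (fun k _ => (mul_pos (hw k) (hrpos k x)).le) h0
    calc f x ^ 2 / ∑ j ∈ range α, w j * r j x ≤ f x ^ 2 / (w 0 * r 0 x) := by
          gcongr
          exact mul_pos (hw 0) (hrpos 0 x)
      _ = 1 / w 0 * (f x ^ 2 / r 0 x) := by rw [div_mul_div_comm, one_mul]
  have hIntR : Integrable (fun x => ∑ j ∈ range α, (l j ^ 2 / w j) * (f x ^ 2 / r j x)) μ :=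
    integrable_finset_sum _ fun j hj => (hDint j hj).const_mul _
  calc ∫ x, f x ^ 2 / ∑ j ∈ range α, w j * r j x ∂μ
      ≤ ∫ x, ∑ j ∈ range α, (l j ^ 2 / w j) * (f x ^ 2 / r j x) ∂μ :=
        integral_mono hIntL hIntR key
    _ = ∑ j ∈ range α, (l j ^ 2 / w j) * ∫ x, f x ^ 2 / r j x ∂μ := by
        rw [integral_finset_sum _ fun j hj => (hDint j hj).const_mul _]
        exact Finset.sum_congr rfl fun j hj => integral_const_mul _ _
    _ = ∑ j ∈ range α, w j / (∫ x, f x ^ 2 / r j x ∂μ) / S ^ 2 := by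
        have alg : ∀ W DD SS : ℝ, DD ≠ 0 → SS ≠ 0 → W ≠ 0 →
            (W / DD / SS) ^ 2 / W * DD = W / DD / SS ^ 2 := by
          intro W DD SS h1 h2 h3
          field_simp
        refine Finset.sum_congr rfl fun j hj => ?_
        simp only [hl]
        exact alg _ _ _ (hDpos j hj).ne' hSpos.ne' (hw j).ne'
    _ = 1 / S := by
        rw [← Finset.sum_div, ← hS, sq, ← div_div, div_self hSpos.ne']

/-- L² triangle: divergence of a mixture against a fixed density. -/
lemma numer_bound {Θ : Type*} [MeasurableSpace Θ] (μ : Measure Θ) (β : ℕ)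
    (p : ℕ → Θ → ℝ) (q : Θ → ℝ) (hpm : ∀ i, Measurable (p i)) (hqm : Measurable q)
    (hppos : ∀ i x, 0 < p i x) (hqpos : ∀ x, 0 < q x)
    (a : ℕ → ℝ) (ha : ∀ i, 0 ≤ a i)
    (hint : ∀ i ∈ range β, Integrable (fun x => p i x ^ 2 / q x) μ) :
    ∫ x, (∑ i ∈ range β, a i * p i x) ^ 2 / q x ∂μ
      ≤ (∑ i ∈ range β, a i * Real.sqrt (∫ x, p i x ^ 2 / q x ∂μ)) ^ 2 := by
  have hik : ∀ i ∈ range β, ∀ k ∈ range β,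
      Integrable (fun x => p i x * p k x / q x) μ := by
    intro i hi k hk
    refine (((hint i hi).add (hint k hk)).const_mul (1 / 2)).mono'
      (((hpm i).mul (hpm k)).div hqm).aestronglyMeasurable
      (Filter.Eventually.of_forall fun x => ?_)
    have h1 : 0 < p i x * p k x / q x :=
      div_pos (mul_pos (hppos i x) (hppos k x)) (hqpos x)
    rw [Real.norm_of_nonneg h1.le]
    have h2 : p i x * p k x ≤ (p i x ^ 2 + p k x ^ 2) / 2 := by
      nlinarith [sq_nonneg (p i x - p k x)]
    calc p i x * p k x / q x ≤ (p i x ^ 2 + p k x ^ 2) / 2 / q x := by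
          gcongr
          exact (hqpos x).le
      _ = 1 / 2 * (p i x ^ 2 / q x + p k x ^ 2 / q x) := by ring
  have hcs : ∀ i ∈ range β, ∀ k ∈ range β,
      ∫ x, p i x * p k x / q x ∂μ ≤
        Real.sqrt (∫ x, p i x ^ 2 / q x ∂μ) * Real.sqrt (∫ x, p k x ^ 2 / q x ∂μ) := by
    intro i hi k hk
    have e1 : (fun x => (p i x / Real.sqrt (q x)) * (p k x / Real.sqrt (q x)))
        = fun x => p i x * p k x / q x := funext fun x => by
      rw [div_mul_div_comm, Real.mul_self_sqrt (hqpos x).le]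
    have e2 : ∀ m, (fun x => (p m x / Real.sqrt (q x)) ^ 2)
        = fun x => p m x ^ 2 / q x := fun m => funext fun x => by
      rw [div_pow, Real.sq_sqrt (hqpos x).le]
    have h := cs_integral (μ := μ)
        (f := fun x => p i x / Real.sqrt (q x)) (g := fun x => p k x / Real.sqrt (q x))
        (fun x => div_nonneg (hppos i x).le (Real.sqrt_nonneg _))
        (fun x => div_nonneg (hppos k x).le (Real.sqrt_nonneg _))
        (by rw [e2 i]; exact hint i hi) (by rw [e2 k]; exact hint k hk)
        (by rw [e1]; exact hik i hi k hk)
    rwa [e1, e2 i, e2 k] at h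
  have expand : (fun x => (∑ i ∈ range β, a i * p i x) ^ 2 / q x)
      = fun x => ∑ i ∈ range β, ∑ k ∈ range β, a i * a k * (p i x * p k x / q x) := by
    funext x
    rw [sq, Finset.sum_mul_sum, Finset.sum_div]
    refine Finset.sum_congr rfl fun i hi => ?_
    rw [Finset.sum_div]
    refine Finset.sum_congr rfl fun k hk => ?_
    ring
  calc ∫ x, (∑ i ∈ range β, a i * p i x) ^ 2 / q x ∂μ
      = ∑ i ∈ range β, ∑ k ∈ range β, a i * a k * ∫ x, p i x * p k x / q x ∂μ := by
        rw [expand]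
        rw [integral_finset_sum _ fun i hi =>
          integrable_finset_sum _ fun k hk => ((hik i hi k hk).const_mul _)]
        refine Finset.sum_congr rfl fun i hi => ?_
        rw [integral_finset_sum _ fun k hk => ((hik i hi k hk).const_mul _)]
        exact Finset.sum_congr rfl fun k hk => integral_const_mul _ _
    _ ≤ ∑ i ∈ range β, ∑ k ∈ range β, a i * a k *
          (Real.sqrt (∫ x, p i x ^ 2 / q x ∂μ) * Real.sqrt (∫ x, p k x ^ 2 / q x ∂μ)) := by
        refine Finset.sum_le_sum fun i hi => Finset.sum_le_sum fun k hk => ?_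
        exact mul_le_mul_of_nonneg_left (hcs i hi k hk) (mul_nonneg (ha i) (ha k))
    _ = (∑ i ∈ range β, a i * Real.sqrt (∫ x, p i x ^ 2 / q x ∂μ)) ^ 2 := by
        rw [sq, Finset.sum_mul_sum]
        exact Finset.sum_congr rfl fun i _ => Finset.sum_congr rfl fun k _ => by ring

/-- General mixture-vs-mixture divergence bound. -/
lemma mixture_bound {Θ : Type*} [MeasurableSpace Θ] (μ : Measure Θ)
    (β α : ℕ) (hα : 0 < α)
    (p : ℕ → Θ → ℝ) (r : ℕ → Θ → ℝ)
    (hpm : ∀ i, Measurable (p i)) (hrm : ∀ j, Measurable (r j))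
    (hppos : ∀ i x, 0 < p i x) (hrpos : ∀ j x, 0 < r j x)
    (a : ℕ → ℝ) (w : ℕ → ℝ) (ha : ∀ i, 0 ≤ a i) (hw : ∀ j, 0 < w j)
    (hDint : ∀ i ∈ range β, ∀ j ∈ range α, Integrable (fun x => p i x ^ 2 / r j x) μ)
    (hDpos : ∀ i ∈ range β, ∀ j ∈ range α, 0 < ∫ x, p i x ^ 2 / r j x ∂μ) :
    ∫ x, (∑ i ∈ range β, a i * p i x) ^ 2 / ∑ j ∈ range α, w j * r j x ∂μ
      ≤ (∑ i ∈ range β, a i /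
          Real.sqrt (∑ j ∈ range α, w j / ∫ x, p i x ^ 2 / r j x ∂μ)) ^ 2 := by
  have hne : (range α).Nonempty := nonempty_range_iff.mpr hα.ne'
  have hqpos : ∀ x, 0 < ∑ j ∈ range α, w j * r j x := fun x =>
    sum_pos (fun j _ => mul_pos (hw j) (hrpos j x)) hne
  have hqm : Measurable fun x => ∑ j ∈ range α, w j * r j x :=
    Finset.measurable_sum _ fun j _ => (hrm j).const_mul _
  have hq_int : ∀ i ∈ range β,
      Integrable (fun x => p i x ^ 2 / ∑ j ∈ range α, w j * r j x) μ := by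
    intro i hi
    have h0 : (0 : ℕ) ∈ range α := mem_range.mpr hα
    refine ((hDint i hi 0 h0).const_mul (1 / w 0)).mono'
      (((hpm i).pow_const 2).div hqm).aestronglyMeasurable
      (Filter.Eventually.of_forall fun x => ?_)
    have hpos : 0 < p i x ^ 2 / ∑ j ∈ range α, w j * r j x :=
      div_pos (pow_pos (hppos i x) 2) (hqpos x)
    rw [Real.norm_of_nonneg hpos.le]
    have hle : w 0 * r 0 x ≤ ∑ j ∈ range α, w j * r j x :=
      Finset.single_le_sum (fun k _ => (mul_pos (hw k) (hrpos k x)).le) h0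
    calc p i x ^ 2 / ∑ j ∈ range α, w j * r j x ≤ p i x ^ 2 / (w 0 * r 0 x) := by
          gcongr
          exact mul_pos (hw 0) (hrpos 0 x)
      _ = 1 / w 0 * (p i x ^ 2 / r 0 x) := by rw [div_mul_div_comm, one_mul]
  have hnum := numer_bound μ β p (fun x => ∑ j ∈ range α, w j * r j x)
    hpm hqm hppos hqpos a ha hq_int
  have hterm : ∀ i ∈ range β,
      a i * Real.sqrt (∫ x, p i x ^ 2 / ∑ j ∈ range α, w j * r j x ∂μ)
        ≤ a i / Real.sqrt (∑ j ∈ range α, w j / ∫ x, p i x ^ 2 / r j x ∂μ) := by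
    intro i hi
    have h1 := denom_bound μ α hα (p i) r (hpm i) hrm (hppos i) hrpos w hw
      (hDint i hi) (hDpos i hi)
    have h2 : Real.sqrt (∫ x, p i x ^ 2 / ∑ j ∈ range α, w j * r j x ∂μ)
        ≤ Real.sqrt (1 / ∑ j ∈ range α, w j / ∫ x, p i x ^ 2 / r j x ∂μ) :=
      Real.sqrt_le_sqrt h1
    rw [one_div, Real.sqrt_inv, ← one_div] at h2
    calc a i * Real.sqrt (∫ x, p i x ^ 2 / ∑ j ∈ range α, w j * r j x ∂μ)
        ≤ a i * (1 / Real.sqrt (∑ j ∈ range α, w j / ∫ x, p i x ^ 2 / r j x ∂μ)) :=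
          mul_le_mul_of_nonneg_left h2 (ha i)
      _ = a i / Real.sqrt (∑ j ∈ range α, w j / ∫ x, p i x ^ 2 / r j x ∂μ) :=
          mul_one_div _ _
  calc ∫ x, (∑ i ∈ range β, a i * p i x) ^ 2 / ∑ j ∈ range α, w j * r j x ∂μ
      ≤ (∑ i ∈ range β, a i *
          Real.sqrt (∫ x, p i x ^ 2 / ∑ j ∈ range α, w j * r j x ∂μ)) ^ 2 := hnum
    _ ≤ (∑ i ∈ range β, a i /
          Real.sqrt (∑ j ∈ range α, w j / ∫ x, p i x ^ 2 / r j x ∂μ)) ^ 2 := by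
        refine pow_le_pow_left₀
          (Finset.sum_nonneg fun i hi => mul_nonneg (ha i) (Real.sqrt_nonneg _))
          (Finset.sum_le_sum hterm) 2

/-- Divergence bound between the discounted future mixture and the
exponentially-weighted past mixture. -/
theorem divergence_mixture_bound
    {Θ : Type*} [MeasurableSpace Θ] (μ : Measure Θ)
    (T : ℤ) (α β : ℕ) (hα : 0 < α) (hβ : 0 < β) (hT : (α : ℤ) ≤ T)
    (ν : ℤ → Θ → ℝ)
    (hνmeas : ∀ t, Measurable (ν t))
    (hνpos : ∀ t θ, 0 < ν t θ)
    (hνint : ∀ t, ∫ θ, ν t θ ∂μ = 1)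
    (γ ω : ℝ) (hγ : γ ∈ Set.Ioc (0 : ℝ) 1) (hω : ω ∈ Set.Ioc (0 : ℝ) 1)
    (Cγβ Cω : ℝ)
    (hCγβ : Cγβ = if γ < 1 then (1 - γ ^ β) / (1 - γ) else (β : ℝ))
    (hCω : Cω = if ω < 1 then (1 - ω ^ α) / (1 - ω) else (α : ℝ))
    (hd2fin : ∀ i ∈ Finset.range β, ∀ j ∈ Finset.range α,
      Integrable (fun x => (ν (T + 1 + i) x) ^ 2 / ν (T - j) x) μ)
    (hd2pos : ∀ i ∈ Finset.range β, ∀ j ∈ Finset.range α,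
      0 < ∫ x, (ν (T + 1 + i) x) ^ 2 / ν (T - j) x ∂μ) :
    (∫ x, (∑ i ∈ Finset.range β, γ ^ i / Cγβ * ν (T + 1 + i) x) ^ 2 /
        ∑ j ∈ Finset.range α, ω ^ j / Cω * ν (T - j) x ∂μ)
      ≤ (Cω / Cγβ ^ 2) *
        (∑ i ∈ Finset.range β, γ ^ i /
          Real.sqrt (∑ j ∈ Finset.range α,
            ω ^ j / ∫ x, (ν (T + 1 + i) x) ^ 2 / ν (T - j) x ∂μ)) ^ 2 := by
  obtain ⟨hγ0, hγ1⟩ := hγ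
  obtain ⟨hω0, hω1⟩ := hω
  have hCγpos : 0 < Cγβ := by
    rw [hCγβ]; split_ifs with h
    · have hp : γ ^ β < 1 := pow_lt_one₀ hγ0.le h hβ.ne'
      exact div_pos (by linarith) (by linarith)
    · exact_mod_cast hβ
  have hCωpos : 0 < Cω := by
    rw [hCω]; split_ifs with h
    · have hp : ω ^ α < 1 := pow_lt_one₀ hω0.le h hα.ne'
      exact div_pos (by linarith) (by linarith)
    · exact_mod_cast hα
  have hne : (range α).Nonempty := nonempty_range_iff.mpr hα.ne'
  have hmix := mixture_bound μ β α hα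
    (fun i x => ν (T + 1 + (i : ℤ)) x) (fun j x => ν (T - (j : ℤ)) x)
    (fun i => hνmeas _) (fun j => hνmeas _)
    (fun i x => hνpos _ x) (fun j x => hνpos _ x)
    (fun i => γ ^ i / Cγβ) (fun j => ω ^ j / Cω)
    (fun i => (div_pos (pow_pos hγ0 i) hCγpos).le)
    (fun j => div_pos (pow_pos hω0 j) hCωpos)
    hd2fin hd2pos
  refine le_trans hmix (le_of_eq ?_)
  have hRalg : ∀ i ∈ range β,
      γ ^ i / Cγβ / Real.sqrt (∑ j ∈ range α,
          ω ^ j / Cω / ∫ x, ν (T + 1 + (i : ℤ)) x ^ 2 / ν (T - (j : ℤ)) x ∂μ)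
        = Real.sqrt Cω / Cγβ * (γ ^ i / Real.sqrt (∑ j ∈ range α,
            ω ^ j / ∫ x, ν (T + 1 + (i : ℤ)) x ^ 2 / ν (T - (j : ℤ)) x ∂μ)) := by
    intro i hi
    have hR0 : 0 < ∑ j ∈ range α,
        ω ^ j / ∫ x, ν (T + 1 + (i : ℤ)) x ^ 2 / ν (T - (j : ℤ)) x ∂μ :=
      sum_pos (fun j hj => div_pos (pow_pos hω0 j) (hd2pos i hi j hj)) hne
    have hsum : ∑ j ∈ range α,
        ω ^ j / Cω / ∫ x, ν (T + 1 + (i : ℤ)) x ^ 2 / ν (T - (j : ℤ)) x ∂μ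
        = (∑ j ∈ range α,
            ω ^ j / ∫ x, ν (T + 1 + (i : ℤ)) x ^ 2 / ν (T - (j : ℤ)) x ∂μ) / Cω := by
      rw [Finset.sum_div]
      exact Finset.sum_congr rfl fun j hj => div_right_comm _ _ _
    rw [hsum, Real.sqrt_div hR0.le, div_div_eq_mul_div]
    ring
  calc (∑ i ∈ range β, γ ^ i / Cγβ / Real.sqrt (∑ j ∈ range α,
          ω ^ j / Cω / ∫ x, ν (T + 1 + (i : ℤ)) x ^ 2 / ν (T - (j : ℤ)) x ∂μ)) ^ 2
      = (Real.sqrt Cω / Cγβ * ∑ i ∈ range β, γ ^ i / Real.sqrt (∑ j ∈ range α,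
          ω ^ j / ∫ x, ν (T + 1 + (i : ℤ)) x ^ 2 / ν (T - (j : ℤ)) x ∂μ)) ^ 2 := by
        rw [Finset.mul_sum]
        exact congrArg (· ^ 2) (Finset.sum_congr rfl hRalg)
    _ = Cω / Cγβ ^ 2 * (∑ i ∈ range β, γ ^ i / Real.sqrt (∑ j ∈ range α,
          ω ^ j / ∫ x, ν (T + 1 + (i : ℤ)) x ^ 2 / ν (T - (j : ℤ)) x ∂μ)) ^ 2 := by
        rw [mul_pow, div_pow, Real.sq_sqrt hCωpos.le]
end

section
/- High-probability lower bound on the expected objective: define J̄ = J̌ + Ĵ where J̌ = (1/C_ω) Σ_{t=T-α+1}^{T} ω^{T-t} γ^{t-T+α-1} r_t and Ĵ = Σ_{t=T-α+1}^{T} ω^{T-t} r_t · [ Σ_{s=T+1}^{T+β} γ^{s-T-1} ν_s(θ_t) ] / [ Σ_{k=T-α+1}^{T} ω^{T-k} ν_k(θ_t) ], and define B = ( Σ_{s=T+1}^{T+β} γ^{s-T-1} · ( Σ_{t=T-α+1}^{T} ω^{T-t} / d₂(ν_s ‖ ν_t) )^{-1/2} )². Then for every δ ∈ (0,1), with probability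 at least 1−δ it holds that E[J̄] ≥ J̄ − √( ((1−δ)/δ) · 2 R_max² · ( C_γ(α)² + C_ω · B ) ). -/
open MeasureTheory Finset ProbabilityTheory
open scoped ENNReal NNReal


/-- Cauchy–Schwarz: `(∑ c)² ≤ (∑ a) * ∑ c²/a` for positive `a`. -/
lemma cs_inv {ι : Type*} (s : Finset ι) (a c : ι → ℝ) (ha : ∀ j ∈ s, 0 < a j) :
    (∑ j ∈ s, c j) ^ 2 ≤ (∑ j ∈ s, a j) * ∑ j ∈ s, c j ^ 2 / a j := by
  have h := Finset.sum_mul_sq_le_sq_mul_sq s (fun j => Real.sqrt (a j))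
    (fun j => c j / Real.sqrt (a j))
  have h1 : ∀ j ∈ s, Real.sqrt (a j) * (c j / Real.sqrt (a j)) = c j := by
    intro j hj
    rw [mul_div_cancel₀]
    exact Real.sqrt_ne_zero'.2 (ha j hj)
  have h2 : ∀ j ∈ s, Real.sqrt (a j) ^ 2 = a j := fun j hj => Real.sq_sqrt (ha j hj).le
  have h3 : ∀ j ∈ s, (c j / Real.sqrt (a j)) ^ 2 = c j ^ 2 / a j := by
    intro j hj
    rw [div_pow, Real.sq_sqrt (ha j hj).le]
  rw [Finset.sum_congr rfl h1, Finset.sum_congr rfl h2, Finset.sum_congr rfl h3] at h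
  exact h

/-- Cauchy–Schwarz with nonnegative weights. -/
lemma cs_weights {ι : Type*} (s : Finset ι) (lam g : ι → ℝ) (hlam : ∀ j ∈ s, 0 ≤ lam j) :
    (∑ j ∈ s, lam j * g j) ^ 2 ≤ (∑ j ∈ s, lam j) * ∑ j ∈ s, lam j * g j ^ 2 := by
  have h := Finset.sum_mul_sq_le_sq_mul_sq s (fun j => Real.sqrt (lam j))
    (fun j => Real.sqrt (lam j) * g j)
  have h1 : ∀ j ∈ s, Real.sqrt (lam j) * (Real.sqrt (lam j) * g j) = lam j * g j := by
    intro j hj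
    rw [← mul_assoc, Real.mul_self_sqrt (hlam j hj)]
  have h2 : ∀ j ∈ s, Real.sqrt (lam j) ^ 2 = lam j := fun j hj => Real.sq_sqrt (hlam j hj)
  have h3 : ∀ j ∈ s, (Real.sqrt (lam j) * g j) ^ 2 = lam j * g j ^ 2 := by
    intro j hj
    rw [mul_pow, Real.sq_sqrt (hlam j hj)]
  rw [Finset.sum_congr rfl h1, Finset.sum_congr rfl h2, Finset.sum_congr rfl h3] at h
  exact h

/-- Minkowski's inequality for a finite sum in `L²`. -/
lemma my_minkowski {X : Type*} [MeasurableSpace X] (μ : Measure X) {ι : Type*} (s : Finset ι)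
    (f : ι → X → ℝ≥0∞) (hf : ∀ i, Measurable (f i)) :
    (∫⁻ x, (∑ i ∈ s, f i x) ^ (2:ℝ) ∂μ) ^ (2:ℝ)⁻¹ ≤
      ∑ i ∈ s, (∫⁻ x, f i x ^ (2:ℝ) ∂μ) ^ (2:ℝ)⁻¹ := by
  classical
  induction s using Finset.cons_induction with
  | empty => simp [ENNReal.zero_rpow_of_pos]
  | cons a s ha ih =>
    have hmeas : Measurable (fun x => ∑ i ∈ s, f i x) :=
      Finset.measurable_sum s (fun i _ => hf i)
    have key := ENNReal.lintegral_Lp_add_le (μ := μ) (f := f a)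
      (g := fun x => ∑ i ∈ s, f i x) (hf a).aemeasurable hmeas.aemeasurable one_le_two
    simp only [Finset.sum_cons]
    calc (∫⁻ x, (f a x + ∑ i ∈ s, f i x) ^ (2:ℝ) ∂μ) ^ (2:ℝ)⁻¹
        = (∫⁻ x, ((f a + fun x => ∑ i ∈ s, f i x) x) ^ (2:ℝ) ∂μ) ^ (2:ℝ)⁻¹ := rfl
      _ ≤ (∫⁻ x, f a x ^ (2:ℝ) ∂μ) ^ (1/(2:ℝ)) +
          (∫⁻ x, (∑ i ∈ s, f i x) ^ (2:ℝ) ∂μ) ^ (1/(2:ℝ)) := by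
            rw [show (2:ℝ)⁻¹ = 1/(2:ℝ) by norm_num]; exact key
      _ ≤ (∫⁻ x, f a x ^ (2:ℝ) ∂μ) ^ (2:ℝ)⁻¹ + ∑ i ∈ s, (∫⁻ x, f i x ^ (2:ℝ) ∂μ) ^ (2:ℝ)⁻¹ := by
            rw [show (1:ℝ)/(2:ℝ) = (2:ℝ)⁻¹ by norm_num]
            exact add_le_add le_rfl ih

lemma sq_add_le_aux {a b u v : ℝ} (ha : a ^ 2 ≤ u) (hb : b ^ 2 ≤ v) :
    (a + b) ^ 2 ≤ 2 * u + 2 * v := by nlinarith [sq_nonneg (a - b)]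

/-- Cantelli's one-sided inequality. -/
lemma my_cantelli {Ω : Type*} [MeasurableSpace Ω] (P : Measure Ω) [IsProbabilityMeasure P]
    {X : Ω → ℝ} (hX : MemLp X 2 P) {c : ℝ} (hc : 0 < c) :
    P {ωe | c < X ωe - ∫ x, X x ∂P} ≤
      ENNReal.ofReal (variance X P / (variance X P + c ^ 2)) := by
  set m := ∫ x, X x ∂P with hm
  set σ2 := variance X P with hσ2
  have hσ2nn : 0 ≤ σ2 := variance_nonneg X P
  set t := σ2 / c with ht
  have htnn : 0 ≤ t := div_nonneg hσ2nn hc.le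
  set Y : Ω → ℝ := fun ωe => X ωe - m + t with hY
  have hXm : MemLp (fun ωe => X ωe - m) 2 P := by
    have := hX.sub (memLp_const (p := 2) (μ := P) m)
    exact this
  have hYm : MemLp Y 2 P := by
    have := hXm.add (memLp_const (p := 2) (μ := P) t)
    exact this
  have hXint : Integrable X P := hX.integrable one_le_two
  have hXmint : Integrable (fun ωe => X ωe - m) P := hXint.sub (integrable_const m)
  have hXm2int : Integrable (fun ωe => (X ωe - m) ^ 2) P := by
    have := hXm.integrable_sq
    simpa using this
  have hY2int : Integrable (fun ωe => Y ωe ^ 2) P := by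
    have := hYm.integrable_sq
    simpa using this
  have hEXm : ∫ ωe, (X ωe - m) ∂P = 0 := by
    rw [integral_sub hXint (integrable_const m)]
    simp [hm]
  have hEXm2 : ∫ ωe, (X ωe - m) ^ 2 ∂P = σ2 := by
    rw [hσ2, variance_eq_integral hX.aemeasurable]
  have hEY2 : ∫ ωe, Y ωe ^ 2 ∂P = σ2 + t ^ 2 := by
    have hexp : ∀ ωe, Y ωe ^ 2 = (X ωe - m) ^ 2 + ((2 * t) * (X ωe - m) + t ^ 2) := by
      intro ωe; simp only [hY]; ring
    rw [integral_congr_ae (Filter.Eventually.of_forall hexp)]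
    rw [integral_add (f := fun ωe => (X ωe - m) ^ 2)
      (g := fun ωe => 2 * t * (X ωe - m) + t ^ 2) hXm2int
      (((hXmint.const_mul (2 * t))).add (integrable_const _))]
    rw [integral_add (f := fun ωe => 2 * t * (X ωe - m)) (g := fun _ => t ^ 2)
      (hXmint.const_mul (2 * t)) (integrable_const _)]
    rw [MeasureTheory.integral_const_mul, hEXm, hEXm2]
    simp
  have hsub : {ωe | c < X ωe - m} ⊆ {ωe | (c + t) ^ 2 ≤ Y ωe ^ 2} := by
    intro ωe hωe
    simp only [Set.mem_setOf_eq] at hωe ⊢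
    have h1 : c + t ≤ Y ωe := by simp only [hY]; linarith
    have h2 : 0 < c + t := by linarith
    nlinarith
  have hmarkov := mul_meas_ge_le_integral_of_nonneg
    (Filter.Eventually.of_forall (fun ωe => sq_nonneg (Y ωe))) hY2int ((c + t) ^ 2)
  have hPtop : P {ωe | c < X ωe - m} ≠ ⊤ := measure_ne_top _ _
  have hmono : P {ωe | c < X ωe - m} ≤ P {ωe | (c + t) ^ 2 ≤ Y ωe ^ 2} := measure_mono hsub
  have hct : (0:ℝ) < (c + t) ^ 2 := by positivity
  have hkey : (P {ωe | c < X ωe - m}).toReal ≤ (σ2 + t ^ 2) / (c + t) ^ 2 := by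
    rw [le_div_iff₀ hct]
    calc (P {ωe | c < X ωe - m}).toReal * (c + t) ^ 2
        ≤ (P {ωe | (c + t) ^ 2 ≤ Y ωe ^ 2}).toReal * (c + t) ^ 2 :=
          mul_le_mul_of_nonneg_right
            (ENNReal.toReal_mono (measure_ne_top _ _) hmono) hct.le
      _ = (c + t) ^ 2 * (P {ωe | (c + t) ^ 2 ≤ Y ωe ^ 2}).toReal := by ring
      _ ≤ ∫ ωe, Y ωe ^ 2 ∂P := hmarkov
      _ = σ2 + t ^ 2 := hEY2
  have halg : (σ2 + t ^ 2) / (c + t) ^ 2 = σ2 / (σ2 + c ^ 2) := by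
    have hc' : c ≠ 0 := hc.ne'
    have hd : σ2 + c ^ 2 ≠ 0 := by positivity
    have htc : t * c = σ2 := by rw [ht]; field_simp
    rw [div_eq_div_iff hct.ne' hd]
    linear_combination (t * c - σ2) * htc
  rw [← halg, ← ENNReal.ofReal_toReal hPtop]
  exact ENNReal.ofReal_le_ofReal hkey

set_option maxHeartbeats 2000000 in
/-- High-probability lower bound on the expected objective. -/
theorem high_probability_lower_bound
    {Θ : Type*} [MeasurableSpace Θ] (μ : Measure Θ)
    {Ω : Type*} [MeasurableSpace Ω] (P : Measure Ω) [IsProbabilityMeasure P]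
    (T : ℤ) (α β : ℕ) (hα : 0 < α) (hβ : 0 < β) (hT : (α : ℤ) ≤ T)
    (ν : ℤ → Θ → ℝ)
    (hνmeas : ∀ t, Measurable (ν t))
    (hνpos : ∀ t θ, 0 < ν t θ)
    (hνint : ∀ t, ∫ θ, ν t θ ∂μ = 1)
    (θt : ℕ → Ω → Θ) (hθmeas : ∀ j, Measurable (θt j))
    (hθlaw : ∀ j ∈ Finset.range α,
      P.map (θt j) = μ.withDensity (fun x => ENNReal.ofReal (ν (T - j) x)))
    (rt : ℕ → Ω → ℝ) (hrmeas : ∀ j, Measurable (rt j))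
    (Rmax : ℝ) (hr : ∀ j ∈ Finset.range α, ∀ᵐ ωe ∂P, |rt j ωe| ≤ Rmax)
    (γ ω : ℝ) (hγ : γ ∈ Set.Ioc (0 : ℝ) 1) (hω : ω ∈ Set.Ioc (0 : ℝ) 1)
    (Cγα Cω : ℝ)
    (hCγα : Cγα = if γ < 1 then (1 - γ ^ α) / (1 - γ) else (α : ℝ))
    (hCω : Cω = if ω < 1 then (1 - ω ^ α) / (1 - ω) else (α : ℝ))
    (hd2fin : ∀ i ∈ Finset.range β, ∀ j ∈ Finset.range α,
      Integrable (fun x => (ν (T + 1 + i) x) ^ 2 / ν (T - j) x) μ)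
    (hd2pos : ∀ i ∈ Finset.range β, ∀ j ∈ Finset.range α,
      0 < ∫ x, (ν (T + 1 + i) x) ^ 2 / ν (T - j) x ∂μ)
    (Jbar : Ω → ℝ)
    (hJbar : ∀ ωe, Jbar ωe =
      ((1 / Cω) * ∑ j ∈ Finset.range α, ω ^ j * γ ^ (α - 1 - j) * rt j ωe)
      + ∑ j ∈ Finset.range α, ω ^ j * rt j ωe *
          ((∑ i ∈ Finset.range β, γ ^ i * ν (T + 1 + i) (θt j ωe)) /
            ∑ k ∈ Finset.range α, ω ^ k * ν (T - k) (θt j ωe)))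
    (B : ℝ)
    (hB : B = (∑ i ∈ Finset.range β, γ ^ i /
        Real.sqrt (∑ j ∈ Finset.range α,
          ω ^ j / ∫ x, (ν (T + 1 + i) x) ^ 2 / ν (T - j) x ∂μ)) ^ 2)
    (δ : ℝ) (hδ : δ ∈ Set.Ioo (0 : ℝ) 1) :
    ENNReal.ofReal (1 - δ) ≤
      P {ωe | (∫ ωe', Jbar ωe' ∂P) ≥ Jbar ωe -
        Real.sqrt (((1 - δ) / δ) * 2 * Rmax ^ 2 * (Cγα ^ 2 + Cω * B))} := by
  classical
  obtain ⟨hδ0, hδ1⟩ := hδ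
  obtain ⟨hγ0, hγ1⟩ := hγ
  obtain ⟨hω0, hω1⟩ := hω
  have hαne : (Finset.range α).Nonempty := Finset.nonempty_range_iff.2 hα.ne'
  set D : Θ → ℝ := fun x => ∑ k ∈ Finset.range α, ω ^ k * ν (T - k) x with hDdef
  set G : Θ → ℝ := fun x => ∑ i ∈ Finset.range β, γ ^ i * ν (T + 1 + i) x with hGdef
  set w : Θ → ℝ := fun x => G x / D x with hwdef
  set dd : ℕ → ℕ → ℝ := fun i j => ∫ x, (ν (T + 1 + i) x) ^ 2 / ν (T - j) x ∂μ with hdd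
  set Sf : ℕ → ℝ := fun i => ∑ j ∈ Finset.range α, ω ^ j / dd i j with hSf
  have hDpos : ∀ x, 0 < D x := fun x =>
    Finset.sum_pos (fun j _ => mul_pos (pow_pos hω0 j) (hνpos _ x)) hαne
  have hGnn : ∀ x, 0 ≤ G x := fun x =>
    Finset.sum_nonneg fun i _ => mul_nonneg (pow_nonneg hγ0.le i) (hνpos _ x).le
  have hwnn : ∀ x, 0 ≤ w x := fun x => div_nonneg (hGnn x) (hDpos x).le
  have hddpos : ∀ i ∈ Finset.range β, ∀ j ∈ Finset.range α, 0 < dd i j := by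
    intro i hi j hj; simp only [hdd]; exact hd2pos i hi j hj
  have hSpos : ∀ i ∈ Finset.range β, 0 < Sf i := fun i hi =>
    Finset.sum_pos (fun j hj => div_pos (pow_pos hω0 j) (hddpos i hi j hj)) hαne
  have hDmeas : Measurable D :=
    Finset.measurable_sum _ (fun j _ => (hνmeas _).const_mul _)
  have hGmeas : Measurable G :=
    Finset.measurable_sum _ (fun i _ => (hνmeas _).const_mul _)
  have hwmeas : Measurable w := hGmeas.div hDmeas
  have hMap : ∀ j ∈ Finset.range α, ∀ g : Θ → ℝ≥0∞, Measurable g →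
      ∫⁻ ωe, g (θt j ωe) ∂P = ∫⁻ x, ENNReal.ofReal (ν (T - j) x) * g x ∂μ := by
    intro j hj g hg
    rw [← lintegral_map hg (hθmeas j), hθlaw j hj,
      lintegral_withDensity_eq_lintegral_mul μ (f := fun x => ENNReal.ofReal (ν (T - j) x))
        ((hνmeas _).ennreal_ofReal) hg]
    rfl
  have hK : ∀ i ∈ Finset.range β,
      ∫⁻ x, ENNReal.ofReal (ν (T + 1 + i) x ^ 2 / D x) ∂μ ≤ ENNReal.ofReal (1 / Sf i) := by
    intro i hi
    have hSi : 0 < Sf i := hSpos i hi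
    set c : ℕ → ℝ := fun j => (ω ^ j / dd i j) / Sf i with hcdef
    have hcnn : ∀ j ∈ Finset.range α, 0 ≤ c j := fun j hj =>
      div_nonneg (div_nonneg (pow_nonneg hω0.le j) (hddpos i hi j hj).le) hSi.le
    have hcsum : ∑ j ∈ Finset.range α, c j = 1 := by
      simp only [hcdef]
      rw [← Finset.sum_div]
      exact div_self hSi.ne'
    have hpt : ∀ x, ν (T + 1 + i) x ^ 2 / D x ≤
        ∑ j ∈ Finset.range α, (c j ^ 2 / ω ^ j) * (ν (T + 1 + i) x ^ 2 / ν (T - j) x) := by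
      intro x
      have hcs := cs_inv (Finset.range α) (fun j => ω ^ j * ν (T - j) x) c
        (fun j _ => mul_pos (pow_pos hω0 j) (hνpos _ x))
      rw [hcsum, one_pow] at hcs
      have hDx := hDpos x
      have h1 : 1 / D x ≤ ∑ j ∈ Finset.range α, c j ^ 2 / (ω ^ j * ν (T - j) x) := by
        rw [div_le_iff₀ hDx]
        calc (1:ℝ) ≤ (∑ j ∈ Finset.range α, ω ^ j * ν (T - j) x) *
              ∑ j ∈ Finset.range α, c j ^ 2 / (ω ^ j * ν (T - j) x) := hcs
          _ = (∑ j ∈ Finset.range α, c j ^ 2 / (ω ^ j * ν (T - j) x)) * D x := by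
              rw [hDdef]; ring
      have hN2 : (0:ℝ) ≤ ν (T + 1 + i) x ^ 2 := sq_nonneg _
      calc ν (T + 1 + i) x ^ 2 / D x = ν (T + 1 + i) x ^ 2 * (1 / D x) := by ring
        _ ≤ ν (T + 1 + i) x ^ 2 * ∑ j ∈ Finset.range α, c j ^ 2 / (ω ^ j * ν (T - j) x) :=
            mul_le_mul_of_nonneg_left h1 hN2
        _ = ∑ j ∈ Finset.range α, ν (T + 1 + i) x ^ 2 * (c j ^ 2 / (ω ^ j * ν (T - j) x)) := by
            rw [Finset.mul_sum]
        _ = ∑ j ∈ Finset.range α, (c j ^ 2 / ω ^ j) * (ν (T + 1 + i) x ^ 2 / ν (T - j) x) := by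
            refine Finset.sum_congr rfl fun j hj => ?_
            have h1 : (ω:ℝ) ^ j ≠ 0 := (pow_pos hω0 j).ne'
            have h2 : ν (T - j) x ≠ 0 := (hνpos _ x).ne'
            field_simp
    have hterm : ∀ j ∈ Finset.range α,
        ∫⁻ x, ENNReal.ofReal ((c j ^ 2 / ω ^ j) * (ν (T + 1 + i) x ^ 2 / ν (T - j) x)) ∂μ
          = ENNReal.ofReal ((c j ^ 2 / ω ^ j) * dd i j) := by
      intro j hj
      have hnn : 0 ≤ c j ^ 2 / ω ^ j := div_nonneg (sq_nonneg _) (pow_nonneg hω0.le j)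
      have hmeas2 : Measurable fun x => ENNReal.ofReal (ν (T + 1 + i) x ^ 2 / ν (T - j) x) :=
        (((hνmeas _).pow_const 2).div (hνmeas _)).ennreal_ofReal
      calc ∫⁻ x, ENNReal.ofReal ((c j ^ 2 / ω ^ j) * (ν (T + 1 + i) x ^ 2 / ν (T - j) x)) ∂μ
          = ∫⁻ x, ENNReal.ofReal (c j ^ 2 / ω ^ j) *
              ENNReal.ofReal (ν (T + 1 + i) x ^ 2 / ν (T - j) x) ∂μ := by
            refine lintegral_congr fun x => ?_
            rw [ENNReal.ofReal_mul hnn]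
        _ = ENNReal.ofReal (c j ^ 2 / ω ^ j) *
              ∫⁻ x, ENNReal.ofReal (ν (T + 1 + i) x ^ 2 / ν (T - j) x) ∂μ :=
            lintegral_const_mul _ hmeas2
        _ = ENNReal.ofReal (c j ^ 2 / ω ^ j) * ENNReal.ofReal (dd i j) := by
            congr 1
            rw [← MeasureTheory.ofReal_integral_eq_lintegral_ofReal (hd2fin i hi j hj)
              (Filter.Eventually.of_forall fun x =>
                div_nonneg (sq_nonneg _) (hνpos _ x).le)]
        _ = ENNReal.ofReal ((c j ^ 2 / ω ^ j) * dd i j) := by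
            rw [ENNReal.ofReal_mul hnn]
    calc ∫⁻ x, ENNReal.ofReal (ν (T + 1 + i) x ^ 2 / D x) ∂μ
        ≤ ∫⁻ x, ENNReal.ofReal (∑ j ∈ Finset.range α,
            (c j ^ 2 / ω ^ j) * (ν (T + 1 + i) x ^ 2 / ν (T - j) x)) ∂μ :=
          lintegral_mono fun x => ENNReal.ofReal_le_ofReal (hpt x)
      _ = ∫⁻ x, ∑ j ∈ Finset.range α, ENNReal.ofReal
            ((c j ^ 2 / ω ^ j) * (ν (T + 1 + i) x ^ 2 / ν (T - j) x)) ∂μ := by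
          refine lintegral_congr fun x => ?_
          rw [ENNReal.ofReal_sum_of_nonneg]
          intro j hj
          exact mul_nonneg (div_nonneg (sq_nonneg _) (pow_nonneg hω0.le j))
            (div_nonneg (sq_nonneg _) (hνpos _ x).le)
      _ = ∑ j ∈ Finset.range α, ∫⁻ x, ENNReal.ofReal
            ((c j ^ 2 / ω ^ j) * (ν (T + 1 + i) x ^ 2 / ν (T - j) x)) ∂μ := by
          refine lintegral_finset_sum _ fun j hj => ?_
          exact ((measurable_const.mul (((hνmeas _).pow_const 2).div (hνmeas _)))).ennreal_ofReal
      _ = ∑ j ∈ Finset.range α, ENNReal.ofReal ((c j ^ 2 / ω ^ j) * dd i j) :=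
          Finset.sum_congr rfl hterm
      _ = ENNReal.ofReal (∑ j ∈ Finset.range α, (c j ^ 2 / ω ^ j) * dd i j) := by
          rw [ENNReal.ofReal_sum_of_nonneg]
          intro j hj
          exact mul_nonneg (div_nonneg (sq_nonneg _) (pow_nonneg hω0.le j)) (hddpos i hi j hj).le
      _ = ENNReal.ofReal (1 / Sf i) := by
          congr 1
          have hstep : ∀ j ∈ Finset.range α,
              (c j ^ 2 / ω ^ j) * dd i j = (ω ^ j / dd i j) / Sf i ^ 2 := by
            intro j hj
            have h1 : (ω:ℝ) ^ j ≠ 0 := (pow_pos hω0 j).ne'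
            have h2 : dd i j ≠ 0 := (hddpos i hi j hj).ne'
            have h3 : Sf i ≠ 0 := hSi.ne'
            simp only [hcdef]
            field_simp
          rw [Finset.sum_congr rfl hstep, ← Finset.sum_div]
          show Sf i / Sf i ^ 2 = 1 / Sf i
          rw [sq, ← div_div, div_self hSi.ne']
  have hB' : B = (∑ i ∈ Finset.range β, γ ^ i / Real.sqrt (Sf i)) ^ 2 := by
    rw [hB]
  have hsqsum_nn : 0 ≤ ∑ i ∈ Finset.range β, γ ^ i / Real.sqrt (Sf i) :=
    Finset.sum_nonneg fun i _ => div_nonneg (pow_nonneg hγ0.le i) (Real.sqrt_nonneg _)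
  have hGD : ∫⁻ x, ENNReal.ofReal (G x ^ 2 / D x) ∂μ ≤ ENNReal.ofReal B := by
    set μ' := μ.withDensity (fun x => ENNReal.ofReal (D x)⁻¹) with hμ'
    set f : ℕ → Θ → ℝ≥0∞ := fun i x => ENNReal.ofReal (γ ^ i * ν (T + 1 + i) x) with hf
    have hfmeas : ∀ i, Measurable (f i) := fun i => ((hνmeas _).const_mul _).ennreal_ofReal
    have hwd : ∀ g : Θ → ℝ≥0∞, Measurable g →
        ∫⁻ x, g x ∂μ' = ∫⁻ x, ENNReal.ofReal (D x)⁻¹ * g x ∂μ := by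
      intro g hg
      rw [hμ', lintegral_withDensity_eq_lintegral_mul μ
        (f := fun x => ENNReal.ofReal (D x)⁻¹) hDmeas.inv.ennreal_ofReal hg]
      rfl
    have hsumf : ∀ x, ∑ i ∈ Finset.range β, f i x = ENNReal.ofReal (G x) := by
      intro x
      rw [hGdef]
      rw [ENNReal.ofReal_sum_of_nonneg
        (fun i _ => mul_nonneg (pow_nonneg hγ0.le i) (hνpos _ x).le)]
    have hsummeas : Measurable fun x => (∑ i ∈ Finset.range β, f i x) ^ (2:ℝ) :=
      (Finset.measurable_sum _ fun i _ => hfmeas i).pow_const _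
    have hA : ∫⁻ x, ENNReal.ofReal (G x ^ 2 / D x) ∂μ
        = ∫⁻ x, (∑ i ∈ Finset.range β, f i x) ^ (2:ℝ) ∂μ' := by
      rw [hwd _ hsummeas]
      refine lintegral_congr fun x => ?_
      rw [hsumf x]
      rw [ENNReal.ofReal_rpow_of_nonneg (hGnn x) (by norm_num : (0:ℝ) ≤ 2)]
      rw [← ENNReal.ofReal_mul (inv_nonneg.2 (hDpos x).le)]
      congr 1
      rw [Real.rpow_two]
      rw [inv_mul_eq_div]
    have hBi : ∀ i ∈ Finset.range β,
        (∫⁻ x, f i x ^ (2:ℝ) ∂μ') ^ (2:ℝ)⁻¹ ≤ ENNReal.ofReal (γ ^ i / Real.sqrt (Sf i)) := by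
      intro i hi
      have hSi : 0 < Sf i := hSpos i hi
      have hfn : ∀ x, 0 ≤ γ ^ i * ν (T + 1 + i) x :=
        fun x => mul_nonneg (pow_nonneg hγ0.le i) (hνpos _ x).le
      have h1 : ∫⁻ x, f i x ^ (2:ℝ) ∂μ' ≤ ENNReal.ofReal ((γ ^ i / Real.sqrt (Sf i)) ^ 2) := by
        rw [hwd _ ((hfmeas i).pow_const _)]
        have hpw : ∀ x, ENNReal.ofReal (D x)⁻¹ * f i x ^ (2:ℝ)
            = ENNReal.ofReal ((γ ^ i) ^ 2) *
              ENNReal.ofReal (ν (T + 1 + i) x ^ 2 / D x) := by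
          intro x
          rw [hf]
          rw [ENNReal.ofReal_rpow_of_nonneg (hfn x) (by norm_num : (0:ℝ) ≤ 2)]
          rw [← ENNReal.ofReal_mul (inv_nonneg.2 (hDpos x).le),
            ← ENNReal.ofReal_mul (sq_nonneg _)]
          congr 1
          rw [Real.rpow_two]
          have hDx : D x ≠ 0 := (hDpos x).ne'
          field_simp
        calc ∫⁻ x, ENNReal.ofReal (D x)⁻¹ * f i x ^ (2:ℝ) ∂μ
            = ∫⁻ x, ENNReal.ofReal ((γ ^ i) ^ 2) *
                ENNReal.ofReal (ν (T + 1 + i) x ^ 2 / D x) ∂μ := lintegral_congr hpw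
          _ = ENNReal.ofReal ((γ ^ i) ^ 2) *
                ∫⁻ x, ENNReal.ofReal (ν (T + 1 + i) x ^ 2 / D x) ∂μ :=
              lintegral_const_mul _ (((hνmeas _).pow_const 2).div hDmeas).ennreal_ofReal
          _ ≤ ENNReal.ofReal ((γ ^ i) ^ 2) * ENNReal.ofReal (1 / Sf i) :=
              mul_le_mul_right (hK i hi) _
          _ = ENNReal.ofReal ((γ ^ i / Real.sqrt (Sf i)) ^ 2) := by
              rw [← ENNReal.ofReal_mul (sq_nonneg _)]
              congr 1
              rw [div_pow, Real.sq_sqrt hSi.le]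
              ring
      calc (∫⁻ x, f i x ^ (2:ℝ) ∂μ') ^ (2:ℝ)⁻¹
          ≤ (ENNReal.ofReal ((γ ^ i / Real.sqrt (Sf i)) ^ 2)) ^ (2:ℝ)⁻¹ :=
            ENNReal.rpow_le_rpow h1 (by norm_num)
        _ = ENNReal.ofReal (γ ^ i / Real.sqrt (Sf i)) := by
            rw [ENNReal.ofReal_rpow_of_nonneg (sq_nonneg _) (by norm_num : (0:ℝ) ≤ 2⁻¹)]
            congr 1
            have hnn : 0 ≤ γ ^ i / Real.sqrt (Sf i) :=
              div_nonneg (pow_nonneg hγ0.le i) (Real.sqrt_nonneg _)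
            rw [show ((2:ℝ)⁻¹) = (((2:ℕ):ℝ))⁻¹ by norm_num]
            exact Real.pow_rpow_inv_natCast hnn (by norm_num)
    have hmink := my_minkowski μ' (Finset.range β) f hfmeas
    have h2 : (∫⁻ x, (∑ i ∈ Finset.range β, f i x) ^ (2:ℝ) ∂μ') ^ (2:ℝ)⁻¹
        ≤ ENNReal.ofReal (∑ i ∈ Finset.range β, γ ^ i / Real.sqrt (Sf i)) := by
      refine hmink.trans ?_
      rw [ENNReal.ofReal_sum_of_nonneg
        (fun i _ => div_nonneg (pow_nonneg hγ0.le i) (Real.sqrt_nonneg _))]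
      exact Finset.sum_le_sum hBi
    have h3 : ∫⁻ x, (∑ i ∈ Finset.range β, f i x) ^ (2:ℝ) ∂μ'
        ≤ ENNReal.ofReal B := by
      have h4 := ENNReal.rpow_le_rpow h2 (by norm_num : (0:ℝ) ≤ 2)
      rw [ENNReal.rpow_inv_rpow (by norm_num : (2:ℝ) ≠ 0)] at h4
      rw [ENNReal.ofReal_rpow_of_nonneg hsqsum_nn (by norm_num : (0:ℝ) ≤ 2)] at h4
      rw [Real.rpow_two] at h4
      rw [hB']
      exact h4
    rw [hA]
    exact h3
  have hCωsum : Cω = ∑ j ∈ Finset.range α, ω ^ j := by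
    by_cases h : ω < 1
    · rw [hCω, if_pos h, geom_sum_eq h.ne]
      have h1 : (1:ℝ) - ω ≠ 0 := by intro hh; rw [sub_eq_zero] at hh; exact h.ne hh.symm
      have h2 : ω - 1 ≠ 0 := fun hh => h1 (by linarith [sub_eq_zero.1 hh])
      field_simp
      ring
    · have hh : ω = 1 := le_antisymm hω1 (not_lt.1 h)
      subst hh
      rw [hCω, if_neg h]
      simp
  have hCγsum : Cγα = ∑ i ∈ Finset.range α, γ ^ i := by
    by_cases h : γ < 1
    · rw [hCγα, if_pos h, geom_sum_eq h.ne]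
      have h1 : (1:ℝ) - γ ≠ 0 := by intro hh; rw [sub_eq_zero] at hh; exact h.ne hh.symm
      have h2 : γ - 1 ≠ 0 := fun hh => h1 (by linarith [sub_eq_zero.1 hh])
      field_simp
      ring
    · have hh : γ = 1 := le_antisymm hγ1 (not_lt.1 h)
      subst hh
      rw [hCγα, if_neg h]
      simp
  have hCω1 : 1 ≤ Cω := by
    rw [hCωsum]
    calc (1:ℝ) = ω ^ 0 := (pow_zero ω).symm
      _ ≤ ∑ j ∈ Finset.range α, ω ^ j :=
        Finset.single_le_sum (f := fun j => ω ^ j) (fun j _ => pow_nonneg hω0.le j)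
          (Finset.mem_range.2 hα)
  have hCωpos : 0 < Cω := lt_of_lt_of_le one_pos hCω1
  have hCγpos : 0 < Cγα := by
    rw [hCγsum]; exact Finset.sum_pos (fun i _ => pow_pos hγ0 i) hαne
  have hB0 : 0 ≤ B := by rw [hB']; exact sq_nonneg _
  have hRmax : 0 ≤ Rmax := by
    obtain ⟨x, hx⟩ := (hr 0 (Finset.mem_range.2 hα)).exists
    exact (abs_nonneg _).trans hx
  have hJeq : ∀ ωe, Jbar ωe =
      (1 / Cω) * (∑ j ∈ Finset.range α, ω ^ j * γ ^ (α - 1 - j) * rt j ωe)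
      + ∑ j ∈ Finset.range α, ω ^ j * rt j ωe * w (θt j ωe) := fun ωe => hJbar ωe
  have hJmeas : Measurable Jbar := by
    have heq : Jbar = fun ωe =>
        (1 / Cω) * (∑ j ∈ Finset.range α, ω ^ j * γ ^ (α - 1 - j) * rt j ωe)
        + ∑ j ∈ Finset.range α, ω ^ j * rt j ωe * w (θt j ωe) := funext hJeq
    rw [heq]
    refine Measurable.add ?_ ?_
    · exact (Finset.measurable_sum _ fun j _ => (hrmeas j).const_mul _).const_mul _
    · exact Finset.measurable_sum _ fun j _ =>
        ((hrmeas j).const_mul _).mul (hwmeas.comp (hθmeas j))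
  set W : Ω → ℝ := fun ωe => ∑ j ∈ Finset.range α, ω ^ j * w (θt j ωe) with hWdef
  have hWmeas : Measurable W :=
    Finset.measurable_sum _ fun j _ => (hwmeas.comp (hθmeas j)).const_mul _
  have hWnn : ∀ ωe, 0 ≤ W ωe := fun ωe =>
    Finset.sum_nonneg fun j _ => mul_nonneg (pow_nonneg hω0.le j) (hwnn _)
  have hrr : ∀ᵐ ωe ∂P, ∀ j, j ∈ Finset.range α → |rt j ωe| ≤ Rmax := by
    rw [MeasureTheory.ae_all_iff]
    intro j
    by_cases hj : j ∈ Finset.range α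
    · exact (hr j hj).mono fun ωe h _ => h
    · exact Filter.Eventually.of_forall fun ωe h => absurd h hj
  have haebound : ∀ᵐ ωe ∂P,
      Jbar ωe ^ 2 ≤ 2 * (Rmax * Cγα / Cω) ^ 2 + 2 * Rmax ^ 2 * W ωe ^ 2 := by
    filter_upwards [hrr] with ωe hωe
    set A := (1 / Cω) * (∑ j ∈ Finset.range α, ω ^ j * γ ^ (α - 1 - j) * rt j ωe) with hAdef
    set Bt := ∑ j ∈ Finset.range α, ω ^ j * rt j ωe * w (θt j ωe) with hBtdef
    have hA1 : |A| ≤ Rmax * Cγα / Cω := by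
      rw [hAdef, abs_mul, abs_of_nonneg (by positivity : (0:ℝ) ≤ 1 / Cω)]
      have h1 : |∑ j ∈ Finset.range α, ω ^ j * γ ^ (α - 1 - j) * rt j ωe|
          ≤ ∑ j ∈ Finset.range α, γ ^ (α - 1 - j) * Rmax := by
        refine (Finset.abs_sum_le_sum_abs _ _).trans (Finset.sum_le_sum fun j hj => ?_)
        rw [abs_mul, abs_mul, abs_of_nonneg (pow_nonneg hω0.le j),
          abs_of_nonneg (pow_nonneg hγ0.le _)]
        have hj1 : ω ^ j ≤ 1 := pow_le_one₀ hω0.le hω1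
        have hj2 := hωe j hj
        have hj3 : (0:ℝ) ≤ γ ^ (α - 1 - j) := pow_nonneg hγ0.le _
        nlinarith [mul_le_mul_of_nonneg_left hj2 hj3,
          mul_le_mul_of_nonneg_right hj1 (mul_nonneg hj3 (abs_nonneg (rt j ωe)))]
      have h2 : ∑ j ∈ Finset.range α, γ ^ (α - 1 - j) * Rmax = Rmax * Cγα := by
        rw [← Finset.sum_mul, Finset.sum_range_reflect (fun k => γ ^ k) α, ← hCγsum]
        ring
      calc (1 / Cω) * |∑ j ∈ Finset.range α, ω ^ j * γ ^ (α - 1 - j) * rt j ωe|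
          ≤ (1 / Cω) * (Rmax * Cγα) := by
            refine mul_le_mul_of_nonneg_left ?_ (by positivity)
            rw [← h2]; exact h1
        _ = Rmax * Cγα / Cω := by ring
    have hBt1 : |Bt| ≤ Rmax * W ωe := by
      rw [hBtdef]
      refine (Finset.abs_sum_le_sum_abs _ _).trans ?_
      rw [hWdef, Finset.mul_sum]
      refine Finset.sum_le_sum fun j hj => ?_
      rw [abs_mul, abs_mul, abs_of_nonneg (pow_nonneg hω0.le j), abs_of_nonneg (hwnn _)]
      have hj2 := hωe j hj
      have hj3 := hwnn (θt j ωe)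
      nlinarith [mul_le_mul_of_nonneg_right hj2 (mul_nonneg (pow_nonneg hω0.le j) hj3)]
    have hJ : Jbar ωe = A + Bt := hJeq ωe
    rw [hJ]
    have hA2 : A ^ 2 ≤ (Rmax * Cγα / Cω) ^ 2 := by
      rw [← sq_abs]; exact pow_le_pow_left₀ (abs_nonneg _) hA1 2
    have hBt2 : Bt ^ 2 ≤ Rmax ^ 2 * W ωe ^ 2 := by
      rw [← sq_abs, ← mul_pow]; exact pow_le_pow_left₀ (abs_nonneg _) hBt1 2
    have h5 := sq_add_le_aux hA2 hBt2
    clear_value A Bt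
    linarith
  have hwsqmeas : Measurable fun x => ENNReal.ofReal (w x ^ 2) :=
    (hwmeas.pow_const 2).ennreal_ofReal
  have hstep3 : ∫⁻ ωe, ENNReal.ofReal (∑ j ∈ Finset.range α, ω ^ j * w (θt j ωe) ^ 2) ∂P
      ≤ ENNReal.ofReal B := by
    have e1 : ∀ ωe : Ω, ENNReal.ofReal (∑ j ∈ Finset.range α, ω ^ j * w (θt j ωe) ^ 2)
        = ∑ j ∈ Finset.range α, ENNReal.ofReal (ω ^ j * w (θt j ωe) ^ 2) := fun ωe =>
      ENNReal.ofReal_sum_of_nonneg fun j _ => mul_nonneg (pow_nonneg hω0.le j) (sq_nonneg _)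
    calc ∫⁻ ωe, ENNReal.ofReal (∑ j ∈ Finset.range α, ω ^ j * w (θt j ωe) ^ 2) ∂P
        = ∑ j ∈ Finset.range α, ∫⁻ ωe, ENNReal.ofReal (ω ^ j * w (θt j ωe) ^ 2) ∂P := by
          rw [lintegral_congr e1]
          exact lintegral_finset_sum _ fun j hj =>
            (((hwmeas.comp (hθmeas j)).pow_const 2).const_mul _).ennreal_ofReal
      _ = ∑ j ∈ Finset.range α, ∫⁻ x, ENNReal.ofReal (ω ^ j) *
            (ENNReal.ofReal (ν (T - j) x) * ENNReal.ofReal (w x ^ 2)) ∂μ := by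
          refine Finset.sum_congr rfl fun j hj => ?_
          have e2 : ∀ ωe : Ω, ENNReal.ofReal (ω ^ j * w (θt j ωe) ^ 2)
              = ENNReal.ofReal (ω ^ j) * ENNReal.ofReal (w (θt j ωe) ^ 2) := fun ωe =>
            ENNReal.ofReal_mul (pow_nonneg hω0.le j)
          rw [lintegral_congr e2, lintegral_const_mul (f := fun ωe =>
              ENNReal.ofReal (w (θt j ωe) ^ 2)) _ (hwsqmeas.comp (hθmeas j)),
            hMap j hj _ hwsqmeas,
            ← lintegral_const_mul (f := fun x => ENNReal.ofReal (ν (T - j) x) *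
              ENNReal.ofReal (w x ^ 2)) _ ((hνmeas _).ennreal_ofReal.mul hwsqmeas)]
      _ = ∫⁻ x, ∑ j ∈ Finset.range α, ENNReal.ofReal (ω ^ j) *
            (ENNReal.ofReal (ν (T - j) x) * ENNReal.ofReal (w x ^ 2)) ∂μ :=
          (lintegral_finset_sum _ fun j hj =>
            (((hνmeas _).ennreal_ofReal.mul hwsqmeas)).const_mul _).symm
      _ = ∫⁻ x, ENNReal.ofReal (G x ^ 2 / D x) ∂μ := by
          refine lintegral_congr fun x => ?_
          have e3 : ∀ j ∈ Finset.range α, ENNReal.ofReal (ω ^ j) *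
              (ENNReal.ofReal (ν (T - j) x) * ENNReal.ofReal (w x ^ 2))
              = ENNReal.ofReal (ω ^ j * ν (T - j) x * w x ^ 2) := by
            intro j hj
            rw [← ENNReal.ofReal_mul (hνpos _ x).le,
              ← ENNReal.ofReal_mul (pow_nonneg hω0.le j), mul_assoc]
          have e4 : (∑ j ∈ Finset.range α, ω ^ j * ν (T - j) x) * w x ^ 2
              = G x ^ 2 / D x := by
            have hDx : D x ≠ 0 := (hDpos x).ne'
            show D x * (G x / D x) ^ 2 = G x ^ 2 / D x
            rw [div_pow]
            field_simp
          rw [Finset.sum_congr rfl e3, ← ENNReal.ofReal_sum_of_nonneg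
            (fun j _ => mul_nonneg (mul_nonneg (pow_nonneg hω0.le j) (hνpos _ x).le)
              (sq_nonneg _)),
            ← Finset.sum_mul, e4]
      _ ≤ ENNReal.ofReal B := hGD
  have hWsq : ∀ ωe, W ωe ^ 2 ≤ Cω * ∑ j ∈ Finset.range α, ω ^ j * w (θt j ωe) ^ 2 := by
    intro ωe
    rw [hWdef, hCωsum]
    exact cs_weights (Finset.range α) (fun j => ω ^ j) (fun j => w (θt j ωe))
      (fun j _ => pow_nonneg hω0.le j)
  have hsummeas2 : Measurable fun ωe =>
      ENNReal.ofReal (∑ j ∈ Finset.range α, ω ^ j * w (θt j ωe) ^ 2) :=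
    (Finset.measurable_sum _ fun j _ =>
      ((hwmeas.comp (hθmeas j)).pow_const 2).const_mul _).ennreal_ofReal
  have hWbound : ∫⁻ ωe, ENNReal.ofReal (W ωe ^ 2) ∂P
      ≤ ENNReal.ofReal Cω * ENNReal.ofReal B := by
    calc ∫⁻ ωe, ENNReal.ofReal (W ωe ^ 2) ∂P
        ≤ ∫⁻ ωe, ENNReal.ofReal (Cω * ∑ j ∈ Finset.range α, ω ^ j * w (θt j ωe) ^ 2) ∂P :=
          lintegral_mono fun ωe => ENNReal.ofReal_le_ofReal (hWsq ωe)
      _ = ENNReal.ofReal Cω *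
            ∫⁻ ωe, ENNReal.ofReal (∑ j ∈ Finset.range α, ω ^ j * w (θt j ωe) ^ 2) ∂P := by
          rw [← lintegral_const_mul _ hsummeas2]
          exact lintegral_congr fun ωe => ENNReal.ofReal_mul hCωpos.le
      _ ≤ ENNReal.ofReal Cω * ENNReal.ofReal B := mul_le_mul_right hstep3 _
  set V := 2 * Rmax ^ 2 * (Cγα ^ 2 + Cω * B) with hVdef
  have hVnn : 0 ≤ V := by
    have h1 : 0 ≤ Cγα ^ 2 + Cω * B := add_nonneg (sq_nonneg _) (mul_nonneg hCωpos.le hB0)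
    have h2 : (0:ℝ) ≤ 2 * Rmax ^ 2 := by positivity
    exact mul_nonneg h2 h1
  have hL : ∫⁻ ωe, ENNReal.ofReal (Jbar ωe ^ 2) ∂P ≤ ENNReal.ofReal V := by
    calc ∫⁻ ωe, ENNReal.ofReal (Jbar ωe ^ 2) ∂P
        ≤ ∫⁻ ωe, ENNReal.ofReal (2 * (Rmax * Cγα / Cω) ^ 2 + 2 * Rmax ^ 2 * W ωe ^ 2) ∂P :=
          lintegral_mono_ae (haebound.mono fun ωe h => ENNReal.ofReal_le_ofReal h)
      _ = ∫⁻ ωe, (ENNReal.ofReal (2 * (Rmax * Cγα / Cω) ^ 2) +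
            ENNReal.ofReal (2 * Rmax ^ 2) * ENNReal.ofReal (W ωe ^ 2)) ∂P := by
          refine lintegral_congr fun ωe => ?_
          rw [← ENNReal.ofReal_mul (by positivity : (0:ℝ) ≤ 2 * Rmax ^ 2),
            ← ENNReal.ofReal_add (by positivity) (by positivity)]
      _ = ENNReal.ofReal (2 * (Rmax * Cγα / Cω) ^ 2) +
            ENNReal.ofReal (2 * Rmax ^ 2) * ∫⁻ ωe, ENNReal.ofReal (W ωe ^ 2) ∂P := by
          rw [lintegral_add_left measurable_const, lintegral_const, measure_univ, mul_one,
            lintegral_const_mul _ ((hWmeas.pow_const 2).ennreal_ofReal)]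
      _ ≤ ENNReal.ofReal (2 * (Rmax * Cγα / Cω) ^ 2) +
            ENNReal.ofReal (2 * Rmax ^ 2) * (ENNReal.ofReal Cω * ENNReal.ofReal B) :=
          add_le_add le_rfl (mul_le_mul_right hWbound _)
      _ ≤ ENNReal.ofReal V := by
          rw [← ENNReal.ofReal_mul hCωpos.le, ← ENNReal.ofReal_mul
            (by positivity : (0:ℝ) ≤ 2 * Rmax ^ 2),
            ← ENNReal.ofReal_add (by positivity)
              (mul_nonneg (by positivity) (mul_nonneg hCωpos.le hB0))]
          refine ENNReal.ofReal_le_ofReal ?_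
          have h1 : (Rmax * Cγα / Cω) ^ 2 ≤ Rmax ^ 2 * Cγα ^ 2 := by
            rw [div_pow, ← mul_pow]
            exact div_le_self (sq_nonneg _) (one_le_pow₀ hCω1)
          rw [hVdef]
          nlinarith [h1]
  have hJsqnn : (0:Ω → ℝ) ≤ᵐ[P] fun ωe => Jbar ωe ^ 2 :=
    Filter.Eventually.of_forall fun ωe => by simpa using sq_nonneg (Jbar ωe)
  have hJsq_int : Integrable (fun ωe => Jbar ωe ^ 2) P := by
    refine ⟨(hJmeas.pow_const 2).aestronglyMeasurable, ?_⟩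
    rw [hasFiniteIntegral_iff_ofReal hJsqnn]
    exact lt_of_le_of_lt hL ENNReal.ofReal_lt_top
  have hJ2 : MemLp Jbar 2 P := by
    rw [memLp_two_iff_integrable_sq hJmeas.aestronglyMeasurable]
    exact hJsq_int
  have hvar : variance Jbar P ≤ V := by
    have h1 := variance_le_expectation_sq (μ := P) hJmeas.aestronglyMeasurable
    have h3 : ∫ ωe, Jbar ωe ^ 2 ∂P ≤ V := by
      rw [integral_eq_lintegral_of_nonneg_ae hJsqnn (hJmeas.pow_const 2).aestronglyMeasurable]
      exact ENNReal.toReal_le_of_le_ofReal hVnn hL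
    have h2 : (∫ ωe, (Jbar ^ 2) ωe ∂P) = ∫ ωe, Jbar ωe ^ 2 ∂P := rfl
    calc variance Jbar P ≤ ∫ ωe, (Jbar ^ 2) ωe ∂P := h1
      _ = ∫ ωe, Jbar ωe ^ 2 ∂P := h2
      _ ≤ V := h3
  -- rewrite the constant in the goal
  have hargeq : ((1 - δ) / δ) * 2 * Rmax ^ 2 * (Cγα ^ 2 + Cω * B) = ((1 - δ) / δ) * V := by
    rw [hVdef]; ring
  rw [hargeq]
  set cc := Real.sqrt (((1 - δ) / δ) * V) with hccdef
  have hfrac : 0 < (1 - δ) / δ := div_pos (by linarith) hδ0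
  rcases eq_or_lt_of_le hVnn with hV0 | hVpos
  · -- degenerate case V = 0
    have hL0 : ∫⁻ ωe, ENNReal.ofReal (Jbar ωe ^ 2) ∂P = 0 := by
      refine le_antisymm ?_ (by positivity)
      calc ∫⁻ ωe, ENNReal.ofReal (Jbar ωe ^ 2) ∂P ≤ ENNReal.ofReal V := hL
        _ = 0 := by rw [← hV0]; simp
    have hJ0 : ∀ᵐ ωe ∂P, Jbar ωe = 0 := by
      have h := (lintegral_eq_zero_iff ((hJmeas.pow_const 2).ennreal_ofReal)).1 hL0
      filter_upwards [h] with ωe hh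
      have h2 : Jbar ωe ^ 2 ≤ 0 := ENNReal.ofReal_eq_zero.1 hh
      nlinarith [sq_nonneg (Jbar ωe)]
    have hint0 : ∫ ωe, Jbar ωe ∂P = 0 := by
      rw [integral_congr_ae (g := fun _ => (0:ℝ)) hJ0]
      simp
    have hcc0 : cc = 0 := by rw [hccdef, ← hV0, mul_zero, Real.sqrt_zero]
    have hmem : ∀ᵐ ωe ∂P, ωe ∈ {ωe | (∫ ωe', Jbar ωe' ∂P) ≥ Jbar ωe - cc} := by
      filter_upwards [hJ0] with ωe h
      simp only [Set.mem_setOf_eq, h, hint0, hcc0, sub_zero, ge_iff_le, le_refl]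
    calc ENNReal.ofReal (1 - δ) ≤ 1 := ENNReal.ofReal_le_one.2 (by linarith)
      _ = P {ωe | (∫ ωe', Jbar ωe' ∂P) ≥ Jbar ωe - cc} := by
          rw [← measure_univ (μ := P)]
          exact (measure_congr (Filter.eventuallyEq_univ.2 hmem)).symm
  · -- main case V > 0
    have hccsq : cc ^ 2 = ((1 - δ) / δ) * V := Real.sq_sqrt (by positivity)
    have hccpos : 0 < cc := Real.sqrt_pos.2 (by positivity)
    have hcant := my_cantelli P hJ2 hccpos
    have hratio : variance Jbar P / (variance Jbar P + cc ^ 2) ≤ δ := by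
      have hσnn := variance_nonneg Jbar P
      rw [div_le_iff₀ (by positivity)]
      have hδc : δ * cc ^ 2 = (1 - δ) * V := by
        rw [hccsq]; field_simp
      nlinarith [hvar, hδc, hσnn]
    have hcompl : P {ωe | cc < Jbar ωe - ∫ x, Jbar x ∂P} ≤ ENNReal.ofReal δ :=
      hcant.trans (ENNReal.ofReal_le_ofReal hratio)
    have hsetc : {ωe | (∫ ωe', Jbar ωe' ∂P) ≥ Jbar ωe - cc}ᶜ
        = {ωe | cc < Jbar ωe - ∫ x, Jbar x ∂P} := by
      ext ωe
      simp only [Set.mem_compl_iff, Set.mem_setOf_eq, ge_iff_le, not_le]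
      constructor <;> intro h <;> linarith
    have hms : MeasurableSet {ωe | (∫ ωe', Jbar ωe' ∂P) ≥ Jbar ωe - cc} :=
      measurableSet_le (hJmeas.sub measurable_const) measurable_const
    have h1 : P {ωe | (∫ ωe', Jbar ωe' ∂P) ≥ Jbar ωe - cc}
        + P {ωe | (∫ ωe', Jbar ωe' ∂P) ≥ Jbar ωe - cc}ᶜ = 1 := by
      rw [measure_add_measure_compl hms, measure_univ]
    have h2 : (1:ℝ≥0∞) ≤ P {ωe | (∫ ωe', Jbar ωe' ∂P) ≥ Jbar ωe - cc} + ENNReal.ofReal δ := by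
      rw [← h1]
      refine add_le_add le_rfl ?_
      rw [hsetc]
      exact hcompl
    have h3 : ENNReal.ofReal (1 - δ) + ENNReal.ofReal δ
        ≤ P {ωe | (∫ ωe', Jbar ωe' ∂P) ≥ Jbar ωe - cc} + ENNReal.ofReal δ := by
      rw [← ENNReal.ofReal_add (by linarith) hδ0.le]
      calc ENNReal.ofReal (1 - δ + δ) = 1 := by norm_num
        _ ≤ _ := h2
    exact (ENNReal.add_le_add_iff_right ENNReal.ofReal_ne_top).1 h3
end

section
/- Rényi divergence of a mixture against a single distribution (power-mean bound): for α > 1, d_α( Σ_{i=1}^{L} ζ_i p_i ‖ q ) ≤ ( Σ_{i=1}^{L} ζ_i · d_α(p_i ‖ q)^{(α−1)/α} )^{α/(α−1)}. -/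
open MeasureTheory Finset

/-- Rényi divergence of a mixture against a single distribution
(power-mean bound). -/
theorem renyi_mixture_vs_single
    {Θ : Type*} [MeasurableSpace Θ] (μ : Measure Θ)
    (L : ℕ) (hL : 0 < L)
    (p : Fin L → Θ → ℝ) (q : Θ → ℝ)
    (hpmeas : ∀ i, Measurable (p i)) (hqmeas : Measurable q)
    (hpnn : ∀ i θ, 0 ≤ p i θ) (hqpos : ∀ θ, 0 < q θ)
    (hpint : ∀ i, ∫ θ, p i θ ∂μ = 1) (hqint : ∫ θ, q θ ∂μ = 1)
    (ζ : Fin L → ℝ) (hζ : ∀ i, ζ i ∈ Set.Icc (0 : ℝ) 1) (hζsum : ∑ i, ζ i = 1)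
    (a : ℝ) (ha : 1 < a)
    (hfin : ∀ i, Integrable (fun θ => p i θ ^ a * q θ ^ (1 - a)) μ) :
    (∫ θ, (∑ i, ζ i * p i θ) ^ a * q θ ^ (1 - a) ∂μ) ^ (1 / (a - 1))
      ≤ (∑ i, ζ i *
          ((∫ θ, p i θ ^ a * q θ ^ (1 - a) ∂μ) ^ (1 / (a - 1))) ^ ((a - 1) / a))
        ^ (a / (a - 1)) := by
  have ha0 : (0:ℝ) < a := lt_trans one_pos ha
  have ha0' : a ≠ 0 := ne_of_gt ha0
  have ha1 : (0:ℝ) < a - 1 := sub_pos.mpr ha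
  set c : ℝ := (1 - a) / a with hc
  have hca : c * a = 1 - a := by rw [hc]; field_simp
  -- key pointwise identity
  have key : ∀ (θ : Θ) (x : ℝ), 0 ≤ x →
      x ^ a * q θ ^ (1 - a) = (x * q θ ^ c) ^ a := by
    intro θ x hx
    rw [Real.mul_rpow hx (Real.rpow_nonneg (hqpos θ).le c),
      ← Real.rpow_mul (hqpos θ).le, hca]
  have hBnn : ∀ i, 0 ≤ ∫ θ, p i θ ^ a * q θ ^ (1 - a) ∂μ := fun i =>
    integral_nonneg fun θ => mul_nonneg (Real.rpow_nonneg (hpnn i θ) a)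
      (Real.rpow_nonneg (hqpos θ).le _)
  have hAnn : 0 ≤ ∫ θ, (∑ i, ζ i * p i θ) ^ a * q θ ^ (1 - a) ∂μ :=
    integral_nonneg fun θ => mul_nonneg
      (Real.rpow_nonneg (Finset.sum_nonneg fun i _ =>
        mul_nonneg (hζ i).1 (hpnn i θ)) a)
      (Real.rpow_nonneg (hqpos θ).le _)
  have hSnn : 0 ≤ ∑ i, ζ i * (∫ θ, p i θ ^ a * q θ ^ (1 - a) ∂μ) ^ (1/a) :=
    Finset.sum_nonneg fun i _ =>
      mul_nonneg (hζ i).1 (Real.rpow_nonneg (hBnn i) _)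
  have main : (∫ θ, (∑ i, ζ i * p i θ) ^ a * q θ ^ (1 - a) ∂μ) ^ (1/a)
      ≤ ∑ i, ζ i * (∫ θ, p i θ ^ a * q θ ^ (1 - a) ∂μ) ^ (1/a) := by
    by_cases hInt : Integrable (fun θ => (∑ i, ζ i * p i θ) ^ a * q θ ^ (1 - a)) μ
    · -- Minkowski via eLpNorm
      set pa : ENNReal := ENNReal.ofReal a with hpa
      have hpa0 : pa ≠ 0 := by
        simp [hpa, ENNReal.ofReal_eq_zero, not_le, ha0]
      have hpat : pa ≠ ⊤ := ENNReal.ofReal_ne_top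
      have hpa1 : 1 ≤ pa := by
        rw [hpa, ← ENNReal.ofReal_one]
        exact ENNReal.ofReal_le_ofReal ha.le
      have hpaR : pa.toReal = a := ENNReal.toReal_ofReal ha0.le
      -- general computation of eLpNorm for nonneg functions
      have norm_eq : ∀ (h : Θ → ℝ), (∀ θ, 0 ≤ h θ) →
          Integrable (fun θ => h θ ^ a) μ →
          eLpNorm h pa μ = ENNReal.ofReal ((∫ θ, h θ ^ a ∂μ) ^ (1/a)) := by
        intro h hnn hint
        rw [eLpNorm_eq_lintegral_rpow_enorm_toReal hpa0 hpat, hpaR]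
        have h1 : ∀ θ, ((‖h θ‖ₑ : ENNReal)) ^ a = ENNReal.ofReal (h θ ^ a) := by
          intro θ
          rw [Real.enorm_eq_ofReal (hnn θ), ENNReal.ofReal_rpow_of_nonneg (hnn θ) ha0.le]
        simp_rw [h1]
        rw [← ofReal_integral_eq_lintegral_ofReal hint
          (Filter.Eventually.of_forall fun θ => Real.rpow_nonneg (hnn θ) a),
          ENNReal.ofReal_rpow_of_nonneg
            (integral_nonneg fun θ => Real.rpow_nonneg (hnn θ) a) (by positivity)]
      set f : Fin L → Θ → ℝ := fun i θ => p i θ * q θ ^ c with hf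
      have hfnn : ∀ i θ, 0 ≤ f i θ := fun i θ =>
        mul_nonneg (hpnn i θ) (Real.rpow_nonneg (hqpos θ).le c)
      have hfmeas : ∀ i, Measurable (f i) := by
        intro i
        have := hpmeas i
        fun_prop
      have hfa : ∀ i, (fun θ => f i θ ^ a) = fun θ => p i θ ^ a * q θ ^ (1 - a) := by
        intro i; funext θ; rw [key θ _ (hpnn i θ)]
      have hg_eq : (∑ i, ζ i • f i) = fun θ => (∑ i, ζ i * p i θ) * q θ ^ c := by
        funext θ
        simp [hf, Finset.sum_apply, Finset.sum_mul, mul_assoc]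
      have hgnn : ∀ θ, 0 ≤ (∑ i, ζ i * p i θ) * q θ ^ c := fun θ =>
        mul_nonneg (Finset.sum_nonneg fun i _ => mul_nonneg (hζ i).1 (hpnn i θ))
          (Real.rpow_nonneg (hqpos θ).le c)
      have hga : (fun θ => ((∑ i, ζ i * p i θ) * q θ ^ c) ^ a)
          = fun θ => (∑ i, ζ i * p i θ) ^ a * q θ ^ (1 - a) := by
        funext θ
        rw [key θ _ (Finset.sum_nonneg fun i _ => mul_nonneg (hζ i).1 (hpnn i θ))]
      -- triangle inequality
      have htri : eLpNorm (∑ i, ζ i • f i) pa μ ≤ ∑ i, eLpNorm (ζ i • f i) pa μ :=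
        eLpNorm_sum_le (fun i _ => ((hfmeas i).aestronglyMeasurable.const_smul (ζ i))) hpa1
      have hleft : eLpNorm (∑ i, ζ i • f i) pa μ
          = ENNReal.ofReal ((∫ θ, (∑ i, ζ i * p i θ) ^ a * q θ ^ (1 - a) ∂μ) ^ (1/a)) := by
        rw [hg_eq, norm_eq _ hgnn (by rw [hga]; exact hInt)]
        congr 2
        rw [hga]
      have hright : ∀ i, eLpNorm (ζ i • f i) pa μ
          = ENNReal.ofReal (ζ i * (∫ θ, p i θ ^ a * q θ ^ (1 - a) ∂μ) ^ (1/a)) := by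
        intro i
        rw [eLpNorm_const_smul, norm_eq _ (hfnn i) (by rw [hfa]; exact hfin i),
          Real.enorm_eq_ofReal (hζ i).1,
          ← ENNReal.ofReal_mul (hζ i).1]
        congr 3
        rw [hfa]
      rw [hleft] at htri
      simp_rw [hright] at htri
      rw [← ENNReal.ofReal_sum_of_nonneg
        (fun i _ => mul_nonneg (hζ i).1 (Real.rpow_nonneg (hBnn i) _))] at htri
      exact (ENNReal.ofReal_le_ofReal_iff hSnn).mp htri
    · rw [integral_undef hInt, Real.zero_rpow (by positivity)]
      exact hSnn
  have hrw : (∑ i, ζ i *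
        ((∫ θ, p i θ ^ a * q θ ^ (1 - a) ∂μ) ^ (1 / (a - 1))) ^ ((a - 1) / a))
      = ∑ i, ζ i * (∫ θ, p i θ ^ a * q θ ^ (1 - a) ∂μ) ^ (1/a) := by
    refine Finset.sum_congr rfl fun i _ => ?_
    rw [← Real.rpow_mul (hBnn i)]
    congr 2
    field_simp
  rw [hrw]
  calc (∫ θ, (∑ i, ζ i * p i θ) ^ a * q θ ^ (1 - a) ∂μ) ^ (1 / (a - 1))
      = ((∫ θ, (∑ i, ζ i * p i θ) ^ a * q θ ^ (1 - a) ∂μ) ^ (1/a)) ^ (a / (a - 1)) := by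
        rw [← Real.rpow_mul hAnn]
        congr 1
        field_simp
    _ ≤ _ := Real.rpow_le_rpow (Real.rpow_nonneg hAnn _) main (by positivity)
end

section
/- Two-steps ψ-first variational bound on the Rényi divergence between mixtures: for α > 1, d_α( Σ_{i=1}^{L} ζ_i p_i ‖ Σ_{j=1}^{K} μ_j q_j ) ≤ ( Σ_{i=1}^{L} ζ_i · ( Σ_{j=1}^{K} μ_j / d_α(p_i ‖ q_j) )^{-(α−1)/α} )^{α/(α−1)}. -/
open MeasureTheory Finset ENNReal

private lemma lintegral_Lp_sum_le' {α : Type*} [MeasurableSpace α] {μ : Measure α}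
    {ι : Type*} (s : Finset ι) (f : ι → α → ℝ≥0∞) (hf : ∀ i, AEMeasurable (f i) μ)
    {r : ℝ} (hr : 1 ≤ r) :
    (∫⁻ x, (∑ i ∈ s, f i x) ^ r ∂μ) ^ (1 / r) ≤ ∑ i ∈ s, (∫⁻ x, f i x ^ r ∂μ) ^ (1 / r) := by
  classical
  induction s using Finset.cons_induction with
  | empty =>
      simp only [Finset.sum_empty]
      rw [ENNReal.zero_rpow_of_pos (lt_of_lt_of_le zero_lt_one hr), lintegral_zero,
        ENNReal.zero_rpow_of_pos (one_div_pos.mpr (lt_of_lt_of_le zero_lt_one hr))]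
  | cons i s hi ih =>
      simp only [Finset.sum_cons]
      calc (∫⁻ x, (f i x + ∑ j ∈ s, f j x) ^ r ∂μ) ^ (1 / r)
          ≤ (∫⁻ x, f i x ^ r ∂μ) ^ (1 / r) + (∫⁻ x, (∑ j ∈ s, f j x) ^ r ∂μ) ^ (1 / r) :=
            ENNReal.lintegral_Lp_add_le (hf i) (Finset.aemeasurable_fun_sum s fun j _ => hf j) hr
        _ ≤ _ := add_le_add le_rfl ih

/-- Two-steps ψ-first variational bound on the Rényi divergence between
mixtures. -/
theorem renyi_mixtures_two_steps_psi_first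
    {Θ : Type*} [MeasurableSpace Θ] (μ : Measure Θ)
    (L K : ℕ) (hL : 0 < L) (hK : 0 < K)
    (p : Fin L → Θ → ℝ) (q : Fin K → Θ → ℝ)
    (hpmeas : ∀ i, Measurable (p i)) (hqmeas : ∀ j, Measurable (q j))
    (hpnn : ∀ i θ, 0 ≤ p i θ) (hqpos : ∀ j θ, 0 < q j θ)
    (hpint : ∀ i, ∫ θ, p i θ ∂μ = 1) (hqint : ∀ j, ∫ θ, q j θ ∂μ = 1)
    (ζ : Fin L → ℝ) (hζ : ∀ i, ζ i ∈ Set.Icc (0 : ℝ) 1) (hζsum : ∑ i, ζ i = 1)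
    (mw : Fin K → ℝ) (hmw : ∀ j, mw j ∈ Set.Icc (0 : ℝ) 1)
    (hmwsum : ∑ j, mw j = 1)
    (a : ℝ) (ha : 1 < a)
    (hfin : ∀ i j, Integrable (fun θ => p i θ ^ a * q j θ ^ (1 - a)) μ)
    (hpos : ∀ i j, 0 < ∫ θ, p i θ ^ a * q j θ ^ (1 - a) ∂μ) :
    (∫ θ, (∑ i, ζ i * p i θ) ^ a * (∑ j, mw j * q j θ) ^ (1 - a) ∂μ)
        ^ (1 / (a - 1))
      ≤ (∑ i, ζ i *
          (∑ j, mw j /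
            (∫ θ, p i θ ^ a * q j θ ^ (1 - a) ∂μ) ^ (1 / (a - 1)))
            ^ (-((a - 1) / a)))
        ^ (a / (a - 1)) := by
  classical
  have ha0 : (0:ℝ) < a := lt_trans one_pos ha
  have ha1 : (0:ℝ) < a - 1 := sub_pos.mpr ha
  have hane : a ≠ 0 := ne_of_gt ha0
  have h1a : (1:ℝ) - a < 0 := by linarith
  set c : Fin L → Fin K → ℝ := fun i j => ∫ θ, p i θ ^ a * q j θ ^ (1 - a) ∂μ with hc
  set A : Fin L → ℝ := fun i => ∑ j, mw j / (c i j) ^ (1 / (a - 1)) with hA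
  set M : Θ → ℝ := fun θ => ∑ j, mw j * q j θ with hMdef
  have hmw0 : ∀ j, 0 ≤ mw j := fun j => (hmw j).1
  have hζ0 : ∀ i, 0 ≤ ζ i := fun i => (hζ i).1
  obtain ⟨j0, hj0⟩ : ∃ j, 0 < mw j := by
    by_contra h; push_neg at h
    have : ∑ j, mw j ≤ 0 := Finset.sum_nonpos (fun j _ => h j)
    rw [hmwsum] at this; linarith
  have hcpos : ∀ i j, 0 < c i j := hpos
  have hMpos : ∀ θ, 0 < M θ := fun θ =>
    Finset.sum_pos' (fun j _ => mul_nonneg (hmw0 j) (hqpos j θ).le)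
      ⟨j0, Finset.mem_univ _, mul_pos hj0 (hqpos j0 θ)⟩
  have hMmeas : Measurable M := Finset.measurable_sum _ fun j _ => (hqmeas j).const_mul _
  have htnn : ∀ i j, 0 ≤ mw j / (c i j) ^ (1/(a-1)) := fun i j =>
    div_nonneg (hmw0 j) (Real.rpow_nonneg (hcpos i j).le _)
  have hApos : ∀ i, 0 < A i := fun i =>
    Finset.sum_pos' (fun j _ => htnn i j)
      ⟨j0, Finset.mem_univ _, div_pos hj0 (Real.rpow_pos_of_pos (hcpos i j0) _)⟩
  -- integrability of the per-i integrand
  have hfmeas : ∀ i, Measurable fun θ => p i θ ^ a * M θ ^ (1 - a) := by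
    intro i
    have := hpmeas i
    fun_prop
  have ha1ne : a - 1 ≠ 0 := ne_of_gt ha1
  have hfint : ∀ i, Integrable (fun θ => p i θ ^ a * M θ ^ (1 - a)) μ := by
    intro i
    refine Integrable.mono' ((hfin i j0).const_mul (mw j0 ^ (1-a)))
      ((hfmeas i).aestronglyMeasurable) (Filter.Eventually.of_forall fun θ => ?_)
    have hMb : M θ ^ (1-a) ≤ (mw j0 * q j0 θ) ^ (1-a) := by
      refine Real.rpow_le_rpow_of_nonpos (mul_pos hj0 (hqpos j0 θ)) ?_ h1a.le
      exact Finset.single_le_sum (fun j _ => mul_nonneg (hmw0 j) (hqpos j θ).le)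
        (Finset.mem_univ j0)
    have hle : p i θ ^ a * M θ ^ (1-a) ≤ mw j0 ^ (1-a) * (p i θ ^ a * q j0 θ ^ (1-a)) := by
      calc p i θ ^ a * M θ ^ (1-a) ≤ p i θ ^ a * (mw j0 * q j0 θ) ^ (1-a) :=
            mul_le_mul_of_nonneg_left hMb (Real.rpow_nonneg (hpnn i θ) _)
        _ = mw j0 ^ (1-a) * (p i θ ^ a * q j0 θ ^ (1-a)) := by
            rw [Real.mul_rpow hj0.le (hqpos j0 θ).le]; ring
    rw [Real.norm_of_nonneg (mul_nonneg (Real.rpow_nonneg (hpnn i θ) _)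
      (Real.rpow_nonneg (hMpos θ).le _))]
    exact hle
  have hInn : ∀ i, 0 ≤ ∫ θ, p i θ ^ a * M θ ^ (1 - a) ∂μ := fun i =>
    integral_nonneg fun θ => mul_nonneg (Real.rpow_nonneg (hpnn i θ) _)
      (Real.rpow_nonneg (hMpos θ).le _)
  -- Step A
  have stepA : ∀ i, (∫ θ, p i θ ^ a * M θ ^ (1 - a) ∂μ) ≤ A i ^ (1 - a) := by
    intro i
    set ψ : Fin K → ℝ := fun j => (mw j / c i j ^ (1/(a-1))) / A i with hψ
    have hψnn : ∀ j, 0 ≤ ψ j := fun j => div_nonneg (htnn i j) (hApos i).le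
    have hψsum : ∑ j, ψ j = 1 := by
      rw [← Finset.sum_div]; exact div_self (hApos i).ne'
    have hkey : ∀ θ, M θ ^ (1-a) ≤ ∑ j, ψ j ^ a * mw j ^ (1-a) * q j θ ^ (1-a) := by
      intro θ
      set X := ∑ j, ψ j ^ a * mw j ^ (1-a) * q j θ ^ (1-a) with hX
      have hXnn : 0 ≤ X := Finset.sum_nonneg fun j _ => mul_nonneg (mul_nonneg
        (Real.rpow_nonneg (hψnn j) _) (Real.rpow_nonneg (hmw0 j) _))
        (Real.rpow_nonneg (hqpos j θ).le _)
      have hpq : a.HolderConjugate (a/(a-1)) := Real.HolderConjugate.conjExponent ha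
      have holder := Real.inner_le_Lp_mul_Lq_of_nonneg Finset.univ
        (f := fun j => ψ j * (mw j * q j θ) ^ ((1-a)/a))
        (g := fun j => (mw j * q j θ) ^ ((a-1)/a)) hpq
        (fun j _ => mul_nonneg (hψnn j)
          (Real.rpow_nonneg (mul_nonneg (hmw0 j) (hqpos j θ).le) _))
        (fun j _ => Real.rpow_nonneg (mul_nonneg (hmw0 j) (hqpos j θ).le) _)
      have e1 : ∑ j, (ψ j * (mw j * q j θ) ^ ((1-a)/a)) * (mw j * q j θ) ^ ((a-1)/a) = 1 := by
        have hterm1 : ∀ j ∈ Finset.univ,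
            (ψ j * (mw j * q j θ) ^ ((1-a)/a)) * (mw j * q j θ) ^ ((a-1)/a) = ψ j := by
          intro j _
          rcases eq_or_lt_of_le (hmw0 j) with hm | hm
          · have hz : ψ j = 0 := by simp [hψ, ← hm]
            simp [hz, ← hm]
          · have hmq : 0 < mw j * q j θ := mul_pos hm (hqpos j θ)
            rw [mul_assoc, ← Real.rpow_add hmq, show (1-a)/a + (a-1)/a = 0 by ring,
              Real.rpow_zero, mul_one]
        rw [Finset.sum_congr rfl hterm1, hψsum]
      have e2 : ∑ j, (ψ j * (mw j * q j θ) ^ ((1-a)/a)) ^ a = X := by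
        refine Finset.sum_congr rfl fun j _ => ?_
        have hmq : (0:ℝ) ≤ mw j * q j θ := mul_nonneg (hmw0 j) (hqpos j θ).le
        rw [Real.mul_rpow (hψnn j) (Real.rpow_nonneg hmq _), ← Real.rpow_mul hmq,
          div_mul_cancel₀ _ hane, Real.mul_rpow (hmw0 j) (hqpos j θ).le, mul_assoc]
      have e3 : ∑ j, ((mw j * q j θ) ^ ((a-1)/a)) ^ (a/(a-1)) = M θ := by
        refine Finset.sum_congr rfl fun j _ => ?_
        have hmq : (0:ℝ) ≤ mw j * q j θ := mul_nonneg (hmw0 j) (hqpos j θ).le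
        rw [← Real.rpow_mul hmq, show (a-1)/a * (a/(a-1)) = 1 by field_simp, Real.rpow_one]
      rw [e1, e2, e3, show 1/(a/(a-1)) = (a-1)/a from one_div_div _ _] at holder
      have hMp := hMpos θ
      have h2 : M θ ^ ((1-a)/a) ≤ X ^ (1/a) := by
        have h4 := mul_le_mul_of_nonneg_right holder (Real.rpow_nonneg hMp.le ((1-a)/a))
        rwa [one_mul, mul_assoc, ← Real.rpow_add hMp, show (a-1)/a + (1-a)/a = 0 by ring,
          Real.rpow_zero, mul_one] at h4
      calc M θ ^ (1-a) = (M θ ^ ((1-a)/a)) ^ a := by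
            rw [← Real.rpow_mul hMp.le, div_mul_cancel₀ _ hane]
        _ ≤ (X ^ (1/a)) ^ a := Real.rpow_le_rpow (Real.rpow_nonneg hMp.le _) h2 ha0.le
        _ = X := by rw [← Real.rpow_mul hXnn, one_div_mul_cancel hane, Real.rpow_one]
    have hpoint : ∀ θ, p i θ ^ a * M θ ^ (1-a)
        ≤ ∑ j, (ψ j ^ a * mw j ^ (1-a)) * (p i θ ^ a * q j θ ^ (1-a)) := by
      intro θ
      have h5 := mul_le_mul_of_nonneg_left (hkey θ) (Real.rpow_nonneg (hpnn i θ) a)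
      rw [Finset.mul_sum] at h5
      exact le_trans h5 (le_of_eq (Finset.sum_congr rfl fun j _ => by ring))
    have hgint : Integrable
        (fun θ => ∑ j, (ψ j ^ a * mw j ^ (1-a)) * (p i θ ^ a * q j θ ^ (1-a))) μ :=
      integrable_finset_sum _ fun j _ => (hfin i j).const_mul _
    have hIle : (∫ θ, p i θ ^ a * M θ ^ (1-a) ∂μ)
        ≤ ∑ j, (ψ j ^ a * mw j ^ (1-a)) * c i j := by
      refine le_trans (integral_mono_of_nonneg (Filter.Eventually.of_forall fun θ =>
        mul_nonneg (Real.rpow_nonneg (hpnn i θ) _) (Real.rpow_nonneg (hMpos θ).le _))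
        hgint (Filter.Eventually.of_forall hpoint)) ?_
      rw [integral_finset_sum _ (fun j _ => (hfin i j).const_mul _)]
      exact le_of_eq (Finset.sum_congr rfl fun j _ => integral_const_mul _ _)
    refine le_trans hIle (le_of_eq ?_)
    have hterm : ∀ j, (ψ j ^ a * mw j ^ (1-a)) * c i j
        = A i ^ (-a) * (mw j / c i j ^ (1/(a-1))) := by
      intro j
      rcases eq_or_lt_of_le (hmw0 j) with hm | hm
      · simp [hψ, ← hm, Real.zero_rpow hane]
      · have hcp := hcpos i j
        have ht : mw j / c i j ^ (1/(a-1)) = mw j * c i j ^ (-(1/(a-1))) := by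
          rw [Real.rpow_neg hcp.le, div_eq_mul_inv]
        have hmm : mw j ^ a * mw j ^ (1-a) = mw j := by
          rw [← Real.rpow_add hm, show a + (1-a) = 1 by ring, Real.rpow_one]
        have hcc : c i j ^ (-(1/(a-1)) * a) * c i j = c i j ^ (-(1/(a-1))) := by
          rw [← Real.rpow_add_one hcp.ne', show -(1/(a-1)) * a + 1 = -(1/(a-1)) by
            field_simp; ring]
        simp only [hψ]
        rw [ht]
        rw [Real.div_rpow (mul_nonneg (hmw0 j) (Real.rpow_nonneg hcp.le _)) (hApos i).le,
          Real.mul_rpow (hmw0 j) (Real.rpow_nonneg hcp.le _), ← Real.rpow_mul hcp.le,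
          Real.rpow_neg (hApos i).le]
        calc mw j ^ a * c i j ^ (-(1/(a-1)) * a) / A i ^ a * mw j ^ (1-a) * c i j
            = (mw j ^ a * mw j ^ (1-a)) * (c i j ^ (-(1/(a-1)) * a) * c i j) * (A i ^ a)⁻¹ := by
              ring
          _ = mw j * c i j ^ (-(1/(a-1))) * (A i ^ a)⁻¹ := by rw [hmm, hcc]
          _ = (A i ^ a)⁻¹ * (mw j * c i j ^ (-(1/(a-1)))) := by ring
    calc ∑ j, (ψ j ^ a * mw j ^ (1-a)) * c i j
        = ∑ j, A i ^ (-a) * (mw j / c i j ^ (1/(a-1))) :=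
          Finset.sum_congr rfl fun j _ => hterm j
      _ = A i ^ (-a) * A i := by rw [← Finset.mul_sum]
      _ = A i ^ (1-a) := by
          nth_rewrite 2 [← Real.rpow_one (A i)]
          rw [← Real.rpow_add (hApos i), show -a + 1 = 1 - a by ring]
  -- Step B
  have hPnn : ∀ θ, (0:ℝ) ≤ ∑ i, ζ i * p i θ := fun θ =>
    Finset.sum_nonneg fun i _ => mul_nonneg (hζ0 i) (hpnn i θ)
  have hPmeas : Measurable fun θ => ∑ i, ζ i * p i θ :=
    Finset.measurable_sum _ fun i _ => (hpmeas i).const_mul _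
  have hJmeas : Measurable fun θ => (∑ i, ζ i * p i θ) ^ a * M θ ^ (1 - a) := by
    fun_prop
  have hJint : Integrable (fun θ => (∑ i, ζ i * p i θ) ^ a * M θ ^ (1 - a)) μ := by
    refine Integrable.mono'
      (integrable_finset_sum Finset.univ fun i _ => (hfint i).const_mul (ζ i))
      hJmeas.aestronglyMeasurable (Filter.Eventually.of_forall fun θ => ?_)
    rw [Real.norm_of_nonneg (mul_nonneg (Real.rpow_nonneg (hPnn θ) _)
      (Real.rpow_nonneg (hMpos θ).le _))]
    have hb := Real.rpow_arith_mean_le_arith_mean_rpow Finset.univ ζ (fun i => p i θ)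
      (fun i _ => hζ0 i) hζsum (fun i _ => hpnn i θ) ha.le
    calc (∑ i, ζ i * p i θ) ^ a * M θ ^ (1-a)
        ≤ (∑ i, ζ i * p i θ ^ a) * M θ ^ (1-a) :=
          mul_le_mul_of_nonneg_right hb (Real.rpow_nonneg (hMpos θ).le _)
      _ = ∑ i, ζ i * (p i θ ^ a * M θ ^ (1-a)) := by
          rw [Finset.sum_mul]; exact Finset.sum_congr rfl fun i _ => by ring
  have hMe : ∀ θ, (M θ ^ ((1-a)/a)) ^ a = M θ ^ (1-a) := fun θ => by
    rw [← Real.rpow_mul (hMpos θ).le, div_mul_cancel₀ _ hane]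
  have stepB : (∫ θ, (∑ i, ζ i * p i θ) ^ a * M θ ^ (1 - a) ∂μ) ^ (1/a)
      ≤ ∑ i, ζ i * (∫ θ, p i θ ^ a * M θ ^ (1 - a) ∂μ) ^ (1/a) := by
    set G : Fin L → Θ → ℝ≥0∞ := fun i θ => ENNReal.ofReal (ζ i * (p i θ * M θ ^ ((1-a)/a)))
      with hG
    have hGnn : ∀ i θ, (0:ℝ) ≤ ζ i * (p i θ * M θ ^ ((1-a)/a)) := fun i θ =>
      mul_nonneg (hζ0 i) (mul_nonneg (hpnn i θ) (Real.rpow_nonneg (hMpos θ).le _))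
    have hGmeas : ∀ i, AEMeasurable (G i) μ := by
      intro i
      have h1 : Measurable fun θ => ζ i * (p i θ * M θ ^ ((1-a)/a)) := by
        have := hpmeas i; fun_prop
      exact h1.ennreal_ofReal.aemeasurable
    have mink := lintegral_Lp_sum_le' Finset.univ G hGmeas ha.le
    have hL1 : ∀ θ, (∑ i, G i θ) ^ a
        = ENNReal.ofReal ((∑ i, ζ i * p i θ) ^ a * M θ ^ (1-a)) := by
      intro θ
      simp only [hG]
      rw [← ENNReal.ofReal_sum_of_nonneg (fun i _ => hGnn i θ),
        ENNReal.ofReal_rpow_of_nonneg (Finset.sum_nonneg fun i _ => hGnn i θ) ha0.le]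
      congr 1
      rw [show ∑ i, ζ i * (p i θ * M θ ^ ((1-a)/a)) = (∑ i, ζ i * p i θ) * M θ ^ ((1-a)/a) by
        rw [Finset.sum_mul]; exact Finset.sum_congr rfl fun i _ => by ring]
      rw [Real.mul_rpow (hPnn θ) (Real.rpow_nonneg (hMpos θ).le _), hMe θ]
    have hL2 : (∫⁻ θ, (∑ i, G i θ) ^ a ∂μ)
        = ENNReal.ofReal (∫ θ, (∑ i, ζ i * p i θ) ^ a * M θ ^ (1-a) ∂μ) := by
      simp_rw [hL1]
      rw [← ofReal_integral_eq_lintegral_ofReal hJint (Filter.Eventually.of_forall fun θ =>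
        mul_nonneg (Real.rpow_nonneg (hPnn θ) _) (Real.rpow_nonneg (hMpos θ).le _))]
    have hR1 : ∀ i, (∫⁻ θ, G i θ ^ a ∂μ)
        = ENNReal.ofReal (ζ i ^ a * ∫ θ, p i θ ^ a * M θ ^ (1-a) ∂μ) := by
      intro i
      have hptw : ∀ θ, G i θ ^ a
          = ENNReal.ofReal (ζ i ^ a * (p i θ ^ a * M θ ^ (1-a))) := by
        intro θ
        simp only [hG]
        rw [ENNReal.ofReal_rpow_of_nonneg (hGnn i θ) ha0.le]
        congr 1
        rw [Real.mul_rpow (hζ0 i) (mul_nonneg (hpnn i θ) (Real.rpow_nonneg (hMpos θ).le _)),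
          Real.mul_rpow (hpnn i θ) (Real.rpow_nonneg (hMpos θ).le _), hMe θ]
      simp_rw [hptw]
      rw [← ofReal_integral_eq_lintegral_ofReal ((hfint i).const_mul _)
        (Filter.Eventually.of_forall fun θ => mul_nonneg (Real.rpow_nonneg (hζ0 i) _)
          (mul_nonneg (Real.rpow_nonneg (hpnn i θ) _) (Real.rpow_nonneg (hMpos θ).le _)))]
      rw [integral_const_mul]
    rw [hL2] at mink
    simp_rw [hR1] at mink
    rw [ENNReal.ofReal_rpow_of_nonneg (integral_nonneg fun θ =>
      mul_nonneg (Real.rpow_nonneg (hPnn θ) _) (Real.rpow_nonneg (hMpos θ).le _))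
      (by positivity : (0:ℝ) ≤ 1/a)] at mink
    have hR2 : ∀ i, (ENNReal.ofReal (ζ i ^ a * ∫ θ, p i θ ^ a * M θ ^ (1-a) ∂μ)) ^ (1/a)
        = ENNReal.ofReal (ζ i * (∫ θ, p i θ ^ a * M θ ^ (1-a) ∂μ) ^ (1/a)) := by
      intro i
      rw [ENNReal.ofReal_rpow_of_nonneg (mul_nonneg (Real.rpow_nonneg (hζ0 i) _) (hInn i))
        (by positivity : (0:ℝ) ≤ 1/a),
        Real.mul_rpow (Real.rpow_nonneg (hζ0 i) _) (hInn i),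
        ← Real.rpow_mul (hζ0 i), mul_one_div_cancel hane, Real.rpow_one]
    simp_rw [hR2] at mink
    rw [← ENNReal.ofReal_sum_of_nonneg (fun i _ =>
      mul_nonneg (hζ0 i) (Real.rpow_nonneg (hInn i) _))] at mink
    exact (ENNReal.ofReal_le_ofReal_iff (Finset.sum_nonneg fun i _ =>
      mul_nonneg (hζ0 i) (Real.rpow_nonneg (hInn i) _))).mp mink
  -- combine
  set J : ℝ := ∫ θ, (∑ i, ζ i * p i θ) ^ a * M θ ^ (1 - a) ∂μ with hJ
  have hJnn : 0 ≤ J := integral_nonneg fun θ => mul_nonneg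
    (Real.rpow_nonneg (Finset.sum_nonneg fun i _ => mul_nonneg (hζ0 i) (hpnn i θ)) _)
    (Real.rpow_nonneg (hMpos θ).le _)
  set S : ℝ := ∑ i, ζ i * A i ^ (-((a-1)/a)) with hS
  have hSnn : 0 ≤ S := Finset.sum_nonneg fun i _ =>
    mul_nonneg (hζ0 i) (Real.rpow_nonneg (hApos i).le _)
  have hchain : J ^ (1/a) ≤ S := by
    refine le_trans stepB (Finset.sum_le_sum fun i _ => ?_)
    have h1 : (∫ θ, p i θ ^ a * M θ ^ (1 - a) ∂μ) ^ (1/a) ≤ (A i ^ (1-a)) ^ (1/a) :=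
      Real.rpow_le_rpow (hInn i) (stepA i) (by positivity)
    have h2 : (A i ^ (1-a)) ^ (1/a) = A i ^ (-((a-1)/a)) := by
      rw [← Real.rpow_mul (hApos i).le]
      congr 1; field_simp; ring
    exact mul_le_mul_of_nonneg_left (h2 ▸ h1) (hζ0 i)
  have hJS : J ≤ S ^ a := by
    have h3 : (J ^ (1/a)) ^ a ≤ S ^ a :=
      Real.rpow_le_rpow (Real.rpow_nonneg hJnn _) hchain ha0.le
    rwa [← Real.rpow_mul hJnn, one_div_mul_cancel hane, Real.rpow_one] at h3
  have final : J ^ (1/(a-1)) ≤ S ^ (a/(a-1)) := by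
    calc J ^ (1/(a-1)) ≤ (S ^ a) ^ (1/(a-1)) :=
          Real.rpow_le_rpow hJnn hJS (by positivity)
      _ = S ^ (a/(a-1)) := by
          rw [← Real.rpow_mul hSnn, mul_one_div]
  exact final
end

section
/- Two-steps φ-first variational bound on the Rényi divergence between mixtures: for α > 1, d_α( Σ_{i=1}^{L} ζ_i p_i ‖ Σ_{j=1}^{K} μ_j q_j ) ≤ 1 / ( Σ_{j=1}^{K} μ_j · ( Σ_{i=1}^{L} ζ_i · d_α(p_i ‖ q_j)^{(α−1)/α} )^{-α/(α−1)} ). -/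
open MeasureTheory Finset

lemma sum_filter_support' {ι : Type*} [Fintype ι] (w : ι → ℝ) (g : ι → ℝ)
    (h : ∀ i, w i = 0 → g i = 0) :
    ∑ i ∈ Finset.univ.filter (fun i => w i ≠ 0), g i = ∑ i, g i :=
  Finset.sum_subset (Finset.filter_subset _ _) fun i _ hi => h i (by simpa using hi)

lemma rpow_sum_le' {ι : Type*} (s : Finset ι) {a : ℝ} (ha : 1 < a) (w c : ι → ℝ)
    (hw : ∀ i ∈ s, 0 < w i) (hc : ∀ i ∈ s, 0 ≤ c i) (hsum : ∑ i ∈ s, w i = 1) :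
    (∑ i ∈ s, c i) ^ a ≤ ∑ i ∈ s, w i ^ (1 - a) * c i ^ a := by
  classical
  have ha0 : (0:ℝ) < a := lt_trans one_pos ha
  have key := Real.inner_le_weight_mul_Lp_of_nonneg s ha.le
      (fun i => if i ∈ s then w i else 0) (fun i => if i ∈ s then c i / w i else 0)
      (fun i => by
        by_cases h : i ∈ s
        · simp only [if_pos h]; exact (hw i h).le
        · simp [h])
      (fun i => by
        by_cases h : i ∈ s
        · simp only [if_pos h]; exact div_nonneg (hc i h) (hw i h).le
        · simp [h])
  have e1 : ∑ i ∈ s, (if i ∈ s then w i else 0) * (if i ∈ s then c i / w i else 0)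
      = ∑ i ∈ s, c i := by
    refine Finset.sum_congr rfl fun i hi => ?_
    rw [if_pos hi, if_pos hi, mul_comm, div_mul_cancel₀ _ (hw i hi).ne']
  have e2 : ∑ i ∈ s, (if i ∈ s then w i else 0) = 1 := by
    rw [← hsum]; exact Finset.sum_congr rfl fun i hi => if_pos hi
  have e3 : ∑ i ∈ s, (if i ∈ s then w i else 0) * (if i ∈ s then c i / w i else 0) ^ a
      = ∑ i ∈ s, w i ^ (1 - a) * c i ^ a := by
    refine Finset.sum_congr rfl fun i hi => ?_
    rw [if_pos hi, if_pos hi, Real.div_rpow (hc i hi) (hw i hi).le,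
      Real.rpow_sub (hw i hi), Real.rpow_one]
    ring
  rw [e1, e2, e3, Real.one_rpow, one_mul] at key
  have hX : 0 ≤ ∑ i ∈ s, w i ^ (1 - a) * c i ^ a :=
    Finset.sum_nonneg fun i hi =>
      mul_nonneg (Real.rpow_nonneg (hw i hi).le _) (Real.rpow_nonneg (hc i hi) _)
  calc (∑ i ∈ s, c i) ^ a
      ≤ ((∑ i ∈ s, w i ^ (1 - a) * c i ^ a) ^ a⁻¹) ^ a :=
        Real.rpow_le_rpow (Finset.sum_nonneg hc) key ha0.le
    _ = ∑ i ∈ s, w i ^ (1 - a) * c i ^ a := by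
        rw [← Real.rpow_mul hX, inv_mul_cancel₀ ha0.ne', Real.rpow_one]

/-- Two-steps φ-first variational bound on the Rényi divergence between
mixtures. -/
theorem renyi_mixtures_two_steps_phi_first
    {Θ : Type*} [MeasurableSpace Θ] (μ : Measure Θ)
    (L K : ℕ) (hL : 0 < L) (hK : 0 < K)
    (p : Fin L → Θ → ℝ) (q : Fin K → Θ → ℝ)
    (hpmeas : ∀ i, Measurable (p i)) (hqmeas : ∀ j, Measurable (q j))
    (hpnn : ∀ i θ, 0 ≤ p i θ) (hqpos : ∀ j θ, 0 < q j θ)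
    (hpint : ∀ i, ∫ θ, p i θ ∂μ = 1) (hqint : ∀ j, ∫ θ, q j θ ∂μ = 1)
    (ζ : Fin L → ℝ) (hζ : ∀ i, ζ i ∈ Set.Icc (0 : ℝ) 1) (hζsum : ∑ i, ζ i = 1)
    (mw : Fin K → ℝ) (hmw : ∀ j, mw j ∈ Set.Icc (0 : ℝ) 1)
    (hmwsum : ∑ j, mw j = 1)
    (a : ℝ) (ha : 1 < a)
    (hfin : ∀ i j, Integrable (fun θ => p i θ ^ a * q j θ ^ (1 - a)) μ)
    (hpos : ∀ i j, 0 < ∫ θ, p i θ ^ a * q j θ ^ (1 - a) ∂μ) :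
    (∫ θ, (∑ i, ζ i * p i θ) ^ a * (∑ j, mw j * q j θ) ^ (1 - a) ∂μ)
        ^ (1 / (a - 1))
      ≤ 1 / (∑ j, mw j *
          (∑ i, ζ i *
            ((∫ θ, p i θ ^ a * q j θ ^ (1 - a) ∂μ) ^ (1 / (a - 1)))
              ^ ((a - 1) / a))
            ^ (-(a / (a - 1)))) := by
  classical
  have ha0 : (0:ℝ) < a := lt_trans one_pos ha
  have ha1 : (0:ℝ) < a - 1 := sub_pos.mpr ha
  have hne : a - 1 ≠ 0 := ha1.ne'
  set A : Fin L → Fin K → ℝ := fun i j => ∫ θ, p i θ ^ a * q j θ ^ (1 - a) ∂μ with hAdef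
  have hA : ∀ i j, 0 < A i j := hpos
  have hgoal_inner : ∀ (i : Fin L) (j : Fin K),
      ((A i j) ^ (1/(a-1))) ^ ((a-1)/a) = (A i j) ^ (1/a) := by
    intro i j
    rw [← Real.rpow_mul (hA i j).le]
    congr 1
    field_simp
  simp_rw [show ∀ (i : Fin L) (j : Fin K), ((∫ θ, p i θ ^ a * q j θ ^ (1 - a) ∂μ) ^ (1/(a-1))) ^ ((a-1)/a) = (A i j) ^ (1/a) from hgoal_inner]
  set B : Fin K → ℝ := fun j => ∑ i, ζ i * (A i j) ^ (1/a) with hBdef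
  -- positivity of B
  obtain ⟨i0, -, hi0⟩ : ∃ i ∈ Finset.univ, ζ i ≠ 0 :=
    Finset.exists_ne_zero_of_sum_ne_zero (by rw [hζsum]; exact one_ne_zero)
  have hζi0 : 0 < ζ i0 := lt_of_le_of_ne (hζ i0).1 (Ne.symm hi0)
  have hB : ∀ j, 0 < B j := fun j =>
    Finset.sum_pos' (fun i _ => mul_nonneg (hζ i).1 (Real.rpow_nonneg (hA i j).le _))
      ⟨i0, Finset.mem_univ _, mul_pos hζi0 (Real.rpow_pos_of_pos (hA i0 j) _)⟩
  set Z : ℝ := ∑ j, mw j * (B j) ^ (-(a/(a-1))) with hZdef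
  obtain ⟨j0, -, hj0⟩ : ∃ j ∈ Finset.univ, mw j ≠ 0 :=
    Finset.exists_ne_zero_of_sum_ne_zero (by rw [hmwsum]; exact one_ne_zero)
  have hmwj0 : 0 < mw j0 := lt_of_le_of_ne (hmw j0).1 (Ne.symm hj0)
  have hZ : 0 < Z :=
    Finset.sum_pos' (fun j _ => mul_nonneg (hmw j).1 (Real.rpow_nonneg (hB j).le _))
      ⟨j0, Finset.mem_univ _, mul_pos hmwj0 (Real.rpow_pos_of_pos (hB j0) _)⟩
  show (∫ θ, (∑ i, ζ i * p i θ) ^ a * (∑ j, mw j * q j θ) ^ (1 - a) ∂μ) ^ (1/(a-1)) ≤ 1 / Z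
  -- supports and weights
  set Ls : Finset (Fin L) := Finset.univ.filter (fun i => ζ i ≠ 0) with hLsdef
  set Ks : Finset (Fin K) := Finset.univ.filter (fun j => mw j ≠ 0) with hKsdef
  have hζpos : ∀ i ∈ Ls, 0 < ζ i := fun i hi =>
    lt_of_le_of_ne (hζ i).1 (Ne.symm (by simpa [hLsdef] using hi))
  have hmwpos : ∀ j ∈ Ks, 0 < mw j := fun j hj =>
    lt_of_le_of_ne (hmw j).1 (Ne.symm (by simpa [hKsdef] using hj))
  set V : Fin L → Fin K → ℝ := fun i j => ζ i * (A i j) ^ (1/a) / B j with hVdef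
  set W : Fin K → ℝ := fun j => mw j * (B j) ^ (-(a/(a-1))) / Z with hWdef
  have hVpos : ∀ j, ∀ i ∈ Ls, 0 < V i j := fun j i hi =>
    div_pos (mul_pos (hζpos i hi) (Real.rpow_pos_of_pos (hA i j) _)) (hB j)
  have hWpos : ∀ j ∈ Ks, 0 < W j := fun j hj =>
    div_pos (mul_pos (hmwpos j hj) (Real.rpow_pos_of_pos (hB j) _)) hZ
  have hVsum : ∀ j, ∑ i ∈ Ls, V i j = 1 := by
    intro j
    rw [hVdef]
    rw [← Finset.sum_div,
      sum_filter_support' ζ (fun i => ζ i * (A i j) ^ (1/a)) (fun i h => by simp [h])]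
    exact div_self (hB j).ne'
  have hWsum : ∑ j ∈ Ks, W j = 1 := by
    rw [hWdef]
    rw [← Finset.sum_div,
      sum_filter_support' mw (fun j => mw j * (B j) ^ (-(a/(a-1)))) (fun j h => by simp [h])]
    exact div_self hZ.ne'
  -- coefficient and dominating function
  set c : Fin L → Fin K → ℝ :=
    fun i j => W j ^ a * mw j ^ (1-a) * (V i j ^ (1-a) * ζ i ^ a) with hcdef
  have hcnn : ∀ j ∈ Ks, ∀ i ∈ Ls, 0 ≤ c i j := fun j hj i hi => by
    have h1 : 0 ≤ W j := (hWpos j hj).le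
    have h2 : 0 ≤ ζ i := (hζpos i hi).le
    have h3 : 0 ≤ mw j := (hmw j).1
    have h4 : 0 ≤ V i j := (hVpos j i hi).le
    positivity
  -- pointwise bound
  have hpt : ∀ θ, (∑ i, ζ i * p i θ) ^ a * (∑ j, mw j * q j θ) ^ (1 - a)
      ≤ ∑ j ∈ Ks, ∑ i ∈ Ls, c i j * (p i θ ^ a * q j θ ^ (1 - a)) := by
    intro θ
    have hPnn : 0 ≤ ∑ i, ζ i * p i θ :=
      Finset.sum_nonneg fun i _ => mul_nonneg (hζ i).1 (hpnn i θ)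
    have hQpos : 0 < ∑ j, mw j * q j θ :=
      Finset.sum_pos' (fun j _ => mul_nonneg (hmw j).1 (hqpos j θ).le)
        ⟨j0, Finset.mem_univ _, mul_pos hmwj0 (hqpos j0 θ)⟩
    set Qv : ℝ := ∑ j, mw j * q j θ with hQvdef
    set Pv : ℝ := ∑ i, ζ i * p i θ with hPvdef
    have hws : ∑ j ∈ Ks, mw j * q j θ / Qv = 1 := by
      rw [← Finset.sum_div,
        sum_filter_support' mw (fun j => mw j * q j θ) (fun j h => by simp [h])]
      exact div_self hQpos.ne'
    have hq1 := rpow_sum_le' Ks ha (fun j => mw j * q j θ / Qv) W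
        (fun j hj => div_pos (mul_pos (hmwpos j hj) (hqpos j θ)) hQpos)
        (fun j hj => (hWpos j hj).le) hws
    rw [hWsum, Real.one_rpow] at hq1
    have hq2 : ∀ j ∈ Ks, (mw j * q j θ / Qv) ^ (1-a) * W j ^ a
        = Qv ^ (a-1) * (W j ^ a * (mw j * q j θ) ^ (1-a)) := by
      intro j hj
      rw [Real.div_rpow (mul_nonneg (hmw j).1 (hqpos j θ).le) hQpos.le, div_eq_mul_inv,
        ← Real.rpow_neg hQpos.le, show -(1-a) = a-1 by ring]
      ring
    rw [Finset.sum_congr rfl hq2, ← Finset.mul_sum] at hq1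
    have hQb : Qv ^ (1-a) ≤ ∑ j ∈ Ks, W j ^ a * (mw j * q j θ) ^ (1-a) := by
      have h := mul_le_mul_of_nonneg_left hq1 (Real.rpow_nonneg hQpos.le (1-a))
      rwa [mul_one, ← mul_assoc, ← Real.rpow_add hQpos, show (1-a)+(a-1) = 0 by ring,
        Real.rpow_zero, one_mul] at h
    have hPb : ∀ j : Fin K, Pv ^ a ≤ ∑ i ∈ Ls, V i j ^ (1-a) * (ζ i * p i θ) ^ a := by
      intro j
      have hP' : Pv = ∑ i ∈ Ls, ζ i * p i θ :=
        (sum_filter_support' ζ (fun i => ζ i * p i θ) (fun i h => by simp [h])).symm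
      rw [hP']
      exact rpow_sum_le' Ls ha (fun i => V i j) (fun i => ζ i * p i θ)
        (fun i hi => hVpos j i hi) (fun i hi => mul_nonneg (hζ i).1 (hpnn i θ)) (hVsum j)
    calc Pv ^ a * Qv ^ (1-a)
        ≤ Pv ^ a * ∑ j ∈ Ks, W j ^ a * (mw j * q j θ) ^ (1-a) :=
          mul_le_mul_of_nonneg_left hQb (Real.rpow_nonneg hPnn a)
      _ = ∑ j ∈ Ks, (W j ^ a * (mw j * q j θ) ^ (1-a)) * Pv ^ a := by
          rw [Finset.mul_sum]; exact Finset.sum_congr rfl fun j _ => mul_comm _ _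
      _ ≤ ∑ j ∈ Ks, (W j ^ a * (mw j * q j θ) ^ (1-a))
            * (∑ i ∈ Ls, V i j ^ (1-a) * (ζ i * p i θ) ^ a) :=
          Finset.sum_le_sum fun j hj => mul_le_mul_of_nonneg_left (hPb j)
            (mul_nonneg (Real.rpow_nonneg (hWpos j hj).le a)
              (Real.rpow_nonneg (mul_nonneg (hmw j).1 (hqpos j θ).le) _))
      _ = ∑ j ∈ Ks, ∑ i ∈ Ls, c i j * (p i θ ^ a * q j θ ^ (1-a)) := by
          refine Finset.sum_congr rfl fun j hj => ?_
          rw [Finset.mul_sum]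
          refine Finset.sum_congr rfl fun i hi => ?_
          rw [Real.mul_rpow (hmw j).1 (hqpos j θ).le, Real.mul_rpow (hζ i).1 (hpnn i θ)]
          simp only [hcdef]
          ring
  -- integral comparison
  have hFint : Integrable
      (fun θ => ∑ j ∈ Ks, ∑ i ∈ Ls, c i j * (p i θ ^ a * q j θ ^ (1 - a))) μ := by
    apply integrable_finset_sum
    intro j hj
    apply integrable_finset_sum
    intro i hi
    exact (hfin i j).const_mul _
  have hmono : ∫ θ, (∑ i, ζ i * p i θ) ^ a * (∑ j, mw j * q j θ) ^ (1 - a) ∂μ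
      ≤ ∫ θ, ∑ j ∈ Ks, ∑ i ∈ Ls, c i j * (p i θ ^ a * q j θ ^ (1 - a)) ∂μ :=
    integral_mono_of_nonneg
      (Filter.Eventually.of_forall fun θ => mul_nonneg
        (Real.rpow_nonneg (Finset.sum_nonneg fun i _ => mul_nonneg (hζ i).1 (hpnn i θ)) a)
        (Real.rpow_nonneg (Finset.sum_nonneg fun j _ => mul_nonneg (hmw j).1 (hqpos j θ).le) _))
      hFint (Filter.Eventually.of_forall hpt)
  have hint_eq : ∫ θ, ∑ j ∈ Ks, ∑ i ∈ Ls, c i j * (p i θ ^ a * q j θ ^ (1 - a)) ∂μ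
      = ∑ j ∈ Ks, ∑ i ∈ Ls, c i j * A i j := by
    rw [integral_finset_sum Ks
      (fun j hj => integrable_finset_sum Ls (fun i hi => (hfin i j).const_mul _))]
    refine Finset.sum_congr rfl fun j hj => ?_
    rw [integral_finset_sum Ls (fun i hi => (hfin i j).const_mul _)]
    exact Finset.sum_congr rfl fun i hi => integral_const_mul _ _
  -- algebra: inner sums
  have hinner : ∀ j ∈ Ks, ∑ i ∈ Ls, c i j * A i j = W j ^ a * mw j ^ (1-a) * B j ^ a := by
    intro j hj
    have step : ∀ i ∈ Ls, c i j * A i j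
        = (W j ^ a * mw j ^ (1-a) * B j ^ (a-1)) * (ζ i * A i j ^ (1/a)) := by
      intro i hi
      have hζi : 0 < ζ i := hζpos i hi
      have eV : V i j ^ (1-a) = ζ i ^ (1-a) * A i j ^ ((1-a)/a) * B j ^ (a-1) := by
        have h4 : (B j) ^ ((1:ℝ)-a) = (B j ^ (a-1))⁻¹ := by
          rw [show (1:ℝ)-a = -(a-1) by ring, Real.rpow_neg (hB j).le]
        show (ζ i * A i j ^ (1/a) / B j) ^ (1-a) = _
        rw [Real.div_rpow (mul_nonneg hζi.le (Real.rpow_nonneg (hA i j).le _)) (hB j).le,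
          Real.mul_rpow hζi.le (Real.rpow_nonneg (hA i j).le _),
          ← Real.rpow_mul (hA i j).le, h4, div_eq_mul_inv, inv_inv,
          show 1/a*(1-a) = (1-a)/a by ring]
      have h1 : ζ i ^ ((1:ℝ)-a) * ζ i ^ a = ζ i := by
        rw [← Real.rpow_add hζi, show (1:ℝ)-a+a = 1 by ring, Real.rpow_one]
      have h2 : A i j ^ ((1-a)/a) * A i j = A i j ^ (1/a) := by
        rw [← Real.rpow_add_one (hA i j).ne']
        congr 1
        field_simp
        ring
      calc c i j * A i j
          = (W j ^ a * mw j ^ (1-a)) * (V i j ^ (1-a) * ζ i ^ a * A i j) := by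
            simp only [hcdef]; ring
        _ = (W j ^ a * mw j ^ (1-a))
              * ((ζ i ^ (1-a) * ζ i ^ a) * (A i j ^ ((1-a)/a) * A i j) * B j ^ (a-1)) := by
            rw [eV]; ring
        _ = (W j ^ a * mw j ^ (1-a) * B j ^ (a-1)) * (ζ i * A i j ^ (1/a)) := by
            rw [h1, h2]; ring
    rw [Finset.sum_congr rfl step, ← Finset.mul_sum,
      sum_filter_support' ζ (fun i => ζ i * A i j ^ (1/a)) (fun i h => by simp [h]),
      show (∑ i, ζ i * A i j ^ (1/a)) = B j from rfl, mul_assoc,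
      show B j ^ (a-1) * B j = B j ^ a by
        rw [← Real.rpow_add_one (hB j).ne']; congr 1; ring]
  have houter : ∑ j ∈ Ks, W j ^ a * mw j ^ (1-a) * B j ^ a = Z ^ (1-a) := by
    have step : ∀ j ∈ Ks, W j ^ a * mw j ^ (1-a) * B j ^ a
        = Z⁻¹ ^ a * (mw j * B j ^ (-(a/(a-1)))) := by
      intro j hj
      have hmwj : 0 < mw j := hmwpos j hj
      have eW : W j ^ a = mw j ^ a * B j ^ (-(a/(a-1)) * a) * Z⁻¹ ^ a := by
        show (mw j * B j ^ (-(a/(a-1))) / Z) ^ a = _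
        rw [div_eq_mul_inv,
          Real.mul_rpow (mul_nonneg hmwj.le (Real.rpow_nonneg (hB j).le _))
            (inv_nonneg.mpr hZ.le),
          Real.mul_rpow hmwj.le (Real.rpow_nonneg (hB j).le _),
          ← Real.rpow_mul (hB j).le]
      have h1 : mw j ^ a * mw j ^ ((1:ℝ)-a) = mw j := by
        rw [← Real.rpow_add hmwj, show a+((1:ℝ)-a) = 1 by ring, Real.rpow_one]
      have h2 : B j ^ (-(a/(a-1)) * a) * B j ^ a = B j ^ (-(a/(a-1))) := by
        rw [← Real.rpow_add (hB j)]
        congr 1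
        field_simp
        ring
      calc W j ^ a * mw j ^ (1-a) * B j ^ a
          = Z⁻¹ ^ a * ((mw j ^ a * mw j ^ (1-a)) * (B j ^ (-(a/(a-1)) * a) * B j ^ a)) := by
            rw [eW]; ring
        _ = Z⁻¹ ^ a * (mw j * B j ^ (-(a/(a-1)))) := by rw [h1, h2]
    rw [Finset.sum_congr rfl step, ← Finset.mul_sum,
      sum_filter_support' mw (fun j => mw j * B j ^ (-(a/(a-1)))) (fun j h => by simp [h]),
      show (∑ j, mw j * B j ^ (-(a/(a-1)))) = Z from rfl,
      Real.inv_rpow hZ.le, ← Real.rpow_neg hZ.le, ← Real.rpow_add_one hZ.ne']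
    congr 1
    ring
  have hle : ∫ θ, (∑ i, ζ i * p i θ) ^ a * (∑ j, mw j * q j θ) ^ (1 - a) ∂μ ≤ Z ^ (1-a) := by
    rw [← houter]
    refine hmono.trans (le_of_eq ?_)
    rw [hint_eq]
    exact Finset.sum_congr rfl hinner
  have hnn : 0 ≤ ∫ θ, (∑ i, ζ i * p i θ) ^ a * (∑ j, mw j * q j θ) ^ (1 - a) ∂μ :=
    integral_nonneg fun θ => mul_nonneg
      (Real.rpow_nonneg (Finset.sum_nonneg fun i _ => mul_nonneg (hζ i).1 (hpnn i θ)) a)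
      (Real.rpow_nonneg (Finset.sum_nonneg fun j _ => mul_nonneg (hmw j).1 (hqpos j θ).le) _)
  calc (∫ θ, (∑ i, ζ i * p i θ) ^ a * (∑ j, mw j * q j θ) ^ (1 - a) ∂μ) ^ (1/(a-1))
      ≤ (Z ^ (1-a)) ^ (1/(a-1)) :=
        Real.rpow_le_rpow hnn hle (by positivity)
    _ = 1 / Z := by
        rw [← Real.rpow_mul hZ.le, show (1-a) * (1/(a-1)) = -1 by field_simp; ring,
          Real.rpow_neg_one, one_div]
end

section
/- Uniform-ψ variational bound on the Rényi divergence between mixtures: for α > 1, d_α( Σ_{i=1}^{L} ζ_i p_i ‖ Σ_{j=1}^{K} μ_j q_j )^{α−1} ≤ L^{α−1} · Σ_{i=1}^{L} ζ_i^{α} · ( Σ_{j=1}^{K} μ_j / d_α(p_i ‖ q_j) )^{1−α}. -/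
open MeasureTheory Finset

lemma jensen_rpow_neg {K : ℕ} (lam x : Fin K → ℝ)
    (hlam : ∀ j, 0 ≤ lam j) (hsum : ∑ j, lam j = 1)
    (hx : ∀ j, 0 < x j) {a : ℝ} (ha : 1 < a)
    (hB : 0 < ∑ j, lam j * x j) :
    (∑ j, lam j * x j) ^ (1 - a) ≤ ∑ j, lam j * x j ^ (1 - a) := by
  have ha1 : (0:ℝ) < a - 1 := by linarith
  have ha0 : (0:ℝ) < a := by linarith
  set p : ℝ := a / (a - 1) with hpdef
  have hp1 : 1 ≤ p := by rw [hpdef, le_div_iff₀ ha1]; linarith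
  have key := Real.inner_le_weight_mul_Lp_of_nonneg Finset.univ hp1
      (fun j => lam j * x j ^ (1 - a)) (fun j => x j ^ (a - 1))
      (fun j => mul_nonneg (hlam j) (Real.rpow_nonneg (hx j).le _))
      (fun j => Real.rpow_nonneg (hx j).le _)
  have hap : (a - 1) * p = a := by rw [hpdef]; field_simp
  have e1 : ∑ j, (lam j * x j ^ (1 - a)) * x j ^ (a - 1) = 1 := by
    rw [Finset.sum_congr rfl fun j (_ : j ∈ univ) => show
        (lam j * x j ^ (1 - a)) * x j ^ (a - 1) = lam j by
      rw [mul_assoc, ← Real.rpow_add (hx j), show (1 - a) + (a - 1) = 0 by ring,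
        Real.rpow_zero, mul_one], hsum]
  have e2 : ∑ j, (lam j * x j ^ (1 - a)) * (x j ^ (a - 1)) ^ p = ∑ j, lam j * x j := by
    refine Finset.sum_congr rfl fun j _ => ?_
    rw [← Real.rpow_mul (hx j).le, hap, mul_assoc, ← Real.rpow_add (hx j),
      show (1 - a) + a = 1 by ring, Real.rpow_one]
  rw [e1, e2] at key
  have hpinv : p⁻¹ = (a - 1) / a := by rw [hpdef, inv_div]
  have hpinv' : 1 - p⁻¹ = 1 / a := by rw [hpinv]; field_simp; ring
  rw [hpinv', hpinv] at key
  set A : ℝ := ∑ j, lam j * x j ^ (1 - a) with hA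
  set B : ℝ := ∑ j, lam j * x j with hBdef
  have hAnn : 0 ≤ A :=
    Finset.sum_nonneg fun j _ => mul_nonneg (hlam j) (Real.rpow_nonneg (hx j).le _)
  have h2 : 1 ≤ A * B ^ (a - 1) := by
    have h := Real.rpow_le_rpow (by norm_num) key ha0.le
    rwa [Real.one_rpow, Real.mul_rpow (Real.rpow_nonneg hAnn _) (Real.rpow_nonneg hB.le _),
      ← Real.rpow_mul hAnn, ← Real.rpow_mul hB.le, one_div_mul_cancel ha0.ne',
      div_mul_cancel₀ _ ha0.ne', Real.rpow_one] at h
  have hBpow : (0:ℝ) < B ^ (a - 1) := Real.rpow_pos_of_pos hB _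
  have h3 : 1 / B ^ (a - 1) ≤ A := (div_le_iff₀ hBpow).2 (by linarith)
  rwa [one_div, ← Real.rpow_neg hB.le, neg_sub] at h3

/-- Uniform-ψ variational bound on the Rényi divergence between mixtures. -/
theorem renyi_mixtures_uniform_psi
    {Θ : Type*} [MeasurableSpace Θ] (μ : Measure Θ)
    (L K : ℕ) (hL : 0 < L) (hK : 0 < K)
    (p : Fin L → Θ → ℝ) (q : Fin K → Θ → ℝ)
    (hpmeas : ∀ i, Measurable (p i)) (hqmeas : ∀ j, Measurable (q j))
    (hpnn : ∀ i θ, 0 ≤ p i θ) (hqpos : ∀ j θ, 0 < q j θ)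
    (hpint : ∀ i, ∫ θ, p i θ ∂μ = 1) (hqint : ∀ j, ∫ θ, q j θ ∂μ = 1)
    (ζ : Fin L → ℝ) (hζ : ∀ i, ζ i ∈ Set.Icc (0 : ℝ) 1) (hζsum : ∑ i, ζ i = 1)
    (mw : Fin K → ℝ) (hmw : ∀ j, mw j ∈ Set.Ioc (0 : ℝ) 1)
    (hmwsum : ∑ j, mw j = 1)
    (a : ℝ) (ha : 1 < a)
    (hfin : ∀ i j, Integrable (fun θ => p i θ ^ a * q j θ ^ (1 - a)) μ)
    (hpos : ∀ i j, 0 < ∫ θ, p i θ ^ a * q j θ ^ (1 - a) ∂μ) :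
    ((∫ θ, (∑ i, ζ i * p i θ) ^ a * (∑ j, mw j * q j θ) ^ (1 - a) ∂μ)
        ^ (1 / (a - 1))) ^ (a - 1)
      ≤ (L : ℝ) ^ (a - 1) * ∑ i, ζ i ^ a *
          (∑ j, mw j /
            (∫ θ, p i θ ^ a * q j θ ^ (1 - a) ∂μ) ^ (1 / (a - 1)))
            ^ (1 - a) := by
  have ha1 : (0:ℝ) < a - 1 := by linarith
  have hLpos : (0:ℝ) < L := Nat.cast_pos.2 hL
  haveI : Nonempty (Fin K) := ⟨⟨0, hK⟩⟩
  haveI : Nonempty (Fin L) := ⟨⟨0, hL⟩⟩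
  -- notation
  set c : Fin L → Fin K → ℝ := fun i j => ∫ θ, p i θ ^ a * q j θ ^ (1 - a) ∂μ with hc
  set d : Fin L → Fin K → ℝ := fun i j => (c i j) ^ (1 / (a - 1)) with hd
  have hdpos : ∀ i j, 0 < d i j := fun i j => Real.rpow_pos_of_pos (hpos i j) _
  set S : Fin L → ℝ := fun i => ∑ j, mw j / d i j with hS
  have hSpos : ∀ i, 0 < S i := fun i =>
    Finset.sum_pos (fun j _ => div_pos (hmw j).1 (hdpos i j)) Finset.univ_nonempty
  set lam : Fin L → Fin K → ℝ := fun i j => (mw j / d i j) / S i with hlam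
  have hlampos : ∀ i j, 0 < lam i j := fun i j =>
    div_pos (div_pos (hmw j).1 (hdpos i j)) (hSpos i)
  have hlamsum : ∀ i, ∑ j, lam i j = 1 := fun i => by
    rw [hlam, ← Finset.sum_div, div_self (hSpos i).ne']
  -- rewrite LHS
  have hFnn : ∀ θ, 0 ≤ (∑ i, ζ i * p i θ) ^ a * (∑ j, mw j * q j θ) ^ (1 - a) := fun θ =>
    mul_nonneg (Real.rpow_nonneg (Finset.sum_nonneg fun i _ =>
        mul_nonneg (hζ i).1 (hpnn i θ)) _)
      (Real.rpow_nonneg (Finset.sum_nonneg fun j _ =>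
        mul_nonneg (hmw j).1.le (hqpos j θ).le) _)
  have hInn : 0 ≤ ∫ θ, (∑ i, ζ i * p i θ) ^ a * (∑ j, mw j * q j θ) ^ (1 - a) ∂μ :=
    integral_nonneg hFnn
  conv_lhs => rw [← Real.rpow_mul hInn, one_div_mul_cancel ha1.ne', Real.rpow_one]
  -- dominating function
  set g : Fin L → Fin K → Θ → ℝ := fun i j θ =>
    (ζ i ^ a * (lam i j ^ a * mw j ^ (1 - a))) * (p i θ ^ a * q j θ ^ (1 - a)) with hg
  have hgint : ∀ i j, Integrable (g i j) μ := fun i j => (hfin i j).const_mul _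
  have hGint : Integrable (fun θ => (L:ℝ) ^ (a - 1) * ∑ i, ∑ j, g i j θ) μ :=
    (integrable_finset_sum _ fun i _ => integrable_finset_sum _ fun j _ => hgint i j).const_mul _
  -- pointwise bound
  have hptwise : ∀ θ, (∑ i, ζ i * p i θ) ^ a * (∑ j, mw j * q j θ) ^ (1 - a)
      ≤ (L:ℝ) ^ (a - 1) * ∑ i, ∑ j, g i j θ := by
    intro θ
    have hQ : 0 < ∑ j, mw j * q j θ :=
      Finset.sum_pos (fun j _ => mul_pos (hmw j).1 (hqpos j θ)) Finset.univ_nonempty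
    -- Step A
    have hA : (∑ i, ζ i * p i θ) ^ a ≤ (L:ℝ) ^ (a - 1) * ∑ i, ζ i ^ a * p i θ ^ a := by
      have h := Real.rpow_arith_mean_le_arith_mean_rpow Finset.univ
        (fun _ : Fin L => (L:ℝ)⁻¹) (fun i => (L:ℝ) * (ζ i * p i θ))
        (fun i _ => by positivity) (by
          simp [Finset.sum_const, Finset.card_univ, mul_comm]
          field_simp)
        (fun i _ => mul_nonneg hLpos.le (mul_nonneg (hζ i).1 (hpnn i θ))) ha.le
      have e1 : ∑ i, (L:ℝ)⁻¹ * ((L:ℝ) * (ζ i * p i θ)) = ∑ i, ζ i * p i θ := by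
        refine Finset.sum_congr rfl fun i _ => ?_
        rw [inv_mul_cancel_left₀ hLpos.ne']
      have e2 : ∑ i, (L:ℝ)⁻¹ * ((L:ℝ) * (ζ i * p i θ)) ^ a
          = (L:ℝ) ^ (a - 1) * ∑ i, ζ i ^ a * p i θ ^ a := by
        rw [Finset.mul_sum]
        refine Finset.sum_congr rfl fun i _ => ?_
        rw [Real.mul_rpow hLpos.le (mul_nonneg (hζ i).1 (hpnn i θ)),
          Real.mul_rpow (hζ i).1 (hpnn i θ),
          show (L:ℝ) ^ (a-1) = (L:ℝ)⁻¹ * (L:ℝ) ^ a by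
            rw [Real.rpow_sub hLpos, Real.rpow_one, div_eq_inv_mul]]
        ring
      rw [e1, e2] at h
      exact h
    -- Step B
    have hB : ∀ i, (∑ j, mw j * q j θ) ^ (1 - a)
        ≤ ∑ j, lam i j ^ a * mw j ^ (1 - a) * q j θ ^ (1 - a) := by
      intro i
      have h := jensen_rpow_neg (lam i) (fun j => (mw j * q j θ) / lam i j)
        (fun j => (hlampos i j).le) (hlamsum i)
        (fun j => div_pos (mul_pos (hmw j).1 (hqpos j θ)) (hlampos i j)) ha ?_
      · have e1 : ∑ j, lam i j * ((mw j * q j θ) / lam i j) = ∑ j, mw j * q j θ := by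
          refine Finset.sum_congr rfl fun j _ => ?_
          rw [mul_comm, div_mul_cancel₀ _ (hlampos i j).ne']
        have e2 : ∑ j, lam i j * ((mw j * q j θ) / lam i j) ^ (1 - a)
            = ∑ j, lam i j ^ a * mw j ^ (1 - a) * q j θ ^ (1 - a) := by
          refine Finset.sum_congr rfl fun j _ => ?_
          rw [Real.div_rpow (mul_nonneg (hmw j).1.le (hqpos j θ).le) (hlampos i j).le,
            Real.mul_rpow (hmw j).1.le (hqpos j θ).le,
            show lam i j ^ a = lam i j / lam i j ^ (1 - a) by
              rw [eq_div_iff (Real.rpow_pos_of_pos (hlampos i j) _).ne',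
                ← Real.rpow_add (hlampos i j), show a + (1 - a) = 1 by ring, Real.rpow_one]]
          have h0 : lam i j ^ (1 - a) ≠ 0 := (Real.rpow_pos_of_pos (hlampos i j) _).ne'
          field_simp
        rw [e1, e2] at h
        exact h
      · rw [Finset.sum_congr rfl fun j (_ : j ∈ univ) => show
            lam i j * ((mw j * q j θ) / lam i j) = mw j * q j θ by
              rw [mul_comm, div_mul_cancel₀ _ (hlampos i j).ne']]
        exact hQ
    calc (∑ i, ζ i * p i θ) ^ a * (∑ j, mw j * q j θ) ^ (1 - a)
        ≤ ((L:ℝ) ^ (a - 1) * ∑ i, ζ i ^ a * p i θ ^ a) * (∑ j, mw j * q j θ) ^ (1 - a) :=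
          mul_le_mul_of_nonneg_right hA (Real.rpow_nonneg hQ.le _)
      _ = (L:ℝ) ^ (a - 1) * ∑ i, ζ i ^ a * p i θ ^ a * (∑ j, mw j * q j θ) ^ (1 - a) := by
          rw [mul_assoc, Finset.sum_mul]
      _ ≤ (L:ℝ) ^ (a - 1) * ∑ i, ∑ j, g i j θ := by
          refine mul_le_mul_of_nonneg_left (Finset.sum_le_sum fun i _ => ?_)
            (Real.rpow_nonneg hLpos.le _)
          have hnn : 0 ≤ ζ i ^ a * p i θ ^ a :=
            mul_nonneg (Real.rpow_nonneg (hζ i).1 _) (Real.rpow_nonneg (hpnn i θ) _)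
          calc ζ i ^ a * p i θ ^ a * (∑ j, mw j * q j θ) ^ (1 - a)
              ≤ ζ i ^ a * p i θ ^ a * ∑ j, lam i j ^ a * mw j ^ (1 - a) * q j θ ^ (1 - a) :=
                mul_le_mul_of_nonneg_left (hB i) hnn
            _ = ∑ j, g i j θ := by
                rw [Finset.mul_sum]
                refine Finset.sum_congr rfl fun j _ => ?_
                simp only [hg]
                ring
  -- integrate
  have hint : (∫ θ, (∑ i, ζ i * p i θ) ^ a * (∑ j, mw j * q j θ) ^ (1 - a) ∂μ)
      ≤ ∫ θ, (L:ℝ) ^ (a - 1) * ∑ i, ∑ j, g i j θ ∂μ :=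
    integral_mono_of_nonneg (Filter.Eventually.of_forall hFnn) hGint
      (Filter.Eventually.of_forall hptwise)
  refine hint.trans (le_of_eq ?_)
  rw [integral_const_mul _ _]
  congr 1
  rw [integral_finset_sum _ fun i _ => integrable_finset_sum _ fun j _ => hgint i j]
  refine Finset.sum_congr rfl fun i _ => ?_
  rw [integral_finset_sum _ fun j _ => hgint i j]
  show ∑ j, ∫ θ, g i j θ ∂μ = ζ i ^ a * S i ^ (1 - a)
  have hterm : ∀ j, ∫ θ, g i j θ ∂μ
      = ζ i ^ a * ((mw j / d i j) / S i ^ a) := by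
    intro j
    rw [integral_const_mul _ _]
    have hcd : c i j = d i j ^ (a - 1) := by
      show c i j = (c i j ^ (1 / (a - 1))) ^ (a - 1)
      rw [← Real.rpow_mul (hpos i j).le, one_div_mul_cancel ha1.ne', Real.rpow_one]
    have hmwp := (hmw j).1
    have hdp := hdpos i j
    have hSp := hSpos i
    have hda : (d i j ^ a) ≠ 0 := (Real.rpow_pos_of_pos hdp a).ne'
    have l1 : lam i j ^ a = mw j ^ a * (d i j ^ a)⁻¹ * (S i ^ a)⁻¹ := by
      show ((mw j / d i j) / S i) ^ a = _
      rw [Real.div_rpow (div_nonneg hmwp.le hdp.le) hSp.le,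
        Real.div_rpow hmwp.le hdp.le, div_div, div_eq_mul_inv, mul_inv, ← mul_assoc]
    have l2 : mw j ^ a * mw j ^ (1 - a) = mw j := by
      rw [← Real.rpow_add hmwp, show a + (1 - a) = 1 by ring, Real.rpow_one]
    have l3 : d i j ^ (a - 1) = d i j ^ a * (d i j)⁻¹ := by
      rw [← Real.rpow_neg_one (d i j), ← Real.rpow_add hdp, show a + (-1:ℝ) = a - 1 by ring]
    have e : lam i j ^ a * mw j ^ (1 - a) * c i j = (mw j / d i j) / S i ^ a := by
      rw [hcd, l1, l3]
      calc mw j ^ a * (d i j ^ a)⁻¹ * (S i ^ a)⁻¹ * mw j ^ (1 - a) * (d i j ^ a * (d i j)⁻¹)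
          = (mw j ^ a * mw j ^ (1 - a)) * ((d i j ^ a)⁻¹ * d i j ^ a) * (d i j)⁻¹ * (S i ^ a)⁻¹ := by
            ring
        _ = mw j * 1 * (d i j)⁻¹ * (S i ^ a)⁻¹ := by rw [l2, inv_mul_cancel₀ hda]
        _ = (mw j / d i j) / S i ^ a := by
            rw [mul_one, div_eq_mul_inv, div_eq_mul_inv]
    show ζ i ^ a * (lam i j ^ a * mw j ^ (1 - a)) * c i j = ζ i ^ a * ((mw j / d i j) / S i ^ a)
    rw [mul_assoc, e]
  rw [Finset.sum_congr rfl fun j (_ : j ∈ univ) => hterm j, ← Finset.mul_sum, ← Finset.sum_div]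
  congr 1
  show S i / S i ^ a = S i ^ (1 - a)
  rw [Real.rpow_sub (hSpos i), Real.rpow_one]
end
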